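/- arXiv:0712.0910 — 5 statements merged into one kernel-verified Lean document; each statement's English description precedes it below -/
import Mathlib

section
/- Let J : [0,T] → ℝ^{n×n} be bounded measurable with J_{ij}(t) ≥ 0 for all i ≠ j and all t, and let C : [0,T] → ℝ^n be bounded measurable. Suppose x : [0,T] → ℝ^n is absolutely continuous with x'(t) ≤ J(t)x(t) + C(t) componentwise for a.e. t, and y : [0,T] → ℝ^n is a weak solution of y' = J(t)y + C(t) with y(0) ≥ x(0) componentwise. Then x(t) ≤ y(t) componentwise for all t ∈ [0,T]. -/
open Set MeasureTheory Filter Topology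
open scoped ENNReal NNReal

/-- Absolute continuity on `[a,b]` via the ε-δ total-variation criterion. -/
def AbsolutelyContinuousOn {E : Type*} [NormedAddCommGroup E] (f : ℝ → E) (a b : ℝ) : Prop :=
  ∀ ε > 0, ∃ δ > 0, ∀ (N : ℕ) (c d : Fin N → ℝ),
    (∀ i, a ≤ c i ∧ c i ≤ d i ∧ d i ≤ b) →
    (Pairwise fun i j => Disjoint (Set.Ioo (c i) (d i)) (Set.Ioo (c j) (d j))) →
    (∑ i, (d i - c i)) < δ → (∑ i, ‖f (d i) - f (c i)‖) < ε

namespace QComp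

variable {E : Type*} [NormedAddCommGroup E]

lemma disjoint_Ioo_of_le {c d c' d' : ℝ} (h : d ≤ c') :
    Disjoint (Set.Ioo c d) (Set.Ioo c' d') :=
  Set.disjoint_left.mpr fun u hu hu' => absurd (hu.2.trans_le h) (not_lt.mpr hu'.1.le)

lemma norm_sub_lt_of_AC {f : ℝ → E} {T : ℝ} (hf : AbsolutelyContinuousOn f 0 T)
    {ε : ℝ} (hε : 0 < ε) :
    ∃ δ > 0, ∀ u v : ℝ, u ∈ Icc (0:ℝ) T → v ∈ Icc (0:ℝ) T → u ≤ v → v - u < δ →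
      ‖f v - f u‖ < ε := by
  obtain ⟨δ, hδ, H⟩ := hf ε hε
  refine ⟨δ, hδ, fun u v hu hv huv hlt => ?_⟩
  have := H 1 (fun _ => u) (fun _ => v) (fun _ => ⟨hu.1, huv, hv.2⟩)
    (fun i j hij => absurd (Subsingleton.elim i j) hij) (by simpa using hlt)
  simpa using this

lemma continuousOn_of_AC {f : ℝ → E} {T : ℝ} (hf : AbsolutelyContinuousOn f 0 T) :
    ContinuousOn f (Icc 0 T) := by
  intro t ht
  rw [ContinuousWithinAt, Metric.tendsto_nhdsWithin_nhds]
  intro ε hε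
  obtain ⟨δ, hδ, H⟩ := norm_sub_lt_of_AC hf hε
  refine ⟨δ, hδ, fun {s} hs hst => ?_⟩
  rw [Real.dist_eq, abs_sub_lt_iff] at hst
  rw [dist_eq_norm]
  rcases le_total s t with h' | h'
  · rw [norm_sub_rev]; exact H s t hs ht h' (by linarith [hst.2])
  · exact H t s ht hs h' (by linarith [hst.1])

lemma AC_of_dominated {f : ℝ → E} {g : ℝ → ℝ} {T B : ℝ}
    (hf : AbsolutelyContinuousOn f 0 T) (hB : 0 ≤ B)
    (hdom : ∀ c d : ℝ, 0 ≤ c → c ≤ d → d ≤ T → |g d - g c| ≤ ‖f d - f c‖ + B * (d - c)) :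
    AbsolutelyContinuousOn g 0 T := by
  intro ε hε
  obtain ⟨δ₁, hδ₁, H⟩ := hf (ε/2) (by positivity)
  refine ⟨min δ₁ (ε/(2*(B+1))), by positivity, fun N c d hcd hdisj hsum => ?_⟩
  have h1 : (∑ i, ‖f (d i) - f (c i)‖) < ε/2 :=
    H N c d hcd hdisj (hsum.trans_le (min_le_left _ _))
  have h2 : (∑ i, (d i - c i)) < ε/(2*(B+1)) := hsum.trans_le (min_le_right _ _)
  have h3 : ∀ i, ‖g (d i) - g (c i)‖ ≤ ‖f (d i) - f (c i)‖ + B * (d i - c i) := by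
    intro i
    rw [Real.norm_eq_abs]
    exact hdom (c i) (d i) (hcd i).1 (hcd i).2.1 (hcd i).2.2
  calc (∑ i, ‖g (d i) - g (c i)‖)
      ≤ ∑ i, (‖f (d i) - f (c i)‖ + B * (d i - c i)) := Finset.sum_le_sum fun i _ => h3 i
    _ = (∑ i, ‖f (d i) - f (c i)‖) + B * (∑ i, (d i - c i)) := by
        rw [Finset.sum_add_distrib, Finset.mul_sum]
    _ < ε/2 + B * (ε/(2*(B+1))) := by
        have hle : B * (∑ i, (d i - c i)) ≤ B * (ε/(2*(B+1))) := by
          rcases eq_or_lt_of_le hB with rfl | hB'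
          · simp
          · exact (mul_le_mul_iff_right₀ hB').mpr h2.le
        linarith
    _ ≤ ε := by
        have hBp : (0:ℝ) < B + 1 := by linarith
        have key : B * (ε / (2 * (B + 1))) ≤ ε / 2 := by
          calc B * (ε / (2 * (B + 1))) = (ε/2) * (B/(B+1)) := by field_simp
            _ ≤ (ε/2) * 1 :=
              mul_le_mul_of_nonneg_left (by rw [div_le_one hBp]; linarith) (by positivity)
            _ = ε/2 := mul_one _
        linarith

end QComp

namespace QComp

lemma bv_of_AC {E : Type*} [NormedAddCommGroup E] {f : ℝ → E} {T : ℝ} (hT : 0 ≤ T)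
    (hf : AbsolutelyContinuousOn f 0 T) : LocallyBoundedVariationOn f (Icc 0 T) := by
  obtain ⟨δ, hδ, H⟩ := hf 1 one_pos
  have key : ∀ a b : ℝ, 0 ≤ a → a ≤ b → b ≤ T → b - a < δ →
      eVariationOn f (Icc a b) ≤ 1 := by
    intro a b ha hab hbT hlt
    apply iSup_le
    rintro ⟨N, u, hu, us⟩
    have hreal : (∑ i : Fin N, ‖f (u (i.1 + 1)) - f (u i.1)‖) < 1 := by
      apply H N (fun i => u i.1) (fun i => u (i.1 + 1))
      · intro i
        exact ⟨ha.trans (us i.1).1, hu (Nat.le_succ _), (us (i.1+1)).2.trans hbT⟩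
      · intro i j hij
        rcases lt_or_gt_of_ne (fun h => hij (Fin.ext h) : (i:ℕ) ≠ (j:ℕ)) with h | h
        · exact disjoint_Ioo_of_le (hu h)
        · exact (disjoint_Ioo_of_le (hu h)).symm
      · have : (∑ i : Fin N, (u (i.1 + 1) - u i.1)) = u N - u 0 := by
          rw [Fin.sum_univ_eq_sum_range (fun k => u (k + 1) - u k), Finset.sum_range_sub]
        rw [this]
        have h1 : u N ≤ b := (us N).2
        have h2 : a ≤ u 0 := (us 0).1
        linarith
    calc (∑ i ∈ Finset.range N, edist (f (u (i + 1))) (f (u i)))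
        = ∑ i ∈ Finset.range N, ENNReal.ofReal ‖f (u (i + 1)) - f (u i)‖ := by
          refine Finset.sum_congr rfl fun i _ => ?_
          rw [edist_dist, dist_eq_norm]
      _ = ENNReal.ofReal (∑ i ∈ Finset.range N, ‖f (u (i + 1)) - f (u i)‖) :=
          (ENNReal.ofReal_sum_of_nonneg fun i _ => norm_nonneg _).symm
      _ ≤ ENNReal.ofReal 1 := by
          apply ENNReal.ofReal_le_ofReal
          rw [← Fin.sum_univ_eq_sum_range (fun k => ‖f (u (k + 1)) - f (u k)‖)] at *
          exact hreal.le
      _ = 1 := ENNReal.ofReal_one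
  have main : ∀ k : ℕ, ∀ a : ℝ, 0 ≤ a → a ≤ T → T - a ≤ k * (δ/2) →
      eVariationOn f (Icc a T) ≤ (k : ℝ≥0∞) := by
    intro k
    induction k with
    | zero =>
      intro a ha haT hTa
      have hsub : (Icc a T).Subsingleton := by
        intro u hu v hv
        have : T ≤ a := by simpa using hTa
        have := hu.1; have := hu.2; have := hv.1; have := hv.2
        linarith
      rw [eVariationOn.subsingleton f hsub]
      simp
    | succ k ih =>
      intro a ha haT hTa
      set b := min (a + δ/2) T with hb
      have hab : a ≤ b := le_min (by linarith) haT
      have hbT : b ≤ T := min_le_right _ _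
      have hsplit := eVariationOn.Icc_add_Icc f (s := Icc a T) hab hbT ⟨hab, hbT⟩
      rw [inter_eq_self_of_subset_right (Icc_subset_Icc_right hbT),
        inter_eq_self_of_subset_right (Icc_subset_Icc_left hab), inter_self] at hsplit
      rw [← hsplit]
      have h1 : eVariationOn f (Icc a b) ≤ 1 := by
        apply key a b ha hab hbT
        have := min_le_left (a + δ/2) T
        linarith
      have h2 : eVariationOn f (Icc b T) ≤ (k : ℝ≥0∞) := by
        apply ih b (ha.trans hab) hbT
        rcases le_total (a + δ/2) T with hc | hc
        · rw [hb, min_eq_left hc]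
          push_cast at hTa ⊢
          linarith
        · rw [hb, min_eq_right hc]
          have : (0:ℝ) ≤ k * (δ/2) := by positivity
          linarith
      calc eVariationOn f (Icc a b) + eVariationOn f (Icc b T) ≤ 1 + (k : ℝ≥0∞) :=
            add_le_add h1 h2
        _ = ((k+1 : ℕ) : ℝ≥0∞) := by push_cast; rw [add_comm]
  set k := ⌈T / (δ/2)⌉₊ with hk
  have hTk : T - 0 ≤ k * (δ/2) := by
    have h1 : T / (δ/2) ≤ (k:ℝ) := Nat.le_ceil _
    rw [div_le_iff₀ (by positivity)] at h1
    linarith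
  have htot : eVariationOn f (Icc 0 T) ≠ ⊤ :=
    ne_top_of_le_ne_top (ENNReal.natCast_ne_top k) (main k 0 le_rfl hT hTk)
  intro a b _ _
  exact ne_top_of_le_ne_top htot (eVariationOn.mono f inter_subset_left)

end QComp

namespace QComp

lemma nonincreasing_of_AC {T : ℝ} {h : ℝ → ℝ}
    (hAC : AbsolutelyContinuousOn h 0 T)
    (hd : ∀ᵐ t, t ∈ Ioo (0:ℝ) T → ∃ d, HasDerivWithinAt h d (Icc (0:ℝ) T) t ∧ d ≤ 0) :
    ∀ a ∈ Icc (0:ℝ) T, ∀ b ∈ Icc (0:ℝ) T, a ≤ b → h b ≤ h a := by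
  intro a ha b hb hab
  rcases eq_or_lt_of_le hab with rfl | hlt
  · exact le_rfl
  have key : ∀ ε > 0, ∀ ε' > 0, h b - h a ≤ ε' * (b - a) + ε := by
    intro ε hε ε' hε'
    obtain ⟨δ, hδ, HAC⟩ := hAC ε hε
    classical
    set Eg : Set ℝ := {t | ∃ d, HasDerivWithinAt h d (Icc (0:ℝ) T) t ∧ d ≤ 0} with hEg
    have hNnull : volume ((Ioo a b \ Eg) ∪ {a, b}) = 0 := by
      apply measure_union_null
      · rw [measure_eq_zero_iff_ae_notMem]
        filter_upwards [hd] with t ht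
        rintro ⟨ht1, ht2⟩
        exact ht2 (ht ⟨lt_of_le_of_lt ha.1 ht1.1, lt_of_lt_of_le ht1.2 hb.2⟩)
      · exact Set.Countable.measure_zero ((Set.countable_singleton b).insert a) _
    obtain ⟨U, hNU, hUopen, hUvol⟩ :=
      Set.exists_isOpen_lt_of_lt ((Ioo a b \ Eg) ∪ {a, b}) (ENNReal.ofReal δ)
        (by rw [hNnull]; exact ENNReal.ofReal_pos.mpr hδ)
    set φ : ℝ × ℝ → ℝ := fun q => h q.2 - h q.1 with hφ
    set P : ℝ → Prop := fun t => ∃ l : List (ℝ × ℝ),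
      (∀ q ∈ l, a ≤ q.1 ∧ q.1 ≤ q.2 ∧ q.2 ≤ t) ∧
      l.Pairwise (fun q r => Disjoint (Ioo q.1 q.2) (Ioo r.1 r.2)) ∧
      (∀ q ∈ l, Ioo q.1 q.2 ⊆ U) ∧
      h t - h a ≤ ε' * (t - a) + (l.map φ).sum with hP
    set S : Set ℝ := {t | t ∈ Icc a b ∧ P t} with hS
    have ext1 : ∀ t ∈ S, ∀ t' : ℝ, t ≤ t' → t' ≤ b → Ioo t t' ⊆ U → t' ∈ S := by
      rintro t ⟨htab, l, hl1, hl2, hl3, hl4⟩ t' htt' ht'b hU'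
      refine ⟨⟨htab.1.trans htt', ht'b⟩, l ++ [(t, t')], ?_, ?_, ?_, ?_⟩
      · intro q hq
        rcases List.mem_append.mp hq with hq | hq
        · obtain ⟨h1, h2, h3⟩ := hl1 q hq; exact ⟨h1, h2, h3.trans htt'⟩
        · rw [List.mem_singleton] at hq; subst hq
          exact ⟨htab.1, htt', le_rfl⟩
      · rw [List.pairwise_append]
        refine ⟨hl2, List.pairwise_singleton _ _, ?_⟩
        intro q hq r hr
        rw [List.mem_singleton] at hr; subst hr
        exact disjoint_Ioo_of_le (hl1 q hq).2.2
      · intro q hq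
        rcases List.mem_append.mp hq with hq | hq
        · exact hl3 q hq
        · rw [List.mem_singleton] at hq; subst hq; exact hU'
      · rw [List.map_append, List.sum_append]
        simp only [List.map_cons, List.map_nil, List.sum_cons, List.sum_nil, hφ]
        have h5 : ε' * (t - a) + ε' * (t' - t) = ε' * (t' - a) := by ring
        have h6 : 0 ≤ ε' * (t' - t) := mul_nonneg hε'.le (by linarith)
        linarith
    have ext2 : ∀ t ∈ S, ∀ t' : ℝ, t ≤ t' → t' ≤ b →
        h t' - h t ≤ ε' * (t' - t) → t' ∈ S := by
      rintro t ⟨htab, l, hl1, hl2, hl3, hl4⟩ t' htt' ht'b hslope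
      refine ⟨⟨htab.1.trans htt', ht'b⟩, l,
        fun q hq => ⟨(hl1 q hq).1, (hl1 q hq).2.1, (hl1 q hq).2.2.trans htt'⟩, hl2, hl3, ?_⟩
      have h5 : ε' * (t - a) + ε' * (t' - t) = ε' * (t' - a) := by ring
      linarith
    have haS : a ∈ S := by
      refine ⟨⟨le_rfl, hab⟩, [], by simp, by simp, by simp, by simp⟩
    have hSne : S.Nonempty := ⟨a, haS⟩
    have hSbdd : BddAbove S := ⟨b, fun t ht => ht.1.2⟩
    set s := sSup S with hs
    have hsmem : s ∈ Icc a b := ⟨le_csSup hSbdd haS, csSup_le hSne fun t ht => ht.1.2⟩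
    have hnear : ∀ r : ℝ, 0 < r → ∃ t, t ∈ S ∧ s - r < t ∧ t ≤ s := by
      intro r hr
      obtain ⟨t, htS, htgt⟩ := exists_lt_of_lt_csSup hSne (by linarith : s - r < s)
      exact ⟨t, htS, htgt, le_csSup hSbdd htS⟩
    have hbS : b ∈ S := by
      rcases em (s ∈ U) with hsU | hsU
      · obtain ⟨r, hr, hball⟩ := Metric.isOpen_iff.mp hUopen s hsU
        have hball' : Ioo (s - r) (s + r) ⊆ U := by
          rw [← Real.ball_eq_Ioo]; exact hball
        obtain ⟨t, htS, ht1, ht2⟩ := hnear r hr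
        have step : ∀ t', s ≤ t' → t' ≤ b → t' < s + r → t' ∈ S := by
          intro t' h1 h2 h3
          apply ext1 t htS t' (ht2.trans h1) h2
          intro u hu
          exact hball' ⟨by linarith [hu.1], by linarith [hu.2]⟩
        have hsS : s ∈ S := step s le_rfl hsmem.2 (by linarith)
        rcases eq_or_lt_of_le hsmem.2 with heq | hlt' 
        · exact heq ▸ hsS
        · exfalso
          have h1 : s < min (s + r/2) b := lt_min (by linarith) hlt'
          have ht'S : min (s + r/2) b ∈ S := step _ h1.le (min_le_right _ _)
            ((min_le_left _ _).trans_lt (by linarith))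
          exact absurd (le_csSup hSbdd ht'S) (not_le.mpr h1)
      · have hsa : s ≠ a := fun heq => hsU (hNU (Or.inr (by rw [heq]; exact Set.mem_insert _ _)))
        have hsb : s ≠ b := fun heq => hsU (hNU (Or.inr (by rw [heq]; simp)))
        have hsIoo : s ∈ Ioo a b :=
          ⟨lt_of_le_of_ne hsmem.1 (Ne.symm hsa), lt_of_le_of_ne hsmem.2 hsb⟩
        have hsEg : s ∈ Eg := by
          by_contra hc
          exact hsU (hNU (Or.inl ⟨hsIoo, hc⟩))
        obtain ⟨dv, hdv, hdv0⟩ := hsEg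
        have hsIcc : Icc (0:ℝ) T ∈ 𝓝 s :=
          Icc_mem_nhds (lt_of_le_of_lt ha.1 hsIoo.1) (lt_of_lt_of_le hsIoo.2 hb.2)
        have hder : HasDerivAt h dv s := hdv.hasDerivAt hsIcc
        have hev : ∀ᶠ u in 𝓝[≠] s, slope h s u < ε' :=
          (hasDerivAt_iff_tendsto_slope.mp hder).eventually_lt_const
            (lt_of_le_of_lt hdv0 hε')
        rw [eventually_nhdsWithin_iff] at hev
        obtain ⟨r, hr, hball⟩ := Metric.eventually_nhds_iff.mp hev
        have lest : ∀ u, s - r < u → u < s → h s - h u ≤ ε' * (s - u) := by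
          intro u h1 h2
          have hdu : dist u s < r := by
            rw [Real.dist_eq, abs_sub_lt_iff]; constructor <;> linarith
          have hsl := hball hdu (by simpa using ne_of_lt h2)
          rw [slope_def_field, div_lt_iff_of_neg (by linarith : u - s < 0)] at hsl
          have : ε' * (s - u) = -(ε' * (u - s)) := by ring
          linarith
        have rest : ∀ u, s < u → u < s + r → h u - h s ≤ ε' * (u - s) := by
          intro u h1 h2
          have hdu : dist u s < r := by
            rw [Real.dist_eq, abs_sub_lt_iff]; constructor <;> linarith
          have hsl := hball hdu (by simpa using (ne_of_gt h1))
          rw [slope_def_field, div_lt_iff₀ (by linarith : 0 < u - s)] at hsl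
          linarith
        obtain ⟨t, htS, ht1, ht2⟩ := hnear r hr
        have hsS : s ∈ S := by
          rcases eq_or_lt_of_le ht2 with heq | hlt2
          · exact heq ▸ htS
          · exact ext2 t htS s ht2 hsmem.2 (lest t ht1 hlt2)
        rcases eq_or_lt_of_le hsmem.2 with heq | hltb
        · exact heq ▸ hsS
        · exfalso
          have h1 : s < min (s + r/2) b := lt_min (by linarith) hltb
          have h2 : min (s + r/2) b < s + r := (min_le_left _ _).trans_lt (by linarith)
          have ht'S : min (s + r/2) b ∈ S :=
            ext2 s hsS _ h1.le (min_le_right _ _) (rest _ h1 h2)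
          exact absurd (le_csSup hSbdd ht'S) (not_le.mpr h1)
    obtain ⟨-, l, hl1, hl2, hl3, hl4⟩ := hbS
    set N := l.length with hN
    set c : Fin N → ℝ := fun i => (l.get i).1 with hc
    set d : Fin N → ℝ := fun i => (l.get i).2 with hdd
    have hmem : ∀ i : Fin N, l.get i ∈ l := fun i => l.get_mem i
    have hdisj : Pairwise fun i j : Fin N => Disjoint (Ioo (c i) (d i)) (Ioo (c j) (d j)) := by
      intro i j hij
      have hpg := List.pairwise_iff_get.mp hl2
      rcases lt_or_gt_of_ne hij with hlt' | hlt'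
      · exact hpg i j hlt'
      · exact (hpg j i hlt').symm
    have hnn : ∀ i : Fin N, 0 ≤ d i - c i :=
      fun i => sub_nonneg.mpr (hl1 _ (hmem i)).2.1
    have hsum_lt : (∑ i, (d i - c i)) < δ := by
      have hmeas := measure_iUnion (μ := volume)
        (fun i j hij => (hdisj hij : Disjoint _ _)) (fun i : Fin N => measurableSet_Ioo)
      have hsub : (⋃ i, Ioo (c i) (d i)) ⊆ U := iUnion_subset fun i => hl3 _ (hmem i)
      have hlt2 : (∑' i : Fin N, volume (Ioo (c i) (d i))) < ENNReal.ofReal δ :=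
        hmeas ▸ lt_of_le_of_lt (measure_mono hsub) hUvol
      rw [tsum_fintype] at hlt2
      have h3 : (∑ i : Fin N, ENNReal.ofReal (d i - c i)) < ENNReal.ofReal δ := by
        simpa [Real.volume_Ioo] using hlt2
      rw [← ENNReal.ofReal_sum_of_nonneg (fun i _ => hnn i)] at h3
      exact (ENNReal.ofReal_lt_ofReal_iff_of_nonneg
        (Finset.sum_nonneg fun i _ => hnn i)).mp h3
    have hAC2 : (∑ i, ‖h (d i) - h (c i)‖) < ε :=
      HAC N c d (fun i => ⟨ha.1.trans (hl1 _ (hmem i)).1, (hl1 _ (hmem i)).2.1,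
        (hl1 _ (hmem i)).2.2.trans hb.2⟩) hdisj hsum_lt
    have hmap : (l.map φ).sum = ∑ i, (h (d i) - h (c i)) := by
      rw [← Fin.sum_univ_fun_getElem l φ]
      exact Finset.sum_congr rfl fun i _ => rfl
    have hsum_le : (l.map φ).sum ≤ ∑ i, ‖h (d i) - h (c i)‖ := by
      rw [hmap]
      exact Finset.sum_le_sum fun i _ => le_trans (le_abs_self _)
        (le_of_eq (Real.norm_eq_abs _).symm)
    linarith
  by_contra hcon
  push_neg at hcon
  have hη : 0 < h b - h a := by linarith
  have hba : 0 < b - a := by linarith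
  have hk := key ((h b - h a)/4) (by linarith) ((h b - h a)/(4*(b-a)))
    (div_pos hη (by linarith))
  have heq : ((h b - h a)/(4*(b-a)))*(b-a) = (h b - h a)/4 := by
    field_simp
  linarith

end QComp

namespace QComp

lemma ae_hasDerivAt_primitive {E : Type*} [NormedAddCommGroup E] [NormedSpace ℝ E]
    [CompleteSpace E] {w : ℝ → E} (hw : Integrable w volume) :
    ∀ᵐ t, HasDerivAt (fun u => ∫ s in (0:ℝ)..u, w s) (w t) t := by
  filter_upwards [IsUnifLocDoublingMeasure.ae_tendsto_average_norm_sub (volume : Measure ℝ)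
    hw.locallyIntegrable (0:ℝ)] with t ht
  have A : Tendsto (fun r : ℝ => ⨍ u in Metric.closedBall t r, ‖w u - w t‖) (𝓝[>] 0) (𝓝 0) :=
    ht (fun _ => t) id tendsto_id (by
      filter_upwards with j
      simp [Metric.mem_closedBall])
  set F : ℝ → E := fun u => ∫ s in (0:ℝ)..u, w s with hF
  rw [hasDerivAt_iff_tendsto]
  have hbound : ∀ s : ℝ, s ≠ t →
      ‖s - t‖⁻¹ * ‖F s - F t - (s - t) • w t‖ ≤
        2 * ⨍ u in Metric.closedBall t |s - t|, ‖w u - w t‖ := by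
    intro s hs
    have hr : 0 < |s - t| := abs_pos.mpr (sub_ne_zero.mpr hs)
    have h1 : F s - F t = ∫ u in t..s, w u :=
      intervalIntegral.integral_interval_sub_left hw.intervalIntegrable hw.intervalIntegrable
    have h2 : (s - t) • w t = ∫ _ in t..s, w t := by
      rw [intervalIntegral.integral_const]
    have h3 : F s - F t - (s - t) • w t = ∫ u in t..s, (w u - w t) := by
      rw [h1, h2, intervalIntegral.integral_sub hw.intervalIntegrable
        intervalIntegrable_const]
    have hsub : Set.uIoc t s ⊆ Metric.closedBall t |s - t| := by
      intro u hu
      rw [Metric.mem_closedBall, Real.dist_eq]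
      rw [Set.mem_uIoc] at hu
      rcases abs_cases (s - t) with ⟨h5, h6⟩ | ⟨h5, h6⟩ <;>
        rcases hu with ⟨h7, h8⟩ | ⟨h7, h8⟩ <;>
        rcases abs_cases (u - t) with ⟨h9, h10⟩ | ⟨h9, h10⟩ <;> linarith
    have hball_int : IntegrableOn (fun u => ‖w u - w t‖) (Metric.closedBall t |s - t|) :=
      ((hw.integrableOn.sub (integrableOn_const
        measure_closedBall_lt_top.ne)).norm)
    have h4 : ‖∫ u in t..s, (w u - w t)‖ ≤
        ∫ u in Metric.closedBall t |s - t|, ‖w u - w t‖ := by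
      refine le_trans (intervalIntegral.norm_integral_le_integral_norm_uIoc) ?_
      apply setIntegral_mono_set hball_int
      · filter_upwards with u using norm_nonneg _
      · exact HasSubset.Subset.eventuallyLE hsub
    have h5 : (∫ u in Metric.closedBall t |s - t|, ‖w u - w t‖) =
        (2 * |s - t|) * ⨍ u in Metric.closedBall t |s - t|, ‖w u - w t‖ := by
      rw [setAverage_eq, Real.volume_real_closedBall (by linarith)]
      rw [smul_eq_mul, ← mul_assoc, mul_inv_cancel₀ (by linarith), one_mul]
    calc ‖s - t‖⁻¹ * ‖F s - F t - (s - t) • w t‖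
        ≤ ‖s - t‖⁻¹ * ((2 * |s - t|) * ⨍ u in Metric.closedBall t |s - t|, ‖w u - w t‖) := by
          apply mul_le_mul_of_nonneg_left _ (by positivity)
          rw [h3]; rw [h5] at h4; exact h4
      _ = 2 * ⨍ u in Metric.closedBall t |s - t|, ‖w u - w t‖ := by
          rw [Real.norm_eq_abs]
          field_simp
  have hcomp : Tendsto (fun s : ℝ => 2 * ⨍ u in Metric.closedBall t |s - t|, ‖w u - w t‖)
      (𝓝[≠] t) (𝓝 0) := by
    have habs : Tendsto (fun s : ℝ => |s - t|) (𝓝[≠] t) (𝓝[>] 0) := by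
      apply tendsto_nhdsWithin_iff.mpr
      constructor
      · have : Tendsto (fun s : ℝ => |s - t|) (𝓝 t) (𝓝 0) := by
          have h0 : |t - t| = 0 := by simp
          exact h0 ▸ ((continuous_id.sub continuous_const).abs.tendsto t)
        exact this.mono_left nhdsWithin_le_nhds
      · filter_upwards [self_mem_nhdsWithin] with s hs
        exact abs_pos.mpr (sub_ne_zero.mpr hs)
    have h2A : Tendsto (fun r : ℝ => 2 * ⨍ u in Metric.closedBall t r, ‖w u - w t‖)
        (𝓝[>] 0) (𝓝 0) := by
      have := A.const_mul 2
      simpa using this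
    exact h2A.comp habs
  rw [← nhdsNE_sup_pure t, tendsto_sup]
  constructor
  · apply squeeze_zero' ?_ ?_ hcomp
    · filter_upwards with s using by positivity
    · filter_upwards [self_mem_nhdsWithin] with s hs
      exact hbound s hs
  · have hval : ‖(t:ℝ) - t‖⁻¹ * ‖F t - F t - (t - t) • w t‖ = 0 := by simp
    exact hval ▸ tendsto_pure_nhds _ _

end QComp

open QComp in
/-- Comparison theorem for quasimonotone linear differential inequalities: if `J(t)` is bounded
measurable with nonnegative off-diagonal entries, `x` is absolutely continuous with
`x'(t) ≤ J(t)x(t) + C(t)` componentwise a.e., and `y` is a weak solution of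
`y' = J(t)y + C(t)` with `y(0) ≥ x(0)`, then `x(t) ≤ y(t)` componentwise on `[0,T]`. -/
theorem le_of_quasimonotone_differential_ineq
    {n : ℕ} (T : ℝ) (hT : 0 < T)
    (J : ℝ → Matrix (Fin n) (Fin n) ℝ) (C : ℝ → Fin n → ℝ) (x y : ℝ → Fin n → ℝ)
    (hJmeas : AEStronglyMeasurable J (volume.restrict (Icc (0:ℝ) T)))
    (hCmeas : AEStronglyMeasurable C (volume.restrict (Icc (0:ℝ) T)))
    (hJbd : ∃ M, ∀ t ∈ Icc (0:ℝ) T, ∀ i j, |J t i j| ≤ M)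
    (hCbd : ∃ M, ∀ t ∈ Icc (0:ℝ) T, ‖C t‖ ≤ M)
    (hJoff : ∀ t ∈ Icc (0:ℝ) T, ∀ i j, i ≠ j → 0 ≤ J t i j)
    (hxAC : AbsolutelyContinuousOn x 0 T)
    (hx' : ∀ᵐ t ∂(volume.restrict (Icc (0:ℝ) T)),
      ∀ d : Fin n → ℝ, HasDerivWithinAt x d (Icc (0:ℝ) T) t →
        ∀ i, d i ≤ ((J t).mulVec (x t) + C t) i)
    (hycont : ContinuousOn y (Icc (0:ℝ) T))
    (hy : ∀ t ∈ Icc (0:ℝ) T,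
      y t = y 0 + ∫ s in (0:ℝ)..t, ((J s).mulVec (y s) + C s))
    (hy0 : ∀ i, x 0 i ≤ y 0 i) :
    ∀ t ∈ Icc (0:ℝ) T, ∀ i, x t i ≤ y t i := by
  rcases Nat.eq_zero_or_pos n with hn | hn
  · subst hn; intro t ht i; exact i.elim0
  haveI : Nonempty (Fin n) := Fin.pos_iff_nonempty.mp hn
  classical
  obtain ⟨K0, hK0⟩ := hJbd
  set K : ℝ := max K0 0 with hK
  have hKnn : 0 ≤ K := le_max_right _ _
  have hKb : ∀ t ∈ Icc (0:ℝ) T, ∀ i j, |J t i j| ≤ K :=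
    fun t ht i j => (hK0 t ht i j).trans (le_max_left _ _)
  set z : ℝ → Fin n → ℝ := fun u i => x u i - y u i with hz
  set p : ℝ → ℝ := fun u => Finset.univ.sup' Finset.univ_nonempty (fun i => max (z u i) 0)
    with hp
  set L : ℝ := n * K with hL
  have hLnn : 0 ≤ L := by positivity
  have hp0 : ∀ u, 0 ≤ p u := by
    intro u
    simp only [hp]
    exact le_trans (le_max_right (z u (Classical.arbitrary (Fin n))) 0)
      (Finset.le_sup' (fun i => max (z u i) 0) (Finset.mem_univ _))
  have hpz : ∀ u i, z u i ≤ p u := by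
    intro u i
    simp only [hp]
    exact le_trans (le_max_left (z u i) 0)
      (Finset.le_sup' (fun i => max (z u i) 0) (Finset.mem_univ i))
  have hp00 : p 0 = 0 := by
    refine le_antisymm ?_ (hp0 0)
    simp only [hp]
    apply Finset.sup'_le
    intro i _
    apply max_le _ le_rfl
    have := hy0 i
    simp only [hz]
    linarith
  -- continuity facts
  have hxcont : ContinuousOn x (Icc 0 T) := continuousOn_of_AC hxAC
  have hzcont : ∀ i, ContinuousOn (fun u => z u i) (Icc (0:ℝ) T) := fun i =>
    ((continuous_apply i).comp_continuousOn hxcont).sub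
      ((continuous_apply i).comp_continuousOn hycont)
  have hpcont : ContinuousOn p (Icc 0 T) := by
    intro u hu
    simp only [hp]
    exact Filter.Tendsto.finset_sup'_nhds_apply _
      (fun i _ => ((hzcont i u hu).max continuousWithinAt_const))
  -- bounds for y and C
  obtain ⟨By, hBy⟩ := isCompact_Icc.exists_bound_of_continuousOn hycont
  obtain ⟨MC, hMC⟩ := hCbd
  set w : ℝ → Fin n → ℝ := fun s => (J s).mulVec (y s) + C s with hw
  set Bw : ℝ := n * K * By + MC with hBw
  have hBynn : 0 ≤ By := (norm_nonneg _).trans (hBy 0 ⟨le_rfl, hT.le⟩)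
  have hwbd : ∀ s ∈ Icc (0:ℝ) T, ‖w s‖ ≤ Bw := by
    intro s hs
    have h1 : ‖(J s).mulVec (y s)‖ ≤ n * K * By := by
      rw [pi_norm_le_iff_of_nonneg (by positivity)]
      intro i
      have hcomp : (J s).mulVec (y s) i = ∑ j, J s i j * y s j := rfl
      rw [Real.norm_eq_abs, hcomp]
      calc |∑ j, J s i j * y s j| ≤ ∑ j, |J s i j * y s j| := Finset.abs_sum_le_sum_abs _ _
        _ ≤ ∑ _j : Fin n, K * By := by
            apply Finset.sum_le_sum
            intro j _
            rw [abs_mul]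
            apply mul_le_mul (hKb s hs i j) _ (abs_nonneg _) hKnn
            have := norm_le_pi_norm (y s) j
            rw [Real.norm_eq_abs] at this
            exact this.trans (hBy s hs)
        _ = n * K * By := by
            rw [Finset.sum_const, Finset.card_univ, Fintype.card_fin, nsmul_eq_mul]
            ring
    calc ‖w s‖ ≤ ‖(J s).mulVec (y s)‖ + ‖C s‖ := norm_add_le _ _
      _ ≤ n * K * By + MC := add_le_add h1 (hMC s hs)
  have hBwnn : 0 ≤ Bw := (norm_nonneg (w 0)).trans (hwbd 0 ⟨le_rfl, hT.le⟩)
  -- measurability and integrability of w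
  have hymeas : AEStronglyMeasurable y (volume.restrict (Icc (0:ℝ) T)) :=
    hycont.aestronglyMeasurable measurableSet_Icc
  have hwmeas : AEStronglyMeasurable w (volume.restrict (Icc (0:ℝ) T)) := by
    apply AEStronglyMeasurable.add _ hCmeas
    exact (continuous_fst.matrix_mulVec continuous_snd).comp_aestronglyMeasurable
      (hJmeas.prodMk hymeas)
  set wbar : ℝ → Fin n → ℝ := (Icc (0:ℝ) T).indicator w with hwbar
  have hwInt : Integrable wbar volume := by
    rw [hwbar, integrable_indicator_iff measurableSet_Icc]
    exact Integrable.mono' (integrable_const Bw) hwmeas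
      ((ae_restrict_iff' measurableSet_Icc).mpr (Filter.Eventually.of_forall hwbd))
  have hwbd' : ∀ s, ‖wbar s‖ ≤ Bw := by
    intro s
    by_cases hs : s ∈ Icc (0:ℝ) T
    · rw [hwbar, indicator_of_mem hs]; exact hwbd s hs
    · rw [hwbar, indicator_of_notMem hs]; simpa using hBwnn
  -- y as a primitive of wbar
  have hyF : ∀ t ∈ Icc (0:ℝ) T, y t = y 0 + ∫ s in (0:ℝ)..t, wbar s := by
    intro t ht
    rw [hy t ht]
    congr 1
    apply intervalIntegral.integral_congr
    intro u hu
    rw [Set.uIcc_of_le ht.1] at hu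
    have hmem : u ∈ Icc (0:ℝ) T := ⟨hu.1, hu.2.trans ht.2⟩
    simp only [hwbar]
    exact (Set.indicator_of_mem hmem w).symm
  have hyderiv : ∀ᵐ t, t ∈ Ioo (0:ℝ) T → HasDerivWithinAt y (wbar t) (Icc (0:ℝ) T) t := by
    filter_upwards [ae_hasDerivAt_primitive hwInt] with t hF ht
    have h1 : HasDerivWithinAt (fun u => y 0 + ∫ s in (0:ℝ)..u, wbar s) (wbar t)
        (Icc (0:ℝ) T) t := (hF.const_add (y 0)).hasDerivWithinAt
    exact h1.congr (fun u hu => hyF u hu) (hyF t (Ioo_subset_Icc_self ht))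
  -- the primitive G of L * p
  have hpmeas : AEStronglyMeasurable (fun s => L * p s) (volume.restrict (Icc (0:ℝ) T)) :=
    (hpcont.aestronglyMeasurable measurableSet_Icc).const_mul L
  obtain ⟨Bp, hBp⟩ := isCompact_Icc.exists_bound_of_continuousOn hpcont
  have hBpnn : 0 ≤ Bp := (norm_nonneg _).trans (hBp 0 ⟨le_rfl, hT.le⟩)
  set gbar : ℝ → ℝ := (Icc (0:ℝ) T).indicator (fun s => L * p s) with hgbar
  have hgbd : ∀ s, ‖gbar s‖ ≤ L * Bp := by
    intro s
    by_cases hs : s ∈ Icc (0:ℝ) T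
    · rw [hgbar, indicator_of_mem hs, Real.norm_eq_abs, abs_mul, abs_of_nonneg hLnn]
      apply mul_le_mul_of_nonneg_left _ hLnn
      rw [← Real.norm_eq_abs]
      exact hBp s hs
    · rw [hgbar, indicator_of_notMem hs]
      simpa using mul_nonneg hLnn hBpnn
  have hgInt : Integrable gbar volume := by
    rw [hgbar, integrable_indicator_iff measurableSet_Icc]
    apply Integrable.mono' (integrable_const (L * Bp)) hpmeas
    apply (ae_restrict_iff' measurableSet_Icc).mpr
    apply Filter.Eventually.of_forall
    intro s hs
    rw [Real.norm_eq_abs, abs_mul, abs_of_nonneg hLnn]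
    apply mul_le_mul_of_nonneg_left _ hLnn
    rw [← Real.norm_eq_abs]
    exact hBp s hs
  have hgnn : ∀ s, 0 ≤ gbar s :=
    fun s => indicator_nonneg (fun u _ => mul_nonneg hLnn (hp0 u)) s
  set G : ℝ → ℝ := fun u => ∫ s in (0:ℝ)..u, gbar s with hG
  have hGcont : Continuous G :=
    intervalIntegral.continuous_primitive (fun a b => hgInt.intervalIntegrable) 0
  have hsmf : ∀ l : Filter ℝ, StronglyMeasurableAtFilter gbar l volume := by
    intro l
    refine ⟨univ, univ_mem, ?_⟩
    rw [Measure.restrict_univ]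
    exact hgInt.aestronglyMeasurable
  have hGd : ∀ t ∈ Ioo (0:ℝ) T, HasDerivAt G (L * p t) t := by
    intro t ht
    have htIcc : t ∈ Icc (0:ℝ) T := Ioo_subset_Icc_self ht
    have hnhds : Icc (0:ℝ) T ∈ 𝓝 t := Icc_mem_nhds ht.1 ht.2
    have hcontAt : ContinuousAt (fun s => L * p s) t :=
      continuousAt_const.mul ((hpcont t htIcc).continuousAt hnhds)
    have hcontg : ContinuousAt gbar t := by
      apply hcontAt.congr
      filter_upwards [hnhds] with u hu
      simp only [hgbar]
      exact (Set.indicator_of_mem hu (fun s => L * p s)).symm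
    have hder := intervalIntegral.integral_hasDerivAt_right (a := 0) hgInt.intervalIntegrable
      (hsmf (𝓝 t)) hcontg
    rwa [hgbar, indicator_of_mem htIcc] at hder
  have hGdR : ∀ t ∈ Ico (0:ℝ) T, HasDerivWithinAt G (gbar t) (Ici t) t := by
    intro t ht
    have htIcc : t ∈ Icc (0:ℝ) T := ⟨ht.1, ht.2.le⟩
    have hcwa : ContinuousWithinAt gbar (Ioi t) t := by
      have h1 : ContinuousWithinAt (fun s => L * p s) (Icc (0:ℝ) T) t :=
        continuousWithinAt_const.mul (hpcont t htIcc)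
      have h2 : ContinuousWithinAt (fun s => L * p s) (Ioo t T) t :=
        h1.mono (fun u hu => ⟨ht.1.trans hu.1.le, hu.2.le⟩)
      have h3 : ContinuousWithinAt gbar (Ioo t T) t := by
        apply h2.congr
        · intro u hu
          have hmem : u ∈ Icc (0:ℝ) T := ⟨ht.1.trans hu.1.le, hu.2.le⟩
          simp only [hgbar]
          exact Set.indicator_of_mem hmem _
        · simp only [hgbar]
          exact Set.indicator_of_mem htIcc _
      have h4 : Tendsto gbar (𝓝[Ioo t T] t) (𝓝 (gbar t)) := h3
      rw [nhdsWithin_Ioo_eq_nhdsGT ht.2] at h4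
      exact h4
    exact intervalIntegral.integral_hasDerivWithinAt_right hgInt.intervalIntegrable
      (hsmf _) hcwa
  -- absolute continuity of p and p - G
  have hxBV : LocallyBoundedVariationOn x (Icc 0 T) := bv_of_AC hT.le hxAC
  have hxdiff := hxBV.ae_differentiableWithinAt_of_mem
  have hplip : ∀ u v : ℝ, |p u - p v| ≤ ‖x u - x v‖ + ‖y u - y v‖ := by
    have key : ∀ u v : ℝ, p u - p v ≤ ‖x u - x v‖ + ‖y u - y v‖ := by
      intro u v
      obtain ⟨i, -, hi⟩ := Finset.exists_mem_eq_sup' (Finset.univ_nonempty (α := Fin n))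
        (fun i => max (z u i) 0)
      have h1 : p u = max (z u i) 0 := by simp only [hp]; exact hi
      have h2 : max (z v i) 0 ≤ p v := by
        simp only [hp]
        exact Finset.le_sup' (fun i => max (z v i) 0) (Finset.mem_univ i)
      have h4 : |max (z u i) 0 - max (z v i) 0| ≤ |z u i - z v i| :=
        abs_max_sub_max_le_abs _ _ _
      have h5 : |z u i - z v i| ≤ |x u i - x v i| + |y u i - y v i| := by
        simp only [hz]
        calc |x u i - y u i - (x v i - y v i)| = |(x u i - x v i) - (y u i - y v i)| := by
              ring_nf
          _ ≤ |x u i - x v i| + |y u i - y v i| := abs_sub _ _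
      have h6 : |x u i - x v i| ≤ ‖x u - x v‖ := by
        have := norm_le_pi_norm (x u - x v) i
        simpa [Real.norm_eq_abs] using this
      have h7 : |y u i - y v i| ≤ ‖y u - y v‖ := by
        have := norm_le_pi_norm (y u - y v) i
        simpa [Real.norm_eq_abs] using this
      have h8 : max (z u i) 0 - max (z v i) 0 ≤ |max (z u i) 0 - max (z v i) 0| := le_abs_self _
      linarith
    intro u v
    rw [abs_sub_le_iff]
    constructor
    · exact key u v
    · rw [norm_sub_rev (x u), norm_sub_rev (y u)]
      exact key v u
  have hylip : ∀ u v : ℝ, 0 ≤ u → u ≤ v → v ≤ T → ‖y v - y u‖ ≤ Bw * (v - u) := by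
    intro u v hu huv hvT
    have h1 : y v - y u = ∫ s in u..v, wbar s := by
      rw [hyF v ⟨hu.trans huv, hvT⟩, hyF u ⟨hu, huv.trans hvT⟩, add_sub_add_left_eq_sub]
      exact intervalIntegral.integral_interval_sub_left hwInt.intervalIntegrable
        hwInt.intervalIntegrable
    rw [h1]
    calc ‖∫ s in u..v, wbar s‖ ≤ Bw * |v - u| :=
          intervalIntegral.norm_integral_le_of_norm_le_const (fun s _ => hwbd' s)
      _ = Bw * (v - u) := by rw [abs_of_nonneg (by linarith)]
  have hpAC : AbsolutelyContinuousOn p 0 T := by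
    apply AC_of_dominated hxAC hBwnn
    intro c d hc hcd hdT
    have h1 := hplip d c
    have h2 := hylip c d hc hcd hdT
    linarith
  have hGlip : ∀ u v : ℝ, u ≤ v → |G v - G u| ≤ (L * Bp) * (v - u) := by
    intro u v huv
    have h1 : G v - G u = ∫ s in u..v, gbar s :=
      intervalIntegral.integral_interval_sub_left hgInt.intervalIntegrable
        hgInt.intervalIntegrable
    rw [h1, ← Real.norm_eq_abs]
    calc ‖∫ s in u..v, gbar s‖ ≤ (L * Bp) * |v - u| :=
          intervalIntegral.norm_integral_le_of_norm_le_const (fun s _ => hgbd s)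
      _ = (L * Bp) * (v - u) := by rw [abs_of_nonneg (by linarith)]
  have hhAC : AbsolutelyContinuousOn (fun u => p u - G u) 0 T := by
    apply AC_of_dominated hpAC (mul_nonneg hLnn hBpnn)
    intro c d hc hcd hdT
    have h1 : |(p d - G d) - (p c - G c)| ≤ |p d - p c| + |G d - G c| := by
      have : (p d - G d) - (p c - G c) = (p d - p c) - (G d - G c) := by ring
      rw [this]
      exact abs_sub _ _
    have h2 := hGlip c d hcd
    rw [Real.norm_eq_abs]
    linarith
  have hpBV := bv_of_AC hT.le hpAC
  have hpdiff := hpBV.ae_differentiableWithinAt_of_mem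
  -- main a.e. derivative bound
  have hx'' : ∀ᵐ t, t ∈ Icc (0:ℝ) T → ∀ d : Fin n → ℝ,
      HasDerivWithinAt x d (Icc (0:ℝ) T) t →
      ∀ i, d i ≤ ((J t).mulVec (x t) + C t) i := (ae_restrict_iff' measurableSet_Icc).mp hx'
  have hmain : ∀ᵐ t, t ∈ Ioo (0:ℝ) T →
      ∃ dd, HasDerivWithinAt (fun u => p u - G u) dd (Icc (0:ℝ) T) t ∧ dd ≤ 0 := by
    filter_upwards [hxdiff, hpdiff, hyderiv, hx''] with t hx1 hp1 hy1 hx2 ht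
    have htIcc : t ∈ Icc (0:ℝ) T := Ioo_subset_Icc_self ht
    have hnhds : Icc (0:ℝ) T ∈ 𝓝 t := Icc_mem_nhds ht.1 ht.2
    set dx := derivWithin x (Icc (0:ℝ) T) t with hdx
    have hdxW : HasDerivWithinAt x dx (Icc (0:ℝ) T) t := (hx1 htIcc).hasDerivWithinAt
    have hdxle := hx2 htIcc dx hdxW
    set e := derivWithin p (Icc (0:ℝ) T) t with he
    have heW : HasDerivWithinAt p e (Icc (0:ℝ) T) t := (hp1 htIcc).hasDerivWithinAt
    have heA : HasDerivAt p e t := heW.hasDerivAt hnhds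
    have hydA : HasDerivAt y (wbar t) t := (hy1 ht).hasDerivAt hnhds
    have hGt : HasDerivAt G (L * p t) t := hGd t ht
    refine ⟨e - L * p t, heW.sub hGt.hasDerivWithinAt, sub_nonpos.mpr ?_⟩
    rcases (hp0 t).eq_or_lt with h0 | hpos
    · have hmin : IsLocalMin p t := by
        filter_upwards with u
        rw [← h0]
        exact hp0 u
      have he0 : e = 0 := hmin.hasDerivAt_eq_zero heA
      rw [he0, ← h0, mul_zero]
    · obtain ⟨i, -, hi⟩ := Finset.exists_mem_eq_sup' (Finset.univ_nonempty (α := Fin n))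
        (fun i => max (z t i) 0)
      have hpt : p t = max (z t i) 0 := by simp only [hp]; exact hi
      have hzi : z t i = p t := by
        rcases le_or_gt (z t i) 0 with hle | hpos'
        · rw [hpt, max_eq_right hle] at hpos; exact absurd hpos (lt_irrefl 0)
        · rw [hpt, max_eq_left hpos'.le]
      have hzipos : 0 < z t i := by rw [hzi]; exact hpos
      have hdxA : HasDerivAt x dx t := hdxW.hasDerivAt hnhds
      have hzd : HasDerivAt (fun u => z u i) (dx i - wbar t i) t :=
        ((hasDerivAt_pi.mp hdxA) i).sub ((hasDerivAt_pi.mp hydA) i)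
      have hq : HasDerivAt (fun u => p u - z u i) (e - (dx i - wbar t i)) t := heA.sub hzd
      have hqmin : IsLocalMin (fun u => p u - z u i) t := by
        filter_upwards with u
        have h1 : z u i ≤ p u := hpz u i
        have h2 : p t - z t i = 0 := by rw [hzi]; ring
        simp only [h2]
        linarith
      have heq : e = dx i - wbar t i := by
        have := hqmin.hasDerivAt_eq_zero hq
        linarith [this]
      have hwt : wbar t = (J t).mulVec (y t) + C t := indicator_of_mem htIcc _
      have hle1 : e ≤ ((J t).mulVec (x t) + C t) i - ((J t).mulVec (y t) + C t) i := by
        rw [heq, hwt]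
        exact sub_le_sub_right (hdxle i) _
      have hle2 : ((J t).mulVec (x t) + C t) i - ((J t).mulVec (y t) + C t) i
          = ∑ j, J t i j * z t j := by
        have hc1 : ((J t).mulVec (x t) + C t) i = (∑ j, J t i j * x t j) + C t i := rfl
        have hc2 : ((J t).mulVec (y t) + C t) i = (∑ j, J t i j * y t j) + C t i := rfl
        rw [hc1, hc2]
        rw [add_sub_add_right_eq_sub, ← Finset.sum_sub_distrib]
        apply Finset.sum_congr rfl
        intro j _
        simp only [hz]
        ring
      have hterm : ∀ j, J t i j * z t j ≤ K * p t := by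
        intro j
        have hK1 := hKb t htIcc i j
        rcases eq_or_ne j i with rfl | hne
        · rw [hzi]
          exact mul_le_mul_of_nonneg_right ((le_abs_self _).trans hK1) (hp0 t)
        · have hJ0 : 0 ≤ J t i j := hJoff t htIcc i j (Ne.symm hne)
          have hJK : J t i j ≤ K := (le_abs_self _).trans hK1
          calc J t i j * z t j ≤ J t i j * p t :=
                mul_le_mul_of_nonneg_left (hpz t j) hJ0
            _ ≤ K * p t := mul_le_mul_of_nonneg_right hJK (hp0 t)
      calc e ≤ ∑ j, J t i j * z t j := le_of_le_of_eq hle1 hle2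
        _ ≤ ∑ _j : Fin n, K * p t := Finset.sum_le_sum fun j _ => hterm j
        _ = L * p t := by
            rw [Finset.sum_const, Finset.card_univ, Fintype.card_fin, nsmul_eq_mul, hL]
            ring
  -- conclude p ≤ G via the core lemma
  have hple : ∀ t ∈ Icc (0:ℝ) T, p t ≤ G t := by
    intro t ht
    have h1 := nonincreasing_of_AC hhAC hmain 0 ⟨le_rfl, hT.le⟩ t ht ht.1
    have hG0 : G 0 = 0 := by simp only [hG]; exact intervalIntegral.integral_same
    rw [hG0, hp00] at h1
    linarith
  -- Gronwall: G = 0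
  have hGron : ∀ t ∈ Icc (0:ℝ) T, ‖G t‖ ≤ 0 := by
    intro t ht
    have hb : ∀ u ∈ Ico (0:ℝ) T, ‖gbar u‖ ≤ L * ‖G u‖ + 0 := by
      intro u hu
      have huIcc : u ∈ Icc (0:ℝ) T := ⟨hu.1, hu.2.le⟩
      have hgu : gbar u = L * p u := indicator_of_mem huIcc _
      have hGnn : 0 ≤ G u := intervalIntegral.integral_nonneg hu.1 (fun s _ => hgnn s)
      rw [hgu, Real.norm_eq_abs, Real.norm_eq_abs, abs_of_nonneg (mul_nonneg hLnn (hp0 u)),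
        abs_of_nonneg hGnn, add_zero]
      exact mul_le_mul_of_nonneg_left (hple u huIcc) hLnn
    have := norm_le_gronwallBound_of_norm_deriv_right_le (f := G) (f' := gbar)
      (δ := 0) (K := L) (ε := 0) (a := 0) (b := T) hGcont.continuousOn hGdR
      (by simp only [hG]; simp [intervalIntegral.integral_same]) hb t ht
    rwa [gronwallBound_ε0_δ0] at this
  intro t ht i
  have h1 : z t i ≤ p t := hpz t i
  have h2 : p t ≤ G t := hple t ht
  have h3 : G t ≤ 0 := by
    have := hGron t ht
    rw [Real.norm_eq_abs] at this
    linarith [le_abs_self (G t)]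
  simp only [hz] at h1
  linarith
end

section
/- Let J : [0,T] → ℝ^{n×n} be bounded measurable with nonnegative off-diagonal entries, C bounded measurable, and let Λ be a diagonal matrix with Λ_{ii} + J_{ii}(t) ≥ 0 for all i and t; set B(t) = Λ + J(t), so B(t) has all entries nonnegative. If x is absolutely continuous with x'(t) ≤ J(t)x(t) + C(t) componentwise a.e., then x satisfies the integral inequality x(t) ≤ e^{−Λt}x(0) + ∫₀ᵗ e^{−Λ(t−s)}(B(s)x(s) + C(s)) ds componentwise for all t ∈ [0,T]. -/
open Set MeasureTheory

open Filter
open scoped ENNReal NNReal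

theorem core_ftc {g φ : ℝ → ℝ} {a b : ℝ} (hab : a ≤ b)
    (hcont : ContinuousOn g (Icc a b))
    (hAC : ∀ ε > 0, ∃ δ > 0, ∀ (N : ℕ) (c d : Fin N → ℝ),
      (∀ i, a ≤ c i ∧ c i ≤ d i ∧ d i ≤ b) →
      (Pairwise fun i j => Disjoint (Set.Ioo (c i) (d i)) (Set.Ioo (c j) (d j))) →
      (∑ i, (d i - c i)) < δ → (∑ i, |g (d i) - g (c i)|) < ε)
    (φint : IntegrableOn φ (Icc a b))
    (hderiv : ∀ᵐ t ∂(volume.restrict (Ioo a b)),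
      ∃ d, HasDerivWithinAt g d (Ioi t) t ∧ d ≤ φ t) :
    g b - g a ≤ ∫ y in a..b, φ y := by
  rcases eq_or_lt_of_le hab with rfl | hab'
  · simp
  refine le_of_forall_pos_le_add fun ε εpos => ?_
  have ε3 : (0:ℝ) < ε / 3 := by linarith
  rcases exists_lt_lowerSemicontinuous_integral_lt φ φint ε3 with
    ⟨G', φ_lt_G', G'cont, G'int, G'lt_top, hG'⟩
  have G'int' : IntegrableOn (fun u => (G' u).toReal) (Icc a b) := G'int
  set F : ℝ → ℝ := fun t => ∫ u in a..t, (G' u).toReal with hF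
  have G'intOn : ∀ c d : ℝ, a ≤ c → c ≤ d → d ≤ b →
      IntervalIntegrable (fun u => (G' u).toReal) volume c d := by
    intro c d h1 h2 h3
    rw [intervalIntegrable_iff_integrableOn_Ioc_of_le h2]
    exact G'int'.mono_set fun u hu => ⟨h1.trans hu.1.le, hu.2.trans h3⟩
  have Fcont : ContinuousOn F (Icc a b) := by
    rw [← uIcc_of_le hab]
    exact intervalIntegral.continuousOn_primitive_interval (by rwa [uIcc_of_le hab])
  have Fadd : ∀ c d : ℝ, a ≤ c → c ≤ d → d ≤ b →
      F d = F c + ∫ u in c..d, (G' u).toReal := by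
    intro c d h1 h2 h3
    rw [hF]
    simp only []
    rw [← intervalIntegral.integral_add_adjacent_intervals
      (G'intOn a c le_rfl h1 (h2.trans h3)) (G'intOn c d h1 h2 h3)]
  -- null set where the derivative hypothesis fails
  set N : Set ℝ := {t | ¬ ∃ d, HasDerivWithinAt g d (Ioi t) t ∧ d ≤ φ t} ∩ Ioo a b with hNdef
  have hNnull : volume N = 0 := by
    have h := hderiv
    rw [ae_iff, Measure.restrict_apply' measurableSet_Ioo] at h
    exact h
  obtain ⟨δ₁, δ₁pos, hδ₁⟩ := hAC (ε / 3) ε3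
  -- weight for the integral budget
  set w : ℝ → ℝ≥0∞ := (Icc a b).indicator (fun v => (‖(G' v).toReal‖₊ : ℝ≥0∞)) with hw
  have wfin : ∫⁻ u, w u ≠ ⊤ := by
    rw [hw, lintegral_indicator measurableSet_Icc (fun v => (‖(G' v).toReal‖₊ : ℝ≥0∞))]
    exact G'int.2.ne
  obtain ⟨δ₂', δ₂'pos, hδ₂'⟩ := exists_pos_setLIntegral_lt_of_measure_lt wfin
    (ne_of_gt (ENNReal.ofReal_pos.2 ε3))
  set δ₂ : ℝ := (min 1 δ₂').toReal with hδ₂def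
  have hmin_ne_top : min 1 δ₂' ≠ ⊤ := ne_top_of_le_ne_top ENNReal.one_ne_top (min_le_left _ _)
  have δ₂pos : 0 < δ₂ := ENNReal.toReal_pos (lt_min one_pos δ₂'pos).ne' hmin_ne_top
  have hδ₂ : ∀ S : Set ℝ, volume S < ENNReal.ofReal δ₂ →
      ∫⁻ u in S, w u < ENNReal.ofReal (ε/3) := by
    intro S hS
    apply hδ₂'
    refine hS.trans_le ?_
    rw [hδ₂def, ENNReal.ofReal_toReal hmin_ne_top]
    exact min_le_right _ _
  set δ₀ := min δ₁ δ₂ with hδ₀def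
  have δ₀pos : 0 < δ₀ := lt_min δ₁pos δ₂pos
  -- an open set U of measure < δ₀ containing N and a
  obtain ⟨U₀, hU₀N, hU₀open, hU₀vol⟩ :=
    N.exists_isOpen_lt_of_lt (ENNReal.ofReal (δ₀/2))
      (by rw [hNnull]; exact ENNReal.ofReal_pos.2 (by linarith))
  set U : Set ℝ := U₀ ∪ Ioo (a - δ₀/8) (a + δ₀/8) with hUdef
  have hUopen : IsOpen U := hU₀open.union isOpen_Ioo
  have haU : a ∈ U := Or.inr ⟨by linarith, by linarith⟩
  have hNU : N ⊆ U := hU₀N.trans subset_union_left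
  have hUvol : volume U < ENNReal.ofReal δ₀ := by
    calc volume U ≤ volume U₀ + volume (Ioo (a - δ₀/8) (a + δ₀/8)) := measure_union_le _ _
    _ < ENNReal.ofReal (δ₀/2) + ENNReal.ofReal (δ₀/4) := by
        rw [Real.volume_Ioo, show a + δ₀/8 - (a - δ₀/8) = δ₀/4 by ring]
        exact ENNReal.add_lt_add_right ENNReal.ofReal_ne_top hU₀vol
    _ ≤ ENNReal.ofReal δ₀ := by
        rw [← ENNReal.ofReal_add (by linarith) (by linarith)]
        exact ENNReal.ofReal_le_ofReal (by linarith)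
  -- key bound for families of intervals inside U
  have key : ∀ t, t ≤ b → ∀ (M : ℕ) (c d : Fin M → ℝ),
      (∀ i, a ≤ c i ∧ c i ≤ d i ∧ d i ≤ t) →
      (∀ i, Ioo (c i) (d i) ⊆ U) →
      (Pairwise fun i j => Disjoint (Ioo (c i) (d i)) (Ioo (c j) (d j))) →
      (∑ i, (g (d i) - g (c i) - ∫ u in (c i)..(d i), (G' u).toReal)) ≤ ε/3 + ε/3 := by
    intro t htb M c d hcd hsubU hdisj
    have hcd' : ∀ i, a ≤ c i ∧ c i ≤ d i ∧ d i ≤ b :=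
      fun i => ⟨(hcd i).1, (hcd i).2.1, (hcd i).2.2.trans htb⟩
    have hnn : ∀ i, (0:ℝ) ≤ d i - c i := fun i => sub_nonneg.2 (hcd' i).2.1
    have hdisj' : Pairwise (Function.onFun Disjoint fun i => Ioo (c i) (d i)) := hdisj
    have hsumvol : ENNReal.ofReal (∑ i, (d i - c i)) = volume (⋃ i, Ioo (c i) (d i)) := by
      rw [measure_iUnion hdisj' (fun i => measurableSet_Ioo), tsum_fintype,
        ENNReal.ofReal_sum_of_nonneg (fun i _ => hnn i)]
      exact Finset.sum_congr rfl fun i _ => by rw [Real.volume_Ioo]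
    have hlen : (∑ i, (d i - c i)) < δ₀ := by
      have hv : volume (⋃ i, Ioo (c i) (d i)) ≤ volume U := measure_mono (iUnion_subset hsubU)
      have h2 := lt_of_le_of_lt (hsumvol ▸ hv) hUvol
      exact (ENNReal.ofReal_lt_ofReal_iff_of_nonneg (Finset.sum_nonneg fun i _ => hnn i)).1 h2
    have part1 : (∑ i, (g (d i) - g (c i))) ≤ ε/3 := by
      calc ∑ i, (g (d i) - g (c i)) ≤ ∑ i, |g (d i) - g (c i)| :=
            Finset.sum_le_sum fun i _ => le_abs_self _
      _ ≤ ε/3 := (hδ₁ M c d hcd' hdisj (hlen.trans_le (min_le_left _ _))).le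
    have hIocDisj : Pairwise (Function.onFun Disjoint fun i => Ioc (c i) (d i)) := by
      intro i j hij
      have h := hdisj hij
      refine Set.disjoint_left.2 fun u hui huj => ?_
      obtain ⟨v, hv1, hv2⟩ := exists_between (show max (c i) (c j) < u from max_lt hui.1 huj.1)
      have hvmem : v ∈ Ioo (c i) (d i) ∩ Ioo (c j) (d j) :=
        ⟨⟨(le_max_left _ _).trans_lt hv1, hv2.trans_le hui.2⟩,
         ⟨(le_max_right _ _).trans_lt hv1, hv2.trans_le huj.2⟩⟩
      exact (Set.disjoint_left.1 h hvmem.1) hvmem.2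
    have hIocIcc : ∀ i, Ioc (c i) (d i) ⊆ Icc a b :=
      fun i u hu => ⟨(hcd' i).1.trans hu.1.le, hu.2.trans (hcd' i).2.2⟩
    have hwfin : ∀ i, (∫⁻ u in Ioc (c i) (d i), w u) ≠ ⊤ := by
      intro i
      refine ne_top_of_le_ne_top wfin ?_
      exact (setLIntegral_le_lintegral _ _)
    have hterm : ∀ i, -(∫ u in (c i)..(d i), (G' u).toReal) ≤
        (∫⁻ u in Ioc (c i) (d i), w u).toReal := by
      intro i
      rw [intervalIntegral.integral_of_le (hcd' i).2.1]
      have hmeas : AEStronglyMeasurable (fun u => (G' u).toReal)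
          (volume.restrict (Ioc (c i) (d i))) :=
        G'int.aestronglyMeasurable.mono_measure (Measure.restrict_mono (hIocIcc i) le_rfl)
      have h1 : -(∫ u in Ioc (c i) (d i), (G' u).toReal) ≤
          ∫ u in Ioc (c i) (d i), ‖(G' u).toReal‖ := by
        refine (neg_le_abs _).trans ?_
        rw [← Real.norm_eq_abs]
        exact norm_integral_le_integral_norm _
      have h2 : ∫ u in Ioc (c i) (d i), ‖(G' u).toReal‖ =
          (∫⁻ u in Ioc (c i) (d i), w u).toReal := by
        rw [integral_norm_eq_lintegral_enorm hmeas]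
        congr 1
        refine setLIntegral_congr_fun measurableSet_Ioc (fun u hu => ?_)
        rw [hw, indicator_of_mem (hIocIcc i hu), enorm_eq_nnnorm]
      linarith [h1, h2]
    have hvol2 : volume (⋃ i, Ioc (c i) (d i)) < ENNReal.ofReal δ₂ := by
      calc volume (⋃ i, Ioc (c i) (d i)) ≤ ∑ i, volume (Ioc (c i) (d i)) := by
            refine (measure_iUnion_le _).trans ?_
            rw [tsum_fintype]
      _ = ENNReal.ofReal (∑ i, (d i - c i)) := by
            rw [ENNReal.ofReal_sum_of_nonneg (fun i _ => hnn i)]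
            exact Finset.sum_congr rfl fun i _ => by rw [Real.volume_Ioc]
      _ < ENNReal.ofReal δ₂ :=
            (ENNReal.ofReal_lt_ofReal_iff δ₂pos).2 (hlen.trans_le (min_le_right _ _))
    have part2 : (∑ i, -(∫ u in (c i)..(d i), (G' u).toReal)) ≤ ε/3 := by
      calc ∑ i, -(∫ u in (c i)..(d i), (G' u).toReal)
          ≤ ∑ i, (∫⁻ u in Ioc (c i) (d i), w u).toReal :=
            Finset.sum_le_sum fun i _ => hterm i
      _ = (∑ i, ∫⁻ u in Ioc (c i) (d i), w u).toReal :=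
            (ENNReal.toReal_sum fun i _ => hwfin i).symm
      _ = (∫⁻ u in ⋃ i, Ioc (c i) (d i), w u).toReal := by
            rw [lintegral_iUnion (fun i => measurableSet_Ioc) hIocDisj, tsum_fintype]
      _ ≤ (ENNReal.ofReal (ε/3)).toReal := by
            refine ENNReal.toReal_mono ENNReal.ofReal_ne_top ?_
            exact (hδ₂ _ hvol2).le
      _ = ε/3 := ENNReal.toReal_ofReal ε3.le
    calc ∑ i, (g (d i) - g (c i) - ∫ u in (c i)..(d i), (G' u).toReal)
        = (∑ i, (g (d i) - g (c i))) + ∑ i, -(∫ u in (c i)..(d i), (G' u).toReal) := by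
          rw [← Finset.sum_add_distrib]
          exact Finset.sum_congr rfl fun i _ => by ring
    _ ≤ ε/3 + ε/3 := add_le_add part1 part2
  -- budget function
  set A : ℝ → Set ℝ := fun t => {z | ∃ (M : ℕ) (c d : Fin M → ℝ),
      (∀ i, a ≤ c i ∧ c i ≤ d i ∧ d i ≤ t) ∧ (∀ i, Ioo (c i) (d i) ⊆ U) ∧
      (Pairwise fun i j => Disjoint (Ioo (c i) (d i)) (Ioo (c j) (d j))) ∧
      z = ∑ i, (g (d i) - g (c i) - ∫ u in (c i)..(d i), (G' u).toReal)} with hAdef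
  have hA0 : ∀ t, (0:ℝ) ∈ A t := by
    intro t
    refine ⟨0, (fun i => i.elim0), (fun i => i.elim0), fun i => i.elim0, fun i => i.elim0,
      fun i => i.elim0, by simp⟩
  have hAmono : ∀ {t u : ℝ}, t ≤ u → A t ⊆ A u := by
    intro t u htu z hz
    obtain ⟨M, c, d, h1, h2, h3, h4⟩ := hz
    exact ⟨M, c, d, fun i => ⟨(h1 i).1, (h1 i).2.1, (h1 i).2.2.trans htu⟩, h2, h3, h4⟩
  have hAbdd : ∀ t, t ≤ b → ∀ z ∈ A t, z ≤ ε/3 + ε/3 := by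
    intro t htb z hz
    obtain ⟨M, c, d, h1, h2, h3, h4⟩ := hz
    rw [h4]
    exact key t htb M c d h1 h2 h3
  set β : ℝ → ℝ := fun t => sSup (A t) with hβdef
  have hAne : ∀ t, (A t).Nonempty := fun t => ⟨0, hA0 t⟩
  have hAbddAbove : ∀ t, t ≤ b → BddAbove (A t) := fun t htb => ⟨ε/3 + ε/3, fun z hz => hAbdd t htb z hz⟩
  have hβ0 : ∀ t, t ≤ b → 0 ≤ β t := fun t htb => le_csSup (hAbddAbove t htb) (hA0 t)
  have hβb : ∀ t, t ≤ b → β t ≤ ε/3 + ε/3 := fun t htb => csSup_le (hAne t) (hAbdd t htb)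
  have hβmono : ∀ t u : ℝ, t ≤ u → u ≤ b → β t ≤ β u :=
    fun t u htu hub => csSup_le_csSup (hAbddAbove u hub) (hAne t) (hAmono htu)
  have hβadd : ∀ t u : ℝ, a ≤ t → t ≤ u → u ≤ b → Ioo t u ⊆ U →
      g u - g t - (∫ v in t..u, (G' v).toReal) + β t ≤ β u := by
    intro t u hat htu hub hIU
    have hstep : ∀ z ∈ A t, z + (g u - g t - ∫ v in t..u, (G' v).toReal) ∈ A u := by
      intro z hz
      obtain ⟨M, c, d, h1, h2, h3, h4⟩ := hz
      refine ⟨M+1, Fin.snoc c t, Fin.snoc d u, ?_, ?_, ?_, ?_⟩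
      · intro i
        refine Fin.lastCases ?_ (fun i => ?_) i
        · simp only [Fin.snoc_last]
          exact ⟨hat, htu, le_rfl⟩
        · simp only [Fin.snoc_castSucc]
          exact ⟨(h1 i).1, (h1 i).2.1, (h1 i).2.2.trans htu⟩
      · intro i
        refine Fin.lastCases ?_ (fun i => ?_) i
        · simp only [Fin.snoc_last]; exact hIU
        · simp only [Fin.snoc_castSucc]; exact h2 i
      · intro i j hij
        have hdisj2 : ∀ k : Fin M, Disjoint (Ioo (c k) (d k)) (Ioo t u) := by
          intro k
          refine Disjoint.mono ?_ ?_ (Iio_disjoint_Ici (le_refl t))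
          · exact fun v hv => lt_of_lt_of_le hv.2 (h1 k).2.2
          · exact fun v hv => hv.1.le
        rcases Fin.eq_castSucc_or_eq_last i with ⟨i', rfl⟩ | rfl <;>
          rcases Fin.eq_castSucc_or_eq_last j with ⟨j', rfl⟩ | rfl
        · simp only [Fin.snoc_castSucc]
          exact h3 (fun hc => hij (by rw [hc]))
        · simp only [Fin.snoc_castSucc, Fin.snoc_last]
          exact hdisj2 i'
        · simp only [Fin.snoc_castSucc, Fin.snoc_last]
          exact (hdisj2 j').symm
        · exact absurd rfl hij
      · rw [h4, Fin.sum_univ_castSucc]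
        simp only [Fin.snoc_castSucc, Fin.snoc_last]
    have h2 : ∀ z ∈ A t, z ≤ β u - (g u - g t - ∫ v in t..u, (G' v).toReal) := by
      intro z hz
      have := le_csSup (hAbddAbove u hub) (hstep z hz)
      linarith
    have h3 : β t ≤ β u - (g u - g t - ∫ v in t..u, (G' v).toReal) := csSup_le (hAne t) h2
    linarith
  -- real induction
  set S : Set ℝ := {t | t ∈ Icc a b ∧ g t - g a ≤ F t + β t} with hSdef
  have hSa : a ∈ S := by
    refine ⟨⟨le_rfl, hab⟩, ?_⟩
    have : F a = 0 := by simp [hF]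
    rw [this]
    have := hβ0 a hab
    linarith
  have hSne : S.Nonempty := ⟨a, hSa⟩
  have hSbdd : BddAbove S := ⟨b, fun t ht => ht.1.2⟩
  set m := sSup S with hmdef
  have ham : a ≤ m := le_csSup hSbdd hSa
  have hmb : m ≤ b := csSup_le hSne fun t ht => ht.1.2
  have hmS : m ∈ S := by
    have hclosure : m ∈ closure S := csSup_mem_closure hSne hSbdd
    have hQclosed : IsClosed {t | t ∈ Icc a b ∧ g t - g a - F t ≤ β m} := by
      have hc : ContinuousOn (fun t => g t - g a - F t) (Icc a b) :=
        (hcont.sub continuousOn_const).sub Fcont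
      exact hc.preimage_isClosed_of_isClosed isClosed_Icc (isClosed_Iic (a := β m))
    have hsub : S ⊆ {t | t ∈ Icc a b ∧ g t - g a - F t ≤ β m} := by
      intro t ht
      have htm : t ≤ m := le_csSup hSbdd ht
      have := hβmono t m htm hmb
      exact ⟨ht.1, by linarith [ht.2]⟩
    have hmmem := (hQclosed.closure_subset_iff.2 hsub) hclosure
    exact ⟨hmmem.1, by linarith [hmmem.2]⟩
  -- m = b
  have hmeq : m = b := by
    by_contra hne
    have hmb' : m < b := lt_of_le_of_ne hmb hne
    have hexists : ∃ u, u ∈ S ∧ m < u := by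
      by_cases hmU : m ∈ U
      · obtain ⟨r, rpos, hball⟩ := Metric.isOpen_iff.1 hUopen m hmU
        set u := min (m + r/2) b with hudef
        have hmu : m < u := lt_min (by linarith) hmb'
        have hub : u ≤ b := min_le_right _ _
        have hIoo : Ioo m u ⊆ U := by
          intro v hv
          apply hball
          rw [Real.ball_eq_Ioo]
          constructor
          · linarith [hv.1]
          · have := hv.2.trans_le (min_le_left _ _); linarith
        have hFu : F u = F m + ∫ v in m..u, (G' v).toReal := Fadd m u ham hmu.le hub
        have hadd := hβadd m u ham hmu.le hub hIoo
        refine ⟨u, ⟨⟨ham.trans hmu.le, hub⟩, ?_⟩, hmu⟩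
        have h1 := hmS.2
        rw [hFu]
        linarith
      · -- m is a point where g has a right derivative ≤ φ m
        have hma : a < m := by
          rcases eq_or_lt_of_le ham with h | h
          · exact absurd (h ▸ haU) hmU
          · exact h
        have hmE : ∃ dm, HasDerivWithinAt g dm (Ioi m) m ∧ dm ≤ φ m := by
          by_contra hcon
          exact hmU (hNU ⟨hcon, hma, hmb'⟩)
        obtain ⟨dm, hdm, hdmφ⟩ := hmE
        obtain ⟨y, hy1, hy2⟩ : ∃ y : ℝ, (dm : EReal) < y ∧ (y : EReal) < G' m :=
          EReal.lt_iff_exists_real_btwn.1 ((EReal.coe_le_coe_iff.2 hdmφ).trans_lt (φ_lt_G' m))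
        have I1 : ∀ᶠ u in nhdsWithin m (Ioi m), (u - m) * y ≤ ∫ w in m..u, (G' w).toReal := by
          have B : ∀ᶠ u in nhds m, (y : EReal) < G' u := G'cont.lowerSemicontinuousAt _ _ hy2
          rcases mem_nhds_iff_exists_Ioo_subset.1 B with ⟨m', M', ⟨hm', hM'⟩, H⟩
          have hIoo : Ioo m (min M' b) ∈ nhdsWithin m (Ioi m) :=
            Ioo_mem_nhdsGT (lt_min hM' hmb')
          filter_upwards [hIoo] with u hu
          have I : Icc m u ⊆ Icc a b :=
            Icc_subset_Icc ham (hu.2.le.trans (min_le_right _ _))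
          calc (u - m) * y = ∫ _ in Icc m u, y := by
                simp only [hu.left.le, MeasureTheory.integral_const, smul_eq_mul, sub_nonneg, Measure.real,
                  MeasurableSet.univ, Real.volume_Icc, Measure.restrict_apply, univ_inter,
                  ENNReal.toReal_ofReal]
          _ ≤ ∫ w in m..u, (G' w).toReal := by
                rw [intervalIntegral.integral_of_le hu.1.le, ← integral_Icc_eq_integral_Ioc]
                apply setIntegral_mono_ae_restrict
                · exact integrableOn_const measure_Icc_lt_top.ne
                · exact IntegrableOn.mono_set G'int' I
                · have C1 : ∀ᵐ x : ℝ ∂volume.restrict (Icc m u), G' x < ⊤ :=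
                    ae_mono (Measure.restrict_mono I le_rfl) G'lt_top
                  have C2 : ∀ᵐ x : ℝ ∂volume.restrict (Icc m u), x ∈ Icc m u :=
                    ae_restrict_mem measurableSet_Icc
                  filter_upwards [C1, C2] with x G'x hx
                  apply EReal.coe_le_coe_iff.1
                  have hxIoo : x ∈ Ioo m' M' := by
                    constructor
                    · exact hm'.trans_le hx.1
                    · exact (hx.2.trans_lt hu.2).trans_le (min_le_left M' b)
                  refine (H hxIoo).out.le.trans_eq ?_
                  exact (EReal.coe_toReal G'x.ne (φ_lt_G' x).ne_bot).symm
        have I2 : ∀ᶠ u in nhdsWithin m (Ioi m), g u - g m ≤ (u - m) * y := by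
          have hy1' : dm < y := EReal.coe_lt_coe_iff.1 hy1
          filter_upwards [hdm.limsup_slope_le' (notMem_Ioi.2 le_rfl) hy1',
            self_mem_nhdsWithin] with u hu hmu
          have := mul_le_mul_of_nonneg_left hu.le (sub_pos.2 (mem_Ioi.1 hmu)).le
          rwa [← smul_eq_mul, sub_smul_slope] at this
        have I4 : ∀ᶠ u in nhdsWithin m (Ioi m), u ∈ Ioc m b :=
          Ioc_mem_nhdsGT_of_mem ⟨le_rfl, hmb'⟩
        obtain ⟨u, hu1, hu2, hu3⟩ := (I1.and (I2.and I4)).exists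
        have hub : u ≤ b := hu3.2
        have hmu : m < u := hu3.1
        have hFu : F u = F m + ∫ v in m..u, (G' v).toReal := Fadd m u ham hmu.le hub
        refine ⟨u, ⟨⟨ham.trans hmu.le, hub⟩, ?_⟩, hmu⟩
        have h1 := hmS.2
        have h2 : β m ≤ β u := hβmono m u hmu.le hub
        have h3 : g u - g m ≤ ∫ v in m..u, (G' v).toReal := hu2.trans hu1
        rw [hFu]
        linarith
    obtain ⟨u, huS, hmu⟩ := hexists
    exact absurd (le_csSup hSbdd huS) (not_le.2 hmu)
  -- conclude
  have hbS : b ∈ S := hmeq ▸ hmS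
  have hFb : F b ≤ (∫ y in a..b, φ y) + ε/3 := by
    have h1 : F b = ∫ x in Icc a b, (G' x).toReal := by
      rw [hF]
      simp only []
      rw [intervalIntegral.integral_of_le hab, integral_Icc_eq_integral_Ioc]
    have h2 : (∫ y in a..b, φ y) = ∫ x in Icc a b, φ x := by
      rw [intervalIntegral.integral_of_le hab, integral_Icc_eq_integral_Ioc]
    rw [h1, h2]
    exact hG'.le
  have := hbS.2
  have := hβb b le_rfl
  linarith


lemma abs_exp_sub_exp_le {p q A : ℝ} (hp : |p| ≤ A) (hq : |q| ≤ A) :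
    |Real.exp p - Real.exp q| ≤ Real.exp A * |p - q| := by
  wlog h : q ≤ p generalizing p q
  · rw [abs_sub_comm, abs_sub_comm p q]
    exact this hq hp (le_of_not_ge h)
  have h1 : Real.exp p - Real.exp q ≤ (p - q) * Real.exp p := by
    have h2 : Real.exp p * ((q - p) + 1) ≤ Real.exp p * Real.exp (q - p) :=
      mul_le_mul_of_nonneg_left (Real.add_one_le_exp _) (Real.exp_pos p).le
    rw [← Real.exp_add] at h2
    rw [show p + (q - p) = q by ring] at h2
    nlinarith [Real.exp_pos p]
  have h3 : Real.exp p ≤ Real.exp A := Real.exp_le_exp.2 ((le_abs_self p).trans hp)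
  have h4 : 0 ≤ Real.exp p - Real.exp q := sub_nonneg.2 (Real.exp_le_exp.2 h)
  rw [abs_of_nonneg h4, abs_of_nonneg (sub_nonneg.2 h)]
  nlinarith [Real.exp_pos p]

lemma continuousOn_of_ac {E : Type*} [NormedAddCommGroup E] {f : ℝ → E} {a b : ℝ}
    (hf : AbsolutelyContinuousOn f a b) : ContinuousOn f (Icc a b) := by
  rw [Metric.continuousOn_iff]
  intro s hs ε εpos
  obtain ⟨δ, δpos, hδ⟩ := hf ε εpos
  refine ⟨δ, δpos, fun u hu hdist => ?_⟩
  have h := hδ 1 (fun _ => min u s) (fun _ => max u s)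
    (fun _ => ⟨le_min hu.1 hs.1, min_le_max, max_le hu.2 hs.2⟩)
    (fun i j hij => absurd (Subsingleton.elim i j) hij)
    (by rw [Fin.sum_univ_one, max_sub_min_eq_abs, ← Real.dist_eq]
        first
        | exact hdist
        | (rw [dist_comm]; exact hdist))
  rw [Fin.sum_univ_one] at h
  rw [dist_eq_norm]
  rcases le_total u s with h' | h'
  · rw [min_eq_left h', max_eq_right h'] at h
    rwa [norm_sub_rev]
  · rwa [min_eq_right h', max_eq_left h'] at h

lemma bv_of_ac {n : ℕ} {x : ℝ → Fin n → ℝ} {T : ℝ} (hT : 0 < T)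
    (hxAC : AbsolutelyContinuousOn x 0 T) : BoundedVariationOn x (Icc 0 T) := by
  obtain ⟨δ, δpos, hδ⟩ := hxAC 1 one_pos
  have piece : ∀ p q : ℝ, 0 ≤ p → p ≤ q → q ≤ T → q - p < δ →
      eVariationOn x (Icc p q) ≤ 1 := by
    intro p q hp hpq hqT hlt
    apply iSup_le
    rintro ⟨M, u, hu, us⟩
    have key := hδ M (fun i : Fin M => u i) (fun i : Fin M => u ((i : ℕ) + 1))
      (fun i => ⟨hp.trans (us i).1, hu (Nat.le_succ _), (us ((i : ℕ) + 1)).2.trans hqT⟩)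
      ?_ ?_
    · have h1 : ∑ i ∈ Finset.range M, edist (x (u (i + 1))) (x (u i))
          = ENNReal.ofReal (∑ i : Fin M, ‖x (u ((i : ℕ) + 1)) - x (u i)‖) := by
        rw [ENNReal.ofReal_sum_of_nonneg (fun i _ => norm_nonneg _)]
        rw [Fin.sum_univ_eq_sum_range (fun i => ENNReal.ofReal ‖x (u (i + 1)) - x (u i)‖)]
        exact Finset.sum_congr rfl fun i _ => by rw [edist_dist, dist_eq_norm]
      rw [h1]
      calc ENNReal.ofReal (∑ i : Fin M, ‖x (u ((i : ℕ) + 1)) - x (u i)‖)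
          ≤ ENNReal.ofReal 1 := ENNReal.ofReal_le_ofReal key.le
      _ = 1 := by simp
    · intro i j hij
      have hij' : (i : ℕ) ≠ (j : ℕ) := fun hc => hij (Fin.ext hc)
      rcases hij'.lt_or_gt with hlt' | hlt'
      · refine Set.disjoint_left.2 fun v hv1 hv2 => ?_
        have : u ((i : ℕ) + 1) ≤ u j := hu hlt'
        exact absurd (hv1.2.trans_le (this.trans hv2.1.le)) (lt_irrefl v)
      · refine Set.disjoint_right.2 fun v hv2 hv1 => ?_
        have : u ((j : ℕ) + 1) ≤ u i := hu hlt'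
        exact absurd (hv2.2.trans_le (this.trans hv1.1.le)) (lt_irrefl v)
    · rw [Fin.sum_univ_eq_sum_range (fun i => u (i + 1) - u i), Finset.sum_range_sub u]
      have h1 : u M ≤ q := (us M).2
      have h2 : p ≤ u 0 := (us 0).1
      linarith
  obtain ⟨k, hk⟩ := exists_nat_gt (T / δ)
  have hk0 : 0 < (k : ℝ) := lt_of_le_of_lt (div_nonneg hT.le δpos.le) hk
  have hTk : T / k < δ := by
    rw [div_lt_iff₀ hk0]
    calc T = (T / δ) * δ := by field_simp
    _ < k * δ := by exact mul_lt_mul_of_pos_right hk δpos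
    _ = δ * k := mul_comm _ _
  have hstep : ∀ j : ℕ, j ≤ k → eVariationOn x (Icc 0 (j * (T / k))) ≤ j := by
    intro j
    induction j with
    | zero =>
      intro _
      simp only [Nat.cast_zero, zero_mul]
      rw [Set.Icc_self]
      rw [eVariationOn.subsingleton x (Set.subsingleton_singleton)]
    | succ j ih =>
      intro hjk
      have hj := ih (Nat.le_of_succ_le hjk)
      have hTk0 : 0 ≤ T / k := div_nonneg hT.le hk0.le
      set p := (j : ℝ) * (T / k) with hpdef
      set q := ((j + 1 : ℕ) : ℝ) * (T / k) with hqdef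
      have hp0 : 0 ≤ p := by positivity
      have hqp : q - p = T / k := by rw [hpdef, hqdef]; push_cast; ring
      have hpq : p ≤ q := by linarith
      have hkT : (k : ℝ) * (T / k) = T := by field_simp
      have hqT : q ≤ T := by
        have hc : ((j + 1 : ℕ) : ℝ) ≤ (k : ℝ) := Nat.cast_le.2 hjk
        calc q ≤ (k : ℝ) * (T / k) := mul_le_mul_of_nonneg_right hc hTk0
        _ = T := hkT
      have h1 : Icc (0:ℝ) q ∩ Icc 0 p = Icc 0 p :=
        inter_eq_self_of_subset_right (Icc_subset_Icc le_rfl hpq)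
      have h2 : Icc (0:ℝ) q ∩ Icc p q = Icc p q :=
        inter_eq_self_of_subset_right (fun v hv => ⟨hp0.trans hv.1, hv.2⟩)
      have h3 : Icc (0:ℝ) q ∩ Icc 0 q = Icc 0 q := inter_self _
      have hsplit := eVariationOn.Icc_add_Icc x (s := Icc (0:ℝ) q) hp0 hpq ⟨hp0, hpq⟩
      rw [h1, h2, h3] at hsplit
      have hpiece := piece p q hp0 hpq hqT (by rw [hqp]; exact hTk)
      calc eVariationOn x (Icc 0 q) = eVariationOn x (Icc 0 p) + eVariationOn x (Icc p q) :=
            hsplit.symm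
      _ ≤ (j : ℝ≥0∞) + 1 := add_le_add hj hpiece
      _ = ((j + 1 : ℕ) : ℝ≥0∞) := by push_cast; ring
  have hfinal := hstep k le_rfl
  have hkT : (k : ℝ) * (T / k) = T := by field_simp
  rw [hkT] at hfinal
  exact ne_top_of_le_ne_top (ENNReal.natCast_ne_top k) hfinal


set_option maxHeartbeats 1000000 in
/-- If `J(t)` is bounded measurable with nonnegative off-diagonal entries, `Λ` is diagonal
(given by its diagonal entries) with `Λ_{ii} + J_{ii}(t) ≥ 0`, `B(t) = Λ + J(t)` (entrywise
nonnegative), and `x` is absolutely continuous with `x'(t) ≤ J(t)x(t) + C(t)` componentwise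
a.e., then `x(t) ≤ e^{-Λt}x(0) + ∫₀ᵗ e^{-Λ(t-s)}(B(s)x(s) + C(s)) ds` componentwise. -/
theorem integral_ineq_of_differential_ineq
    {n : ℕ} (T : ℝ) (hT : 0 < T)
    (J : ℝ → Matrix (Fin n) (Fin n) ℝ) (C : ℝ → Fin n → ℝ) (x : ℝ → Fin n → ℝ)
    (Λ : Fin n → ℝ)
    (B : ℝ → Matrix (Fin n) (Fin n) ℝ)
    (hB : ∀ t, B t = Matrix.diagonal Λ + J t)
    (hJmeas : AEStronglyMeasurable J (volume.restrict (Icc (0:ℝ) T)))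
    (hCmeas : AEStronglyMeasurable C (volume.restrict (Icc (0:ℝ) T)))
    (hJbd : ∃ M, ∀ t ∈ Icc (0:ℝ) T, ∀ i j, |J t i j| ≤ M)
    (hCbd : ∃ M, ∀ t ∈ Icc (0:ℝ) T, ‖C t‖ ≤ M)
    (hJoff : ∀ t ∈ Icc (0:ℝ) T, ∀ i j, i ≠ j → 0 ≤ J t i j)
    (hΛ : ∀ t ∈ Icc (0:ℝ) T, ∀ i, 0 ≤ Λ i + J t i i)
    (hxAC : AbsolutelyContinuousOn x 0 T)
    (hx' : ∀ᵐ t ∂(volume.restrict (Icc (0:ℝ) T)),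
      ∀ d : Fin n → ℝ, HasDerivWithinAt x d (Icc (0:ℝ) T) t →
        ∀ i, d i ≤ ((J t).mulVec (x t) + C t) i) :
    ∀ t ∈ Icc (0:ℝ) T, ∀ i, x t i ≤
      Real.exp (-Λ i * t) * x 0 i +
      ∫ s in (0:ℝ)..t,
        Real.exp (-Λ i * (t - s)) * (((B s).mulVec (x s)) i + C s i) := by
  obtain ⟨MJ, hMJ⟩ := hJbd
  obtain ⟨MC, hMC⟩ := hCbd
  have hT0 : (0:ℝ) ≤ T := hT.le
  have hxcont : ContinuousOn x (Icc 0 T) := continuousOn_of_ac hxAC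
  obtain ⟨Mx, hMx⟩ := isCompact_Icc.exists_bound_of_continuousOn hxcont
  have hMx0 : 0 ≤ Mx := (norm_nonneg (x 0)).trans (hMx 0 ⟨le_rfl, hT0⟩)
  have hbv : LocallyBoundedVariationOn x (Icc 0 T) :=
    (bv_of_ac hT hxAC).locallyBoundedVariationOn
  have hdiffae : ∀ᵐ s : ℝ, s ∈ Icc (0:ℝ) T → DifferentiableWithinAt ℝ x (Icc 0 T) s :=
    hbv.ae_differentiableWithinAt_of_mem_pi
  intro t ht i
  set L := Λ i with hLdef
  set Me := Real.exp (|L| * T) with hMedef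
  have hMepos : 0 < Me := Real.exp_pos _
  have habsLe : ∀ s ∈ Icc (0:ℝ) T, |L * s| ≤ |L| * T := by
    intro s hs
    rw [abs_mul]
    refine mul_le_mul_of_nonneg_left ?_ (abs_nonneg L)
    rw [abs_of_nonneg hs.1]
    exact hs.2
  have hMe1 : ∀ s ∈ Icc (0:ℝ) T, Real.exp (L * s) ≤ Me := by
    intro s hs
    exact Real.exp_le_exp.2 ((le_abs_self _).trans (habsLe s hs))
  set g : ℝ → ℝ := fun s => Real.exp (L * s) * x s i with hgdef
  set φ : ℝ → ℝ := fun s => Real.exp (L * s) * (((B s).mulVec (x s)) i + C s i) with hφdef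
  have h0t : (0:ℝ) ≤ t := ht.1
  have htT : t ≤ T := ht.2
  have hsub : Icc (0:ℝ) t ⊆ Icc 0 T := Icc_subset_Icc le_rfl htT
  have hgcont : ContinuousOn g (Icc 0 t) := by
    apply ContinuousOn.mul
    · exact (Real.continuous_exp.comp (continuous_const.mul continuous_id)).continuousOn
    · exact (continuous_apply i).comp_continuousOn (hxcont.mono hsub)
  -- absolute continuity of g
  have hgAC : ∀ ε > 0, ∃ δ > 0, ∀ (N : ℕ) (c d : Fin N → ℝ),
      (∀ k, 0 ≤ c k ∧ c k ≤ d k ∧ d k ≤ t) →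
      (Pairwise fun k l => Disjoint (Set.Ioo (c k) (d k)) (Set.Ioo (c l) (d l))) →
      (∑ k, (d k - c k)) < δ → (∑ k, |g (d k) - g (c k)|) < ε := by
    intro ε εpos
    set ε₁ := ε / (2 * (Me + 1)) with hε₁def
    have hε₁pos : 0 < ε₁ := by positivity
    obtain ⟨δ', δ'pos, hδ'⟩ := hxAC ε₁ hε₁pos
    set K := |L| * Me * (Mx + 1) with hKdef
    have hK0 : 0 ≤ K := by positivity
    set δ₂ := ε / (2 * (K + 1)) with hδ₂def
    have hδ₂pos : 0 < δ₂ := by positivity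
    refine ⟨min δ' δ₂, lt_min δ'pos hδ₂pos, ?_⟩
    intro N c d hcd hdisj hsum
    have hcd' : ∀ k, 0 ≤ c k ∧ c k ≤ d k ∧ d k ≤ T :=
      fun k => ⟨(hcd k).1, (hcd k).2.1, (hcd k).2.2.trans htT⟩
    have hnn : ∀ k, (0:ℝ) ≤ d k - c k := fun k => sub_nonneg.2 (hcd' k).2.1
    have hterm : ∀ k, |g (d k) - g (c k)| ≤
        Me * ‖x (d k) - x (c k)‖ + K * (d k - c k) := by
      intro k
      have hdmem : d k ∈ Icc (0:ℝ) T := ⟨(hcd' k).1.trans (hcd' k).2.1, (hcd' k).2.2⟩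
      have hcmem : c k ∈ Icc (0:ℝ) T := ⟨(hcd' k).1, (hcd' k).2.1.trans (hcd' k).2.2⟩
      have heq : g (d k) - g (c k) =
          Real.exp (L * d k) * (x (d k) i - x (c k) i)
          + (Real.exp (L * d k) - Real.exp (L * c k)) * x (c k) i := by
        rw [hgdef]; ring
      have h1 : |x (d k) i - x (c k) i| ≤ ‖x (d k) - x (c k)‖ := by
        have h := norm_le_pi_norm (x (d k) - x (c k)) i
        simpa [Real.norm_eq_abs] using h
      have h2 : |Real.exp (L * d k) - Real.exp (L * c k)| ≤ Me * (|L| * (d k - c k)) := by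
        have h := abs_exp_sub_exp_le (habsLe _ hdmem) (habsLe _ hcmem)
        rw [hMedef]
        refine h.trans ?_
        have : |L * d k - L * c k| = |L| * (d k - c k) := by
          rw [show L * d k - L * c k = L * (d k - c k) by ring, abs_mul,
            abs_of_nonneg (hnn k)]
        rw [this]
      have h3 : |x (c k) i| ≤ Mx := by
        have h := norm_le_pi_norm (x (c k)) i
        rw [Real.norm_eq_abs] at h
        exact h.trans (hMx _ hcmem)
      have h4 : |Real.exp (L * d k)| ≤ Me := by
        rw [abs_of_pos (Real.exp_pos _)]
        exact hMe1 _ hdmem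
      calc |g (d k) - g (c k)|
          ≤ |Real.exp (L * d k)| * |x (d k) i - x (c k) i|
            + |Real.exp (L * d k) - Real.exp (L * c k)| * |x (c k) i| := by
            rw [heq]
            refine (abs_add_le _ _).trans ?_
            rw [abs_mul, abs_mul]
      _ ≤ Me * ‖x (d k) - x (c k)‖ + (Me * (|L| * (d k - c k))) * Mx := by
            refine add_le_add ?_ ?_
            · exact mul_le_mul h4 h1 (abs_nonneg _) hMepos.le
            · refine mul_le_mul h2 h3 (abs_nonneg _) ?_
              have := abs_nonneg L
              have := hnn k
              nlinarith [hMepos]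
      _ ≤ Me * ‖x (d k) - x (c k)‖ + K * (d k - c k) := by
            refine add_le_add le_rfl ?_
            rw [hKdef]
            nlinarith [hnn k, abs_nonneg L, hMepos.le, hMx0]
    have hsum1 : (∑ k, ‖x (d k) - x (c k)‖) < ε₁ :=
      hδ' N c d hcd' hdisj (hsum.trans_le (min_le_left _ _))
    have hsum2 : (∑ k, (d k - c k)) < δ₂ := hsum.trans_le (min_le_right _ _)
    have hε₁eq : ε₁ * (2 * (Me + 1)) = ε := div_mul_cancel₀ _ (by positivity)
    have hδ₂eq : δ₂ * (2 * (K + 1)) = ε := div_mul_cancel₀ _ (by positivity)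
    calc (∑ k, |g (d k) - g (c k)|)
        ≤ ∑ k, (Me * ‖x (d k) - x (c k)‖ + K * (d k - c k)) :=
          Finset.sum_le_sum fun k _ => hterm k
    _ = Me * (∑ k, ‖x (d k) - x (c k)‖) + K * (∑ k, (d k - c k)) := by
          rw [Finset.sum_add_distrib, Finset.mul_sum, Finset.mul_sum]
    _ < ε := by
          have hA : Me * (∑ k, ‖x (d k) - x (c k)‖) < Me * ε₁ :=
            mul_lt_mul_of_pos_left hsum1 hMepos
          have hBB : K * (∑ k, (d k - c k)) ≤ K * δ₂ :=
            mul_le_mul_of_nonneg_left hsum2.le hK0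
          have hMeε₁ : Me * ε₁ ≤ ε / 2 := by nlinarith [hε₁pos.le]
          have hKδ₂ : K * δ₂ ≤ ε / 2 := by nlinarith [hδ₂pos.le]
          linarith
  -- measurability and integrability of φ
  have hJmeas' : ∀ p q : Fin n, AEStronglyMeasurable (fun s => J s p q)
      (volume.restrict (Icc (0:ℝ) T)) := by
    intro p q
    have hc : Continuous (fun M : Matrix (Fin n) (Fin n) ℝ => M p q) :=
      (continuous_apply q).comp (continuous_apply p)
    exact hc.comp_aestronglyMeasurable hJmeas
  have hxmeas : AEStronglyMeasurable x (volume.restrict (Icc (0:ℝ) T)) :=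
    hxcont.aestronglyMeasurable measurableSet_Icc
  have hmulVec : ∀ s, ((B s).mulVec (x s)) i = ∑ j, B s i j * x s j := by
    intro s
    simp [Matrix.mulVec, dotProduct]
  have hBx : AEStronglyMeasurable (fun s => ((B s).mulVec (x s)) i + C s i)
      (volume.restrict (Icc (0:ℝ) T)) := by
    apply AEStronglyMeasurable.add
    · have heq : (fun s => ((B s).mulVec (x s)) i) = fun s => ∑ j, B s i j * x s j := by
        funext s; exact hmulVec s
      rw [heq]
      apply Finset.aestronglyMeasurable_fun_sum
      intro j _
      apply AEStronglyMeasurable.mul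
      · have heq2 : (fun s => B s i j) = fun s => Matrix.diagonal Λ i j + J s i j := by
          funext s; rw [hB s]; rfl
        rw [heq2]
        exact aestronglyMeasurable_const.add (hJmeas' i j)
      · exact (continuous_apply j).comp_aestronglyMeasurable hxmeas
    · exact (continuous_apply i).comp_aestronglyMeasurable hCmeas
  have hφmeas : AEStronglyMeasurable φ (volume.restrict (Icc (0:ℝ) t)) := by
    have h1 : AEStronglyMeasurable φ (volume.restrict (Icc (0:ℝ) T)) := by
      apply AEStronglyMeasurable.mul
      · exact (Real.continuous_exp.comp (continuous_const.mul continuous_id)).aestronglyMeasurable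
      · exact hBx
    exact h1.mono_measure (Measure.restrict_mono hsub le_rfl)
  have hMJ0 : 0 ≤ MJ := (abs_nonneg _).trans (hMJ 0 ⟨le_rfl, hT0⟩ i i)
  have hMC0 : 0 ≤ MC := (norm_nonneg _).trans (hMC 0 ⟨le_rfl, hT0⟩)
  have hφbd : ∀ s ∈ Icc (0:ℝ) T, |φ s| ≤ Me * ((n * ((|L| + MJ) * Mx)) + MC) := by
    intro s hs
    rw [hφdef]
    simp only []
    rw [abs_mul]
    have h1 : |Real.exp (L * s)| ≤ Me := by
      rw [abs_of_pos (Real.exp_pos _)]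
      exact hMe1 s hs
    have h2 : |((B s).mulVec (x s)) i + C s i| ≤ (n * ((|L| + MJ) * Mx)) + MC := by
      refine (abs_add_le _ _).trans (add_le_add ?_ ?_)
      · rw [hmulVec s]
        refine (Finset.abs_sum_le_sum_abs _ _).trans ?_
        have hbound : ∀ j, |B s i j * x s j| ≤ (|L| + MJ) * Mx := by
          intro j
          rw [abs_mul]
          refine mul_le_mul ?_ ?_ (abs_nonneg _) (by positivity)
          · rw [hB s]
            have hadd : (Matrix.diagonal Λ + J s) i j = Matrix.diagonal Λ i j + J s i j := rfl
            rw [hadd]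
            refine (abs_add_le _ _).trans (add_le_add ?_ (hMJ s hs i j))
            by_cases hij : i = j
            · subst hij
              rw [Matrix.diagonal_apply_eq]
            · rw [Matrix.diagonal_apply_ne _ hij]
              simp [abs_nonneg]
          · have h := norm_le_pi_norm (x s) j
            rw [Real.norm_eq_abs] at h
            exact h.trans (hMx s hs)
        calc ∑ j, |B s i j * x s j| ≤ ∑ _j : Fin n, (|L| + MJ) * Mx :=
              Finset.sum_le_sum fun j _ => hbound j
        _ = n * ((|L| + MJ) * Mx) := by
              rw [Finset.sum_const, Finset.card_univ, Fintype.card_fin, nsmul_eq_mul]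
      · have h := norm_le_pi_norm (C s) i
        rw [Real.norm_eq_abs] at h
        exact h.trans (hMC s hs)
    exact mul_le_mul h1 h2 (abs_nonneg _) hMepos.le
  have hφint : IntegrableOn φ (Icc 0 t) := by
    refine Integrable.mono' (g := fun _ => Me * ((n * ((|L| + MJ) * Mx)) + MC))
      (integrableOn_const measure_Icc_lt_top.ne) hφmeas ?_
    filter_upwards [ae_restrict_mem measurableSet_Icc] with s hs
    rw [Real.norm_eq_abs]
    exact hφbd s (hsub hs)
  -- a.e. derivative bound for g
  have hx'' : ∀ᵐ s ∂volume.restrict (Ioo (0:ℝ) t),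
      ∀ d : Fin n → ℝ, HasDerivWithinAt x d (Icc (0:ℝ) T) s →
        ∀ i, d i ≤ ((J s).mulVec (x s) + C s) i :=
    ae_restrict_of_ae_restrict_of_subset (Ioo_subset_Icc_self.trans hsub) hx'
  have hdiff' : ∀ᵐ s ∂volume.restrict (Ioo (0:ℝ) t),
      s ∈ Icc (0:ℝ) T → DifferentiableWithinAt ℝ x (Icc 0 T) s :=
    ae_restrict_of_ae hdiffae
  have hgderiv : ∀ᵐ s ∂volume.restrict (Ioo (0:ℝ) t),
      ∃ dg, HasDerivWithinAt g dg (Ioi s) s ∧ dg ≤ φ s := by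
    filter_upwards [hx'', hdiff', ae_restrict_mem measurableSet_Ioo] with s hs1 hs2 hs3
    have hsT : s ∈ Icc (0:ℝ) T := ⟨hs3.1.le, hs3.2.le.trans htT⟩
    have hsltT : s < T := lt_of_lt_of_le hs3.2 htT
    have hdx := (hs2 hsT).hasDerivWithinAt
    set dx := derivWithin x (Icc (0:ℝ) T) s with hdxdef
    have hineq := hs1 dx hdx i
    have hdx2 : HasDerivWithinAt x dx (Ioi s) s := by
      have hmem : Ioc s T ∈ nhdsWithin s (Ioi s) := Ioc_mem_nhdsGT_of_mem ⟨le_rfl, hsltT⟩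
      have hIocsub : Ioc s T ⊆ Icc (0:ℝ) T := fun u hu => ⟨hs3.1.le.trans hu.1.le, hu.2⟩
      exact (hdx.mono hIocsub).mono_of_mem_nhdsWithin hmem
    have hdxi : HasDerivWithinAt (fun u => x u i) (dx i) (Ioi s) s :=
      hasDerivWithinAt_pi.1 hdx2 i
    have hexp : HasDerivAt (fun u : ℝ => Real.exp (L * u)) (L * Real.exp (L * s)) s := by
      have h1 : HasDerivAt (fun u : ℝ => L * u) L s := by
        simpa using (hasDerivAt_id s).const_mul L
      have h2 := (Real.hasDerivAt_exp (L * s)).comp s h1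
      have h3 : HasDerivAt (fun u : ℝ => Real.exp (L * u)) (Real.exp (L * s) * L) s := h2
      convert h3 using 1
      ring
    refine ⟨L * Real.exp (L * s) * x s i + Real.exp (L * s) * dx i,
      ?_, ?_⟩
    · exact hexp.hasDerivWithinAt.mul hdxi
    · rw [hφdef]
      simp only []
      have hBs : ((B s).mulVec (x s)) i = L * x s i + ((J s).mulVec (x s)) i := by
        rw [hB s, Matrix.add_mulVec]
        have : (Matrix.diagonal Λ).mulVec (x s) i = L * x s i := by
          rw [Matrix.mulVec_diagonal]
        rw [Pi.add_apply, this]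
      rw [hBs]
      have hJC : dx i ≤ ((J s).mulVec (x s)) i + C s i := by
        have := hineq
        rwa [Pi.add_apply] at this
      nlinarith [Real.exp_pos (L * s), hJC]
  -- apply the core lemma
  have hcore := core_ftc h0t hgcont hgAC hφint hgderiv
  -- conclude
  have hg0 : g 0 = x 0 i := by rw [hgdef]; simp
  have hgt : Real.exp (-L * t) * g t = x t i := by
    rw [hgdef]
    simp only []
    rw [← mul_assoc, ← Real.exp_add, show -L * t + L * t = 0 by ring, Real.exp_zero, one_mul]
  have hint : (∫ s in (0:ℝ)..t, Real.exp (-L * (t - s)) * (((B s).mulVec (x s)) i + C s i))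
      = Real.exp (-L * t) * ∫ s in (0:ℝ)..t, φ s := by
    rw [← intervalIntegral.integral_const_mul]
    apply intervalIntegral.integral_congr
    intro s _
    rw [hφdef]
    simp only []
    rw [← mul_assoc, ← Real.exp_add, show -L * t + L * s = -L * (t - s) by ring]
  calc x t i = Real.exp (-L * t) * g t := hgt.symm
  _ ≤ Real.exp (-L * t) * (g 0 + ∫ s in (0:ℝ)..t, φ s) := by
        refine mul_le_mul_of_nonneg_left ?_ (Real.exp_pos _).le
        linarith [hcore]
  _ = Real.exp (-L * t) * x 0 i +
      ∫ s in (0:ℝ)..t, Real.exp (-L * (t - s)) * (((B s).mulVec (x s)) i + C s i) := by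
        rw [hg0, hint]
        ring
end

section
/- Let B : [0,T] → ℝ^{n×n} be bounded measurable with all entries nonnegative, Λ a diagonal matrix, and C bounded measurable. Suppose x, y : [0,T] → ℝ^n are continuous, x satisfies x(t) ≤ e^{−Λt}x(0) + ∫₀ᵗ e^{−Λ(t−s)}(B(s)x(s)+C(s)) ds componentwise, y satisfies the corresponding integral equation with equality, and y(0) > x(0) strictly componentwise. Then x(t) < y(t) strictly componentwise for all t ∈ [0,T]. -/
open Set MeasureTheory

/-- First-crossing comparison for integral inequalities: if `B(t)` is bounded measurable with
all entries nonnegative, `Λ` diagonal, `x` satisfies the componentwise integral inequality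
`x(t) ≤ e^{-Λt}x(0) + ∫₀ᵗ e^{-Λ(t-s)}(B(s)x(s)+C(s)) ds`, `y` satisfies the corresponding
integral equation with equality, and `y(0) > x(0)` strictly componentwise, then `x(t) < y(t)`
strictly componentwise on `[0,T]`. -/
theorem lt_of_integral_ineq_lt
    {n : ℕ} (T : ℝ) (hT : 0 < T)
    (B : ℝ → Matrix (Fin n) (Fin n) ℝ) (C : ℝ → Fin n → ℝ)
    (Λ : Fin n → ℝ) (x y : ℝ → Fin n → ℝ)
    (hBmeas : AEStronglyMeasurable B (volume.restrict (Icc (0:ℝ) T)))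
    (hCmeas : AEStronglyMeasurable C (volume.restrict (Icc (0:ℝ) T)))
    (hBbd : ∃ M, ∀ t ∈ Icc (0:ℝ) T, ∀ i j, |B t i j| ≤ M)
    (hCbd : ∃ M, ∀ t ∈ Icc (0:ℝ) T, ‖C t‖ ≤ M)
    (hBpos : ∀ t ∈ Icc (0:ℝ) T, ∀ i j, 0 ≤ B t i j)
    (hxcont : ContinuousOn x (Icc (0:ℝ) T))
    (hycont : ContinuousOn y (Icc (0:ℝ) T))
    (hx : ∀ t ∈ Icc (0:ℝ) T, ∀ i, x t i ≤
      Real.exp (-Λ i * t) * x 0 i +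
      ∫ s in (0:ℝ)..t, Real.exp (-Λ i * (t - s)) * (((B s).mulVec (x s)) i + C s i))
    (hy : ∀ t ∈ Icc (0:ℝ) T, ∀ i, y t i =
      Real.exp (-Λ i * t) * y 0 i +
      ∫ s in (0:ℝ)..t, Real.exp (-Λ i * (t - s)) * (((B s).mulVec (y s)) i + C s i))
    (h0 : ∀ i, x 0 i < y 0 i) :
    ∀ t ∈ Icc (0:ℝ) T, ∀ i, x t i < y t i := by
  by_contra hcon
  push_neg at hcon
  set S : Set ℝ := {t | t ∈ Icc (0:ℝ) T ∧ ∃ i, y t i ≤ x t i} with hSdef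
  have hSne : S.Nonempty := by
    obtain ⟨t, ht, i, hi⟩ := hcon
    exact ⟨t, ht, i, hi⟩
  have hcomp : ∀ (w : ℝ → Fin n → ℝ), ContinuousOn w (Icc (0:ℝ) T) → ∀ i,
      ContinuousOn (fun t => w t i) (Icc (0:ℝ) T) := fun w hw i =>
    (continuous_apply i).comp_continuousOn hw
  have hScl : IsClosed S := by
    have hEq : S = ⋃ i : Fin n,
        (Icc (0:ℝ) T ∩ (fun t => y t i - x t i) ⁻¹' Iic 0) := by
      ext t
      simp only [hSdef, mem_setOf_eq, mem_iUnion, mem_inter_iff, mem_preimage, mem_Iic,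
        sub_nonpos]
      constructor
      · rintro ⟨ht, i, hi⟩; exact ⟨i, ht, hi⟩
      · rintro ⟨i, ht, hi⟩; exact ⟨ht, i, hi⟩
    rw [hEq]
    refine isClosed_iUnion_of_finite fun i => ?_
    exact ContinuousOn.preimage_isClosed_of_isClosed
      ((hcomp y hycont i).sub (hcomp x hxcont i)) isClosed_Icc isClosed_Iic
  have hbdd : BddBelow S := ⟨0, fun t ht => ht.1.1⟩
  set t₀ : ℝ := sInf S with ht₀def
  have ht₀S : t₀ ∈ S := hScl.csInf_mem hSne hbdd
  have ht₀Icc : t₀ ∈ Icc (0:ℝ) T := ht₀S.1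
  have ht₀pos : 0 < t₀ := by
    rcases lt_or_eq_of_le ht₀Icc.1 with h | h
    · exact h
    · exfalso
      obtain ⟨i, hi⟩ := ht₀S.2
      rw [← h] at hi
      exact absurd hi (not_le.mpr (h0 i))
  have hlt : ∀ s ∈ Ico (0:ℝ) t₀, ∀ j, x s j < y s j := by
    intro s hs j
    by_contra h
    push_neg at h
    have hsIcc : s ∈ Icc (0:ℝ) T := ⟨hs.1, hs.2.le.trans ht₀Icc.2⟩
    have : s ∈ S := ⟨hsIcc, j, h⟩
    exact absurd (csInf_le hbdd this) (not_le.mpr hs.2)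
  have hznn : ∀ j, 0 ≤ y t₀ j - x t₀ j := by
    intro j
    have hne : (nhdsWithin t₀ (Ico (0:ℝ) t₀)).NeBot := by
      refine mem_closure_iff_nhdsWithin_neBot.mp ?_
      rw [closure_Ico ht₀pos.ne]
      exact right_mem_Icc.mpr ht₀pos.le
    have hcw : Filter.Tendsto (fun s => y s j - x s j) (nhdsWithin t₀ (Ico (0:ℝ) t₀))
        (nhds (y t₀ j - x t₀ j)) := by
      have h1 := ((hcomp y hycont j).sub (hcomp x hxcont j)) t₀ ht₀Icc
      exact h1.mono (fun s hs => ⟨hs.1, hs.2.le.trans ht₀Icc.2⟩)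
    refine ge_of_tendsto hcw ?_
    filter_upwards [self_mem_nhdsWithin] with s hs
    exact sub_nonneg.mpr (hlt s hs j).le
  have hz : ∀ s ∈ Icc (0:ℝ) t₀, ∀ j, 0 ≤ y s j - x s j := by
    intro s hs j
    rcases lt_or_eq_of_le hs.2 with h | h
    · exact sub_nonneg.mpr (hlt s ⟨hs.1, h⟩ j).le
    · rw [h]; exact hznn j
  obtain ⟨M, hM⟩ := hBbd
  obtain ⟨MC, hMC⟩ := hCbd
  obtain ⟨Mx, hMx⟩ := isCompact_Icc.exists_bound_of_continuousOn hxcont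
  obtain ⟨My, hMy⟩ := isCompact_Icc.exists_bound_of_continuousOn hycont
  have hsub : Ioc (0:ℝ) t₀ ⊆ Icc (0:ℝ) T := fun s hs => ⟨hs.1.le, hs.2.trans ht₀Icc.2⟩
  have hint : ∀ (w : ℝ → Fin n → ℝ), ContinuousOn w (Icc (0:ℝ) T) →
      (∀ s ∈ Icc (0:ℝ) T, ‖w s‖ ≤ max Mx My) → ∀ i,
      IntervalIntegrable
        (fun s => Real.exp (-Λ i * (t₀ - s)) * (((B s).mulVec (w s)) i + C s i))
        volume 0 t₀ := by
    intro w hw hMw i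
    rw [intervalIntegrable_iff_integrableOn_Ioc_of_le ht₀pos.le]
    have hmono : volume.restrict (Ioc (0:ℝ) t₀) ≤ volume.restrict (Icc (0:ℝ) T) :=
      Measure.restrict_mono hsub le_rfl
    have hBm : ∀ j, AEStronglyMeasurable (fun s => B s i j)
        (volume.restrict (Ioc (0:ℝ) t₀)) := fun j =>
      ((continuous_apply_apply i j).comp_aestronglyMeasurable hBmeas).mono_measure hmono
    have hwm : ∀ j, AEStronglyMeasurable (fun s => w s j)
        (volume.restrict (Ioc (0:ℝ) t₀)) := fun j =>
      (((hcomp w hw j)).aestronglyMeasurable measurableSet_Icc).mono_measure hmono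
    have hCm : AEStronglyMeasurable (fun s => C s i) (volume.restrict (Ioc (0:ℝ) t₀)) :=
      ((continuous_apply i).comp_aestronglyMeasurable hCmeas).mono_measure hmono
    have hmv : AEStronglyMeasurable (fun s => ((B s).mulVec (w s)) i)
        (volume.restrict (Ioc (0:ℝ) t₀)) := by
      simp only [Matrix.mulVec, dotProduct]
      exact Finset.aestronglyMeasurable_fun_sum _ (fun j _ => (hBm j).mul (hwm j))
    have hmeas : AEStronglyMeasurable
        (fun s => Real.exp (-Λ i * (t₀ - s)) * (((B s).mulVec (w s)) i + C s i))
        (volume.restrict (Ioc (0:ℝ) t₀)) := by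
      refine AEStronglyMeasurable.mul ?_ (hmv.add hCm)
      exact (Real.continuous_exp.comp
        (continuous_const.mul (continuous_const.sub continuous_id))).aestronglyMeasurable
    refine Integrable.mono'
      ((integrableOn_const_iff
        (C := Real.exp (|Λ i| * T) * ((n : ℝ) * (M * max Mx My) + MC))).mpr
        (Or.inr measure_Ioc_lt_top))
      hmeas ?_
    filter_upwards [ae_restrict_mem measurableSet_Ioc] with s hs
    have hsI : s ∈ Icc (0:ℝ) T := hsub hs
    have h1 : Real.exp (-Λ i * (t₀ - s)) ≤ Real.exp (|Λ i| * T) := by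
      apply Real.exp_le_exp.mpr
      have hs1 : 0 ≤ t₀ - s := sub_nonneg.mpr hs.2
      have hs2 : t₀ - s ≤ T := by
        have := ht₀Icc.2
        linarith [hs.1]
      calc -Λ i * (t₀ - s) ≤ |(-Λ i * (t₀ - s))| := le_abs_self _
        _ = |Λ i| * |t₀ - s| := by rw [abs_mul, abs_neg]
        _ ≤ |Λ i| * T := by
            apply mul_le_mul_of_nonneg_left _ (abs_nonneg _)
            rwa [abs_of_nonneg hs1]
    have h2 : |((B s).mulVec (w s)) i + C s i| ≤ (n : ℝ) * (M * max Mx My) + MC := by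
      refine (abs_add_le _ _).trans (add_le_add ?_ ?_)
      · simp only [Matrix.mulVec, dotProduct]
        refine (Finset.abs_sum_le_sum_abs _ _).trans ?_
        have : ∀ j ∈ Finset.univ, |B s i j * w s j| ≤ M * max Mx My := by
          intro j _
          rw [abs_mul]
          refine mul_le_mul (hM s hsI i j) ?_ (abs_nonneg _)
            ((abs_nonneg _).trans (hM s hsI i j))
          calc |w s j| = ‖w s j‖ := (Real.norm_eq_abs _).symm
            _ ≤ ‖w s‖ := norm_le_pi_norm (w s) j
            _ ≤ max Mx My := hMw s hsI
        calc (∑ j, |B s i j * w s j|) ≤ ∑ _j : Fin n, M * max Mx My :=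
              Finset.sum_le_sum this
          _ = (n : ℝ) * (M * max Mx My) := by
              rw [Finset.sum_const, Finset.card_univ, Fintype.card_fin, nsmul_eq_mul]
      · calc |C s i| = ‖C s i‖ := (Real.norm_eq_abs _).symm
          _ ≤ ‖C s‖ := norm_le_pi_norm (C s) i
          _ ≤ MC := hMC s hsI
    calc ‖Real.exp (-Λ i * (t₀ - s)) * (((B s).mulVec (w s)) i + C s i)‖
        = Real.exp (-Λ i * (t₀ - s)) * |((B s).mulVec (w s)) i + C s i| := by
          rw [Real.norm_eq_abs, abs_mul, abs_of_pos (Real.exp_pos _)]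
      _ ≤ Real.exp (|Λ i| * T) * ((n : ℝ) * (M * max Mx My) + MC) :=
          mul_le_mul h1 h2 (abs_nonneg _) (Real.exp_pos _).le
  obtain ⟨i, hi⟩ := ht₀S.2
  have hIx := hint x hxcont (fun s hs => (hMx s hs).trans (le_max_left _ _)) i
  have hIy := hint y hycont (fun s hs => (hMy s hs).trans (le_max_right _ _)) i
  have hxle := hx t₀ ht₀Icc i
  have hyeq := hy t₀ ht₀Icc i
  have hsubint :
      (∫ s in (0:ℝ)..t₀, Real.exp (-Λ i * (t₀ - s)) * (((B s).mulVec (y s)) i + C s i)) -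
      (∫ s in (0:ℝ)..t₀, Real.exp (-Λ i * (t₀ - s)) * (((B s).mulVec (x s)) i + C s i)) =
      ∫ s in (0:ℝ)..t₀,
        (Real.exp (-Λ i * (t₀ - s)) * (((B s).mulVec (y s)) i + C s i) -
         Real.exp (-Λ i * (t₀ - s)) * (((B s).mulVec (x s)) i + C s i)) :=
    (intervalIntegral.integral_sub hIy hIx).symm
  have hnn : 0 ≤ ∫ s in (0:ℝ)..t₀,
      (Real.exp (-Λ i * (t₀ - s)) * (((B s).mulVec (y s)) i + C s i) -
       Real.exp (-Λ i * (t₀ - s)) * (((B s).mulVec (x s)) i + C s i)) := by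
    refine intervalIntegral.integral_nonneg ht₀pos.le ?_
    intro s hs
    have hsI : s ∈ Icc (0:ℝ) T := ⟨hs.1, hs.2.trans ht₀Icc.2⟩
    rw [← mul_sub]
    have heq : (((B s).mulVec (y s)) i + C s i) - (((B s).mulVec (x s)) i + C s i) =
        ∑ j, B s i j * (y s j - x s j) := by
      simp only [Matrix.mulVec, dotProduct, mul_sub, Finset.sum_sub_distrib]
      ring
    rw [heq]
    exact mul_nonneg (Real.exp_pos _).le
      (Finset.sum_nonneg fun j _ => mul_nonneg (hBpos s hsI i j) (hz s hs j))
  have hE : 0 < Real.exp (-Λ i * t₀) * (y 0 i - x 0 i) :=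
    mul_pos (Real.exp_pos _) (sub_pos.mpr (h0 i))
  have hring : Real.exp (-Λ i * t₀) * y 0 i - Real.exp (-Λ i * t₀) * x 0 i =
      Real.exp (-Λ i * t₀) * (y 0 i - x 0 i) := by ring
  linarith
end

section
/- Let f : ℝ^n × ℝ^m → ℝ^n be C¹, y : [t₀,t₀+h] → ℝ^m bounded measurable with image in a convex set [W_y], and y_c ∈ [W_y]. Let x₁ solve x₁' = f(x₁, y_c), x₁(t₀)=x₀, and x₂ be a weak solution of x₂' = f(x₂, y(t)), x₂(t₀)=x̄₀, with x₁(t) ∈ [W₁] ⊆ [W₂] and x₂(t) ∈ [W₂] for all t, where [W₁], [W₂] are convex compact. Define C ∈ ℝ^n by C_i ≥ sup{|f_i(x,y_c) − f_i(x,y)| : x ∈ [W₁], y ∈ [W_y]} and J ∈ ℝ^{n×n} by J_{ii} ≥ sup μ(∂f_i/∂x_i) over [W₂]×[W_y] and J_{ij} ≥ sup ‖∂f_i/∂x_j‖ over [W₂]×[W_y] for i≠j. Then for all t ∈ [t₀,t₀+h] and all i: |x₁,ᵢ(t) − x₂,ᵢ(t)| ≤ (e^{J(t−t₀)}·|x₀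 − x̄₀|)_i + (∫_{t₀}^t e^{J(t−s)} C ds)_i. -/
section OdeAuxSection

open NormedSpace Matrix intervalIntegral Set MeasureTheory

attribute [local instance] Matrix.linftyOpNormedAddCommGroup Matrix.linftyOpNormedRing
  Matrix.linftyOpNormedAlgebra Matrix.linftyOpNormedSpace

namespace OdeAux
variable {n : ℕ}

lemma entry_exp_eq (M : Matrix (Fin n) (Fin n) ℝ) (i j : Fin n) :
    exp M i j = ∑' k : ℕ, ((k.factorial : ℝ)⁻¹ • M ^ k) i j := by
  have := (Matrix.entryLinearMap ℝ ℝ i j).toContinuousLinearMap.map_tsum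
    (expSeries_summable' (𝕂 := ℝ) M)
  rw [exp_eq_tsum ℝ]
  exact this

lemma entry_summable (M : Matrix (Fin n) (Fin n) ℝ) (i j : Fin n) :
    Summable (fun k : ℕ => ((k.factorial : ℝ)⁻¹ • M ^ k) i j) := by
  have := ((expSeries_summable' (𝕂 := ℝ) M).map
    (Matrix.entryLinearMap ℝ ℝ i j).toContinuousLinearMap
    (LinearMap.continuous_of_finiteDimensional _))
  exact this

lemma pow_entry_nonneg {M : Matrix (Fin n) (Fin n) ℝ} (hM : ∀ i j, 0 ≤ M i j) :
    ∀ (k : ℕ) (i j : Fin n), 0 ≤ (M ^ k) i j := by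
  intro k
  induction k with
  | zero => intro i j; rw [pow_zero]; by_cases hij : i = j <;> simp [Matrix.one_apply, hij]
  | succ k ih =>
    intro i j
    rw [pow_succ, Matrix.mul_apply]
    exact Finset.sum_nonneg fun l _ => mul_nonneg (ih i l) (hM l j)

lemma one_entry_le_exp {M : Matrix (Fin n) (Fin n) ℝ} (hM : ∀ i j, 0 ≤ M i j) (i j : Fin n) :
    (1 : Matrix (Fin n) (Fin n) ℝ) i j ≤ exp M i j := by
  rw [entry_exp_eq]
  have := Summable.le_tsum (entry_summable M i j) 0 fun k _ => by
    have := pow_entry_nonneg hM k i j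
    have h2 : (0:ℝ) ≤ ((k.factorial : ℝ)⁻¹) := by positivity
    simpa [Matrix.smul_apply, smul_eq_mul] using mul_nonneg h2 this
  simpa using this

lemma exp_entry_nonneg {M : Matrix (Fin n) (Fin n) ℝ} (hM : ∀ i j, 0 ≤ M i j) (i j : Fin n) :
    0 ≤ exp M i j := by
  refine le_trans ?_ (one_entry_le_exp hM i j)
  by_cases hij : i = j <;> simp [Matrix.one_apply, hij]

lemma exp_add_smul_one (A : Matrix (Fin n) (Fin n) ℝ) (c : ℝ) :
    exp (A + c • 1) = Real.exp c • exp A := by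
  rw [Matrix.exp_add_of_commute A (c • (1 : Matrix (Fin n) (Fin n) ℝ))
    ((Commute.one_right A).smul_right c)]
  have h1 : (c • (1 : Matrix (Fin n) (Fin n) ℝ)) = algebraMap ℝ _ c :=
    (Algebra.algebraMap_eq_smul_one c).symm
  rw [h1, show exp ((algebraMap ℝ (Matrix (Fin n) (Fin n) ℝ)) c) = algebraMap ℝ _ (exp c) from
    (algebraMap_exp_comm (𝕂 := ℝ) (𝔸 := Matrix (Fin n) (Fin n) ℝ) c).symm, ← Real.exp_eq_exp_ℝ, Algebra.algebraMap_eq_smul_one,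
    mul_smul_comm, mul_one]

/-- key positivity: for `J` with nonnegative off-diagonal entries and `τ ≥ 0`,
`(exp (τ•J)).mulVec w` dominates a positive multiple of `w` componentwise. -/
lemma le_exp_smul_mulVec (J : Matrix (Fin n) (Fin n) ℝ)
    (hoff : ∀ i j, i ≠ j → 0 ≤ J i j) {τ : ℝ} (hτ : 0 ≤ τ)
    {w : Fin n → ℝ} (hw : ∀ j, 0 ≤ w j) (i : Fin n) :
    Real.exp (-(τ * ∑ k, |J k k|)) * w i ≤ (exp (τ • J)).mulVec w i := by
  set α : ℝ := ∑ k, |J k k| with hα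
  have hαk : ∀ k, |J k k| ≤ α := fun k =>
    Finset.single_le_sum (f := fun k => |J k k|) (fun l _ => abs_nonneg _) (Finset.mem_univ k)
  set M : Matrix (Fin n) (Fin n) ℝ := τ • J + (τ * α) • 1 with hM
  have hMnn : ∀ i j, 0 ≤ M i j := by
    intro a b
    by_cases hab : a = b
    · subst hab
      have : M a a = τ * (J a a + α) := by
        simp [hM, Matrix.add_apply, Matrix.smul_apply, Matrix.one_apply, smul_eq_mul]; ring
      rw [this]
      exact mul_nonneg hτ (by linarith [hαk a, neg_abs_le (J a a)])
    · have : M a b = τ * J a b := by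
        simp [hM, Matrix.add_apply, Matrix.smul_apply, Matrix.one_apply, hab, smul_eq_mul]
      rw [this]
      exact mul_nonneg hτ (hoff a b hab)
  have hexp : exp (τ • J) = Real.exp (-(τ * α)) • exp M := by
    have : τ • J = M + (-(τ * α)) • 1 := by simp [hM]
    rw [this, exp_add_smul_one]
  rw [hexp, Matrix.smul_mulVec, Pi.smul_apply, smul_eq_mul]
  have h2 : w i ≤ (exp M).mulVec w i := by
    rw [Matrix.mulVec, dotProduct]
    have : ∀ j ∈ Finset.univ, (0:ℝ) ≤ exp M i j * w j := fun j _ =>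
      mul_nonneg (exp_entry_nonneg hMnn i j) (hw j)
    calc w i ≤ exp M i i * w i := by
          nlinarith [one_entry_le_exp hMnn i i, Matrix.one_apply_eq (i := i) (α := ℝ), hw i]
      _ ≤ ∑ j, exp M i j * w j :=
          Finset.single_le_sum (fun j _ => this j (Finset.mem_univ j)) (Finset.mem_univ i)
  exact mul_le_mul_of_nonneg_left h2 (le_of_lt (Real.exp_pos _))

lemma mvt_bound {n : ℕ} {g : (Fin n → ℝ) → ℝ} (hg : Differentiable ℝ g)
    {W : Set (Fin n → ℝ)} (hW : Convex ℝ W) {a b : Fin n → ℝ} (ha : a ∈ W) (hb : b ∈ W)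
    {K : Fin n → ℝ} {i : Fin n} {σ : ℝ} (hσ : σ = 1 ∨ σ = -1)
    (hsi : σ * (a i - b i) = |a i - b i|)
    (hKi : ∀ x ∈ W, fderiv ℝ g x (Pi.single i 1) ≤ K i)
    (hKj : ∀ j, j ≠ i → ∀ x ∈ W, |fderiv ℝ g x (Pi.single j 1)| ≤ K j) :
    σ * (g a - g b) ≤ ∑ j, K j * |a j - b j| := by
  set B : ℝ := ∑ j, K j * |a j - b j| with hB
  set φ : ℝ → ℝ := fun θ => σ * g (b + θ • (a - b)) with hφ
  have hmem : ∀ θ ∈ Icc (0:ℝ) 1, b + θ • (a - b) ∈ W := fun θ hθ =>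
    hW.add_smul_sub_mem hb ha hθ
  have hpath : ∀ θ : ℝ, HasDerivAt (fun θ : ℝ => b + θ • (a - b)) (a - b) θ := by
    intro θ
    simpa using ((hasDerivAt_id θ).smul_const (a - b)).const_add b
  have hφd : ∀ θ : ℝ, HasDerivAt φ
      (σ * (fderiv ℝ g (b + θ • (a - b))) (a - b)) θ := fun θ =>
    (((hg (b + θ • (a - b))).hasFDerivAt.comp_hasDerivAt θ (hpath θ))).const_mul σ
  have habs : |σ| = 1 := by rcases hσ with h | h <;> simp [h]
  have hsum : ∀ x : Fin n → ℝ, (fderiv ℝ g x) (a - b)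
      = ∑ j, (a j - b j) * fderiv ℝ g x (Pi.single j 1) := by
    intro x
    have : (a - b) = ∑ j, (a j - b j) • (Pi.single j 1 : Fin n → ℝ) := by
      funext k
      simp [Pi.single_apply, Finset.sum_ite_eq', mul_comm]
    rw [this, map_sum]
    simp [smul_eq_mul]
  have hbound : ∀ θ ∈ Icc (0:ℝ) 1,
      σ * (fderiv ℝ g (b + θ • (a - b))) (a - b) ≤ B := by
    intro θ hθ
    set x := b + θ • (a - b)
    have hxW : x ∈ W := hmem θ hθ
    rw [hsum x, Finset.mul_sum]
    refine Finset.sum_le_sum fun j _ => ?_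
    by_cases hj : j = i
    · subst hj
      have : σ * ((a j - b j) * (fderiv ℝ g x) (Pi.single j 1))
          = |a j - b j| * (fderiv ℝ g x) (Pi.single j 1) := by rw [← hsi]; ring
      rw [this, mul_comm (K j) _]
      exact mul_le_mul_of_nonneg_left (hKi x hxW) (abs_nonneg _)
    · calc σ * ((a j - b j) * (fderiv ℝ g x) (Pi.single j 1))
          ≤ |σ * ((a j - b j) * (fderiv ℝ g x) (Pi.single j 1))| := le_abs_self _
        _ = |a j - b j| * |(fderiv ℝ g x) (Pi.single j 1)| := by
            rw [abs_mul, abs_mul, habs, one_mul]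
        _ ≤ |a j - b j| * K j :=
            mul_le_mul_of_nonneg_left (hKj j hj x hxW) (abs_nonneg _)
        _ = K j * |a j - b j| := mul_comm _ _
  set ψ : ℝ → ℝ := fun θ => B * θ - φ θ with hψ
  have hψd : ∀ θ : ℝ, HasDerivAt ψ
      (B - σ * (fderiv ℝ g (b + θ • (a - b))) (a - b)) θ := by
    intro θ
    have := ((hasDerivAt_id θ).const_mul B).sub (hφd θ)
    rw [mul_one] at this
    exact this
  have hmono : MonotoneOn ψ (Icc (0:ℝ) 1) := by
    refine monotoneOn_of_deriv_nonneg (convex_Icc 0 1)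
      (fun θ _ => ((hψd θ).differentiableAt).continuousAt.continuousWithinAt)
      (fun θ _ => ((hψd θ).differentiableAt).differentiableWithinAt) ?_
    intro θ hθ
    rw [interior_Icc] at hθ
    rw [(hψd θ).deriv]
    have := hbound θ (Ioo_subset_Icc_self hθ)
    linarith
  have h01 := hmono (left_mem_Icc.2 zero_le_one) (right_mem_Icc.2 zero_le_one) zero_le_one
  have hφ0 : φ 0 = σ * g b := by simp [hφ]
  have hφ1 : φ 1 = σ * g a := by simp [hφ]
  simp only [hψ, hφ0, hφ1, mul_zero, mul_one] at h01
  linarith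

/-- `mulVec` as a continuous linear map in the matrix argument, applied bundled. -/
noncomputable def mvCLM (M : Matrix (Fin n) (Fin n) ℝ) : (Fin n → ℝ) →L[ℝ] (Fin n → ℝ) :=
  LinearMap.toContinuousLinearMap (Matrix.mulVecLin M)

@[simp] lemma mvCLM_apply (M : Matrix (Fin n) (Fin n) ℝ) (v : Fin n → ℝ) :
    mvCLM M v = M.mulVec v := rfl

noncomputable def mvL : Matrix (Fin n) (Fin n) ℝ →L[ℝ] ((Fin n → ℝ) →L[ℝ] (Fin n → ℝ)) :=
  LinearMap.toContinuousLinearMap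
  { toFun := mvCLM
    map_add' := fun A B => by ext v; simp [Matrix.add_mulVec]
    map_smul' := fun c A => by ext v; simp [Matrix.smul_mulVec] }

@[simp] lemma mvL_apply (M : Matrix (Fin n) (Fin n) ℝ) (v : Fin n → ℝ) :
    mvL M v = M.mulVec v := rfl

lemma exp_smul_mul (J : Matrix (Fin n) (Fin n) ℝ) (p q : ℝ) :
    exp (p • J) * exp (q • J) = exp ((p + q) • J) := by
  rw [← Matrix.exp_add_of_commute (p • J) (q • J)
    (((Commute.refl J).smul_left p).smul_right q), add_smul]

lemma continuous_exp_smul (J : Matrix (Fin n) (Fin n) ℝ) :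
    Continuous fun t : ℝ => exp (t • J) :=
  continuous_iff_continuousAt.2 fun t => (hasDerivAt_exp_smul_const J t).continuousAt

lemma hasDerivAt_exp_shift (J : Matrix (Fin n) (Fin n) ℝ) (t₀ t : ℝ) :
    HasDerivAt (fun t : ℝ => exp ((t - t₀) • J)) (J * exp ((t - t₀) • J)) t := by
  have h1 : HasDerivAt (fun t : ℝ => t - t₀) 1 t := (hasDerivAt_id t).sub_const t₀
  have := (hasDerivAt_exp_smul_const' J (t - t₀)).scomp t h1
  simp only [Function.comp_def, one_smul] at this
  exact this

lemma continuous_exp_mulVec (J : Matrix (Fin n) (Fin n) ℝ) {c : ℝ → ℝ} (hc : Continuous c)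
    (D : Fin n → ℝ) : Continuous fun s : ℝ => (exp (c s • J)).mulVec D := by
  have : Continuous fun s : ℝ => mvL (n := n) (exp (c s • J)) :=
    mvL.continuous.comp ((continuous_exp_smul J).comp hc)
  have h2 : Continuous fun s : ℝ => mvL (n := n) (exp (c s • J)) D := by
    exact (ContinuousLinearMap.apply ℝ (Fin n → ℝ) D).continuous.comp this
  simpa using h2

/-- closed form identity -/
lemma flow_closed_form (J : Matrix (Fin n) (Fin n) ℝ) (D w₀ : Fin n → ℝ) (t₀ t : ℝ) :
    (exp ((t - t₀) • J)).mulVec w₀ +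
        (∫ s in t₀..t, (exp ((t - s) • J)).mulVec D) =
    (exp ((t - t₀) • J)).mulVec
      (w₀ + ∫ s in t₀..t, (exp (-(s - t₀) • J)).mulVec D) := by
  rw [Matrix.mulVec_add]
  congr 1
  have hint : IntervalIntegrable (fun s => (exp (-(s - t₀) • J)).mulVec D) MeasureTheory.volume t₀ t :=
    (continuous_exp_mulVec J (by continuity) D).intervalIntegrable _ _
  calc (∫ s in t₀..t, (exp ((t - s) • J)).mulVec D)
      = ∫ s in t₀..t, mvCLM (exp ((t - t₀) • J)) ((exp (-(s - t₀) • J)).mulVec D) := by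
        refine intervalIntegral.integral_congr fun s _ => ?_
        simp only [mvCLM_apply, Matrix.mulVec_mulVec, exp_smul_mul]
        ring_nf
    _ = mvCLM (exp ((t - t₀) • J)) (∫ s in t₀..t, (exp (-(s - t₀) • J)).mulVec D) :=
        (mvCLM (exp ((t - t₀) • J))).intervalIntegral_comp_comm hint
    _ = _ := by simp

/-- the flow solves the inhomogeneous linear ODE -/
lemma flow_hasDerivAt (J : Matrix (Fin n) (Fin n) ℝ) (D w₀ : Fin n → ℝ) (t₀ t : ℝ) :
    HasDerivAt (fun t => (exp ((t - t₀) • J)).mulVec w₀ +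
        ∫ s in t₀..t, (exp ((t - s) • J)).mulVec D)
      (J.mulVec ((exp ((t - t₀) • J)).mulVec w₀ +
        ∫ s in t₀..t, (exp ((t - s) • J)).mulVec D) + D) t := by
  have hfun : (fun t => (exp ((t - t₀) • J)).mulVec w₀ +
      ∫ s in t₀..t, (exp ((t - s) • J)).mulVec D)
      = fun t => mvL (exp ((t - t₀) • J))
          (w₀ + ∫ s in t₀..t, (exp (-(s - t₀) • J)).mulVec D) := by
    funext t
    rw [flow_closed_form]
    simp
  rw [hfun]
  set g : ℝ → Fin n → ℝ := fun t => ∫ s in t₀..t, (exp (-(s - t₀) • J)).mulVec D with hg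
  have hgc : Continuous fun s : ℝ => (exp (-(s - t₀) • J)).mulVec D :=
    continuous_exp_mulVec J (by continuity) D
  have hgd : HasDerivAt g ((exp (-(t - t₀) • J)).mulVec D) t :=
    (hgc.integral_hasStrictDerivAt t₀ t).hasDerivAt
  have hφ : HasDerivAt (fun t => mvL (n := n) (exp ((t - t₀) • J)))
      (mvL (J * exp ((t - t₀) • J))) t :=
    mvL.hasFDerivAt.comp_hasDerivAt t (hasDerivAt_exp_shift J t₀ t)
  have hu : HasDerivAt (fun t => w₀ + g t) ((exp (-(t - t₀) • J)).mulVec D) t :=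
    hgd.const_add w₀
  have hda := hφ.clm_apply hu
  convert hda using 1
  case e'_4 => rfl
  case e'_5 => rfl
  case e'_6 => rfl
  rw [flow_closed_form J D w₀ t₀ t]
  simp only [mvL_apply, mvCLM_apply, Matrix.mulVec_mulVec, ← Matrix.mul_assoc]
  congr 1
  rw [exp_smul_mul]
  simp

lemma IntervalIntegrable.comp_proj {g : ℝ → Fin n → ℝ} {μ : Measure ℝ} {a b : ℝ}
    (hg : IntervalIntegrable g μ a b) (i : Fin n) :
    IntervalIntegrable (fun t => g t i) μ a b := by
  have h1 := (ContinuousLinearMap.proj (R := ℝ) (φ := fun _ : Fin n => ℝ) i).integrable_comp hg.1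
  have h2 := (ContinuousLinearMap.proj (R := ℝ) (φ := fun _ : Fin n => ℝ) i).integrable_comp hg.2
  exact ⟨h1, h2⟩

lemma intervalIntegral_apply {g : ℝ → Fin n → ℝ} {a b : ℝ}
    (hg : IntervalIntegrable g volume a b) (i : Fin n) :
    (∫ t in a..b, g t) i = ∫ t in a..b, g t i := by
  have := (ContinuousLinearMap.proj (R := ℝ) (φ := fun _ : Fin n => ℝ) i).intervalIntegral_comp_comm hg
  simpa using this.symm

end OdeAux
end OdeAuxSection


open Set MeasureTheory

/-- Componentwise comparison theorem for a perturbed ODE (decomposition into one-dimensional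
blocks): with `J` bounding the Jacobian blocks of `f` over `[W₂] × [W_y]` (diagonal entries
bound the logarithmic norm, i.e. the partial derivative itself in the one-dimensional case;
off-diagonal entries bound the norms) and `C` bounding the perturbation
`f(x, y_c) - f(x, y)` over `[W₁] × [W_y]`, the difference of the solution `x₁` of
`x₁' = f(x₁, y_c)` and the weak solution `x₂` of `x₂' = f(x₂, y(t))` satisfies
`|x₁ᵢ(t) - x₂ᵢ(t)| ≤ (e^{J(t-t₀)}|x₀ - xb₀|)ᵢ + (∫_{t₀}^t e^{J(t-s)} C ds)ᵢ`. -/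
theorem ode_perturbation_componentwise_bound
    {n m : ℕ} (t₀ h : ℝ) (hh : 0 < h)
    (f : (Fin n → ℝ) → (Fin m → ℝ) → Fin n → ℝ)
    (hf : ContDiff ℝ 1 (fun p : (Fin n → ℝ) × (Fin m → ℝ) => f p.1 p.2))
    (y : ℝ → Fin m → ℝ) (Wy : Set (Fin m → ℝ)) (y_c : Fin m → ℝ)
    (hymeas : AEStronglyMeasurable y (volume.restrict (Icc t₀ (t₀ + h))))
    (hybd : ∃ M, ∀ t ∈ Icc t₀ (t₀ + h), ‖y t‖ ≤ M)
    (hWy : Convex ℝ Wy) (hyWy : ∀ t ∈ Icc t₀ (t₀ + h), y t ∈ Wy) (hyc : y_c ∈ Wy)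
    (x₀ xb₀ : Fin n → ℝ) (x₁ x₂ : ℝ → Fin n → ℝ)
    (hx₁cont : ContinuousOn x₁ (Icc t₀ (t₀ + h)))
    (hx₂cont : ContinuousOn x₂ (Icc t₀ (t₀ + h)))
    (hx₁ : ∀ t ∈ Icc t₀ (t₀ + h), x₁ t = x₀ + ∫ s in t₀..t, f (x₁ s) y_c)
    (hx₂ : ∀ t ∈ Icc t₀ (t₀ + h), x₂ t = xb₀ + ∫ s in t₀..t, f (x₂ s) (y s))
    (W₁ W₂ : Set (Fin n → ℝ))
    (hW₁ : Convex ℝ W₁) (hW₁c : IsCompact W₁)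
    (hW₂ : Convex ℝ W₂) (hW₂c : IsCompact W₂) (hW₁₂ : W₁ ⊆ W₂)
    (hx₁W : ∀ t ∈ Icc t₀ (t₀ + h), x₁ t ∈ W₁)
    (hx₂W : ∀ t ∈ Icc t₀ (t₀ + h), x₂ t ∈ W₂)
    (C : Fin n → ℝ)
    (hC : ∀ i, ∀ x ∈ W₁, ∀ w ∈ Wy, |f x y_c i - f x w i| ≤ C i)
    (J : Matrix (Fin n) (Fin n) ℝ)
    (hJdiag : ∀ i, ∀ x ∈ W₂, ∀ w ∈ Wy,
      fderiv ℝ (fun v => f v w i) x (Pi.single i 1) ≤ J i i)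
    (hJoff : ∀ i j, i ≠ j → ∀ x ∈ W₂, ∀ w ∈ Wy,
      |fderiv ℝ (fun v => f v w i) x (Pi.single j 1)| ≤ J i j) :
    ∀ t ∈ Icc t₀ (t₀ + h), ∀ i,
      |x₁ t i - x₂ t i| ≤
        ((NormedSpace.exp ((t - t₀) • J)).mulVec (fun j => |x₀ j - xb₀ j|)) i +
        (∫ s in t₀..t, (NormedSpace.exp ((t - s) • J)).mulVec C) i := by
  intro t htI i
  have ht₀I : t₀ ∈ Icc t₀ (t₀ + h) := ⟨le_refl _, by linarith⟩
  have hx₁t₀ : x₁ t₀ = x₀ := by simpa using hx₁ t₀ ht₀I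
  have hx₂t₀ : x₂ t₀ = xb₀ := by simpa using hx₂ t₀ ht₀I
  have hx₁W₂ : ∀ r ∈ Icc t₀ (t₀ + h), x₁ r ∈ W₂ := fun r hr => hW₁₂ (hx₁W r hr)
  have hJoff0 : ∀ a b, a ≠ b → 0 ≤ J a b := fun a b hab =>
    le_trans (abs_nonneg _) (hJoff a b hab (x₁ t₀) (hx₁W₂ t₀ ht₀I) y_c hyc)
  have hC0 : ∀ a, 0 ≤ C a := fun a =>
    le_trans (abs_nonneg _) (hC a (x₁ t₀) (hx₁W t₀ ht₀I) y_c hyc)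
  have hfc : Continuous (fun p : (Fin n → ℝ) × (Fin m → ℝ) => f p.1 p.2) := hf.continuous
  have hfd : ∀ (w : Fin m → ℝ) (a : Fin n), Differentiable ℝ (fun v => f v w a) := by
    intro w a
    have h1 : ContDiff ℝ 1 (fun v : Fin n → ℝ => f v w) :=
      hf.comp (contDiff_id.prodMk contDiff_const)
    have h2 : ContDiff ℝ 1 (fun v : Fin n → ℝ => f v w a) :=
      (ContinuousLinearMap.proj (R := ℝ) (φ := fun _ : Fin n => ℝ) a).contDiff.comp h1
    exact h2.differentiable one_ne_zero
  -- integrability of the two vector fields along the solutions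
  have hF₁contOn : ContinuousOn (fun r => f (x₁ r) y_c) (Icc t₀ (t₀ + h)) :=
    hfc.comp_continuousOn (hx₁cont.prodMk continuousOn_const)
  have hF₁int : ∀ a ∈ Icc t₀ (t₀ + h), ∀ b ∈ Icc t₀ (t₀ + h),
      IntervalIntegrable (fun r => f (x₁ r) y_c) volume a b := fun a ha b hb =>
    (hF₁contOn.mono (uIcc_subset_Icc ha hb)).intervalIntegrable
  obtain ⟨My, hMy⟩ := hybd
  have hF₂intOn : IntegrableOn (fun r => f (x₂ r) (y r)) (Icc t₀ (t₀ + h)) volume := by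
    have hx₂m : AEStronglyMeasurable x₂ (volume.restrict (Icc t₀ (t₀ + h))) :=
      hx₂cont.aestronglyMeasurable measurableSet_Icc
    have hpm : AEStronglyMeasurable (fun r => (x₂ r, y r))
        (volume.restrict (Icc t₀ (t₀ + h))) := hx₂m.prodMk hymeas
    have hF₂m : AEStronglyMeasurable (fun r => f (x₂ r) (y r))
        (volume.restrict (Icc t₀ (t₀ + h))) := hfc.comp_aestronglyMeasurable hpm
    obtain ⟨B, hB⟩ := (hW₂c.prod
      (isCompact_closedBall (0 : Fin m → ℝ) My)).exists_bound_of_continuousOn hfc.continuousOn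
    refine Integrable.mono' (integrable_const B) hF₂m ?_
    rw [ae_restrict_iff' measurableSet_Icc]
    refine ae_of_all _ fun r hr => hB (x₂ r, y r) ⟨hx₂W r hr, ?_⟩
    rw [mem_closedBall_zero_iff]
    exact hMy r hr
  have hF₂int : ∀ a ∈ Icc t₀ (t₀ + h), ∀ b ∈ Icc t₀ (t₀ + h),
      IntervalIntegrable (fun r => f (x₂ r) (y r)) volume a b := by
    intro a ha b hb
    constructor
    · exact hF₂intOn.mono_set (Ioc_subset_Icc_self.trans (Icc_subset_Icc ha.1 hb.2))
    · exact hF₂intOn.mono_set (Ioc_subset_Icc_self.trans (Icc_subset_Icc hb.1 ha.2))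
  -- difference of the solutions as an integral
  have hdiff : ∀ a ∈ Icc t₀ (t₀ + h), ∀ b ∈ Icc t₀ (t₀ + h), ∀ k : Fin n,
      (x₁ b k - x₂ b k) - (x₁ a k - x₂ a k)
        = ∫ r in a..b, (f (x₁ r) y_c k - f (x₂ r) (y r) k) := by
    intro a ha b hb k
    have e1 : ∀ c, ∀ hc : c ∈ Icc t₀ (t₀ + h),
        x₁ c k = x₀ k + ∫ r in t₀..c, f (x₁ r) y_c k := by
      intro c hc
      have := congrFun (hx₁ c hc) k
      rwa [Pi.add_apply, OdeAux.intervalIntegral_apply (hF₁int t₀ ht₀I c hc) k] at this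
    have e2 : ∀ c, ∀ hc : c ∈ Icc t₀ (t₀ + h),
        x₂ c k = xb₀ k + ∫ r in t₀..c, f (x₂ r) (y r) k := by
      intro c hc
      have := congrFun (hx₂ c hc) k
      rwa [Pi.add_apply, OdeAux.intervalIntegral_apply (hF₂int t₀ ht₀I c hc) k] at this
    have i1 : (∫ r in t₀..b, f (x₁ r) y_c k) - (∫ r in t₀..a, f (x₁ r) y_c k)
        = ∫ r in a..b, f (x₁ r) y_c k :=
      intervalIntegral.integral_interval_sub_left
        (OdeAux.IntervalIntegrable.comp_proj (hF₁int t₀ ht₀I b hb) k)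
        (OdeAux.IntervalIntegrable.comp_proj (hF₁int t₀ ht₀I a ha) k)
    have i2 : (∫ r in t₀..b, f (x₂ r) (y r) k) - (∫ r in t₀..a, f (x₂ r) (y r) k)
        = ∫ r in a..b, f (x₂ r) (y r) k :=
      intervalIntegral.integral_interval_sub_left
        (OdeAux.IntervalIntegrable.comp_proj (hF₂int t₀ ht₀I b hb) k)
        (OdeAux.IntervalIntegrable.comp_proj (hF₂int t₀ ht₀I a ha) k)
    have i3 : (∫ r in a..b, f (x₁ r) y_c k) - (∫ r in a..b, f (x₂ r) (y r) k)
        = ∫ r in a..b, (f (x₁ r) y_c k - f (x₂ r) (y r) k) :=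
      (intervalIntegral.integral_sub
        (OdeAux.IntervalIntegrable.comp_proj (hF₁int a ha b hb) k)
        (OdeAux.IntervalIntegrable.comp_proj (hF₂int a ha b hb) k)).symm
    rw [e1 b hb, e1 a ha, e2 b hb, e2 a ha, ← i3, ← i1, ← i2]
    ring
  -- mean value bound
  have hMVT : ∀ r ∈ Icc t₀ (t₀ + h), ∀ (a : Fin n) (σ : ℝ), (σ = 1 ∨ σ = -1) →
      σ * (x₁ r a - x₂ r a) = |x₁ r a - x₂ r a| →
      σ * (f (x₁ r) (y r) a - f (x₂ r) (y r) a) ≤ ∑ j, J a j * |x₁ r j - x₂ r j| := by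
    intro r hr a σ hσ hsa
    exact OdeAux.mvt_bound (hfd (y r) a) hW₂ (hx₁W₂ r hr) (hx₂W r hr) hσ hsa
      (fun x hx => hJdiag a x hx (y r) (hyWy r hr))
      (fun j hj x hx => hJoff a j (Ne.symm hj) x hx (y r) (hyWy r hr))
  have hPert : ∀ r ∈ Icc t₀ (t₀ + h), ∀ (a : Fin n) (σ : ℝ), |σ| = 1 →
      σ * (f (x₁ r) y_c a - f (x₁ r) (y r) a) ≤ C a := by
    intro r hr a σ hσ
    calc σ * (f (x₁ r) y_c a - f (x₁ r) (y r) a)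
        ≤ |σ * (f (x₁ r) y_c a - f (x₁ r) (y r) a)| := le_abs_self _
      _ = |f (x₁ r) y_c a - f (x₁ r) (y r) a| := by rw [abs_mul, hσ, one_mul]
      _ ≤ C a := hC a (x₁ r) (hx₁W r hr) (y r) (hyWy r hr)
  have hxd : ∀ j : Fin n, ContinuousOn (fun r => |x₁ r j - x₂ r j|) (Icc t₀ (t₀ + h)) := fun j =>
    (((continuous_apply j).comp_continuousOn hx₁cont).sub
      ((continuous_apply j).comp_continuousOn hx₂cont)).abs
  -- the key ε-perturbed strict bound
  have key : ∀ ε > (0:ℝ), ∀ r ∈ Icc t₀ (t₀ + h), ∀ a : Fin n, |x₁ r a - x₂ r a| <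
      ((NormedSpace.exp ((r - t₀) • J)).mulVec (fun j => |x₀ j - xb₀ j| + ε)) a +
      (∫ s in t₀..r, (NormedSpace.exp ((r - s) • J)).mulVec (fun j => C j + ε)) a := by
    intro ε hε
    set wε : Fin n → ℝ := fun j => |x₀ j - xb₀ j| + ε with hwε
    set Dε : Fin n → ℝ := fun j => C j + ε with hDε
    set v : ℝ → Fin n → ℝ := fun r =>
      (NormedSpace.exp ((r - t₀) • J)).mulVec wε +
        ∫ s in t₀..r, (NormedSpace.exp ((r - s) • J)).mulVec Dε with hv
    suffices hS : ∀ r ∈ Icc t₀ (t₀ + h), ∀ b : Fin n, |x₁ r b - x₂ r b| < v r b by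
      intro r hr b
      have := hS r hr b
      simpa [hv] using this
    have hvd : ∀ r, HasDerivAt v (J.mulVec (v r) + Dε) r := fun r =>
      OdeAux.flow_hasDerivAt J Dε wε t₀ r
    have hvcont : Continuous v := continuous_iff_continuousAt.2 fun r => (hvd r).continuousAt
    have hvdi : ∀ (r : ℝ) (b : Fin n),
        HasDerivAt (fun r => v r b) ((J.mulVec (v r)) b + Dε b) r := by
      intro r b
      have := (ContinuousLinearMap.proj (R := ℝ)
        (φ := fun _ : Fin n => ℝ) b).hasFDerivAt.comp_hasDerivAt r (hvd r)
      exact this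
    have hvci : ∀ b : Fin n, Continuous fun r => v r b := fun b =>
      (continuous_apply b).comp hvcont
    have hvt₀ : ∀ b, v t₀ b = wε b := by
      intro b
      simp [hv, sub_self, zero_smul, NormedSpace.exp_zero, Matrix.one_mulVec,
        intervalIntegral.integral_same]
    have hJvc : ∀ b : Fin n, Continuous fun r => (J.mulVec (v r)) b := fun b =>
      (continuous_apply b).comp ((OdeAux.mvCLM J).continuous.comp hvcont)
    have hvFTC : ∀ a b : ℝ, ∀ k : Fin n,
        (∫ r in a..b, ((J.mulVec (v r)) k + Dε k)) = v b k - v a k := by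
      intro a b k
      refine intervalIntegral.integral_eq_sub_of_hasDerivAt (fun r _ => hvdi r k) ?_
      exact ((hJvc k).add continuous_const).intervalIntegrable a b
    have hwε0 : ∀ j, 0 ≤ wε j := fun j => add_nonneg (abs_nonneg _) hε.le
    have hDε0 : ∀ j, 0 ≤ Dε j := fun j => add_nonneg (hC0 j) hε.le
    have hvpos : ∀ r ∈ Icc t₀ (t₀ + h), ∀ b : Fin n, 0 < v r b := by
      intro r hr b
      have hwb : 0 < wε b := by
        have := abs_nonneg (x₀ b - xb₀ b)
        simp only [hwε]
        linarith
      have h1 : Real.exp (-((r - t₀) * ∑ k, |J k k|)) * wε b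
          ≤ (NormedSpace.exp ((r - t₀) • J)).mulVec wε b :=
        OdeAux.le_exp_smul_mulVec J hJoff0 (sub_nonneg.2 hr.1) hwε0 b
      have h1' : 0 < (NormedSpace.exp ((r - t₀) • J)).mulVec wε b :=
        lt_of_lt_of_le (mul_pos (Real.exp_pos _) hwb) h1
      have hintc : Continuous fun s => (NormedSpace.exp ((r - s) • J)).mulVec Dε :=
        OdeAux.continuous_exp_mulVec J (continuous_const.sub continuous_id) Dε
      have h2 : 0 ≤ (∫ s in t₀..r, (NormedSpace.exp ((r - s) • J)).mulVec Dε) b := by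
        rw [OdeAux.intervalIntegral_apply (hintc.intervalIntegrable _ _) b]
        refine intervalIntegral.integral_nonneg hr.1 fun s hs => ?_
        refine le_trans ?_ (OdeAux.le_exp_smul_mulVec J hJoff0 (sub_nonneg.2 hs.2) hDε0 b)
        exact mul_nonneg (Real.exp_pos _).le (hDε0 b)
      have hvb : v r b = (NormedSpace.exp ((r - t₀) • J)).mulVec wε b
          + (∫ s in t₀..r, (NormedSpace.exp ((r - s) • J)).mulVec Dε) b := by
        simp [hv]
      linarith
    by_contra hcon
    push_neg at hcon
    obtain ⟨r₀, hr₀I, a₀, ha₀⟩ := hcon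
    set S : Set ℝ := ⋃ b : Fin n,
      (Icc t₀ (t₀ + h) ∩ {r | v r b - |x₁ r b - x₂ r b| ≤ 0}) with hSdef
    have hSsub : S ⊆ Icc t₀ (t₀ + h) := by
      intro r hr
      simp only [hSdef, mem_iUnion, mem_inter_iff, mem_setOf_eq] at hr
      obtain ⟨b, hb, _⟩ := hr
      exact hb
    have hSne : S.Nonempty := by
      refine ⟨r₀, ?_⟩
      simp only [hSdef, mem_iUnion, mem_inter_iff, mem_setOf_eq]
      exact ⟨a₀, hr₀I, by linarith⟩
    have hScl : IsClosed S := by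
      rw [hSdef]
      refine isClosed_iUnion_of_finite fun b => ?_
      have hcont : ContinuousOn (fun r => v r b - |x₁ r b - x₂ r b|) (Icc t₀ (t₀ + h)) :=
        ((hvci b).continuousOn).sub (hxd b)
      exact hcont.preimage_isClosed_of_isClosed isClosed_Icc isClosed_Iic
    have hbdd : BddBelow S := BddBelow.mono hSsub bddBelow_Icc
    set T := sInf S with hTdef
    have hTS : T ∈ S := hScl.csInf_mem hSne hbdd
    have hTI : T ∈ Icc t₀ (t₀ + h) := hSsub hTS
    obtain ⟨a, haTS⟩ : ∃ b : Fin n, v T b ≤ |x₁ T b - x₂ T b| := by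
      simp only [hSdef, mem_iUnion, mem_inter_iff, mem_setOf_eq] at hTS
      obtain ⟨b, _, hb⟩ := hTS
      exact ⟨b, by linarith⟩
    have ht₀S : t₀ ∉ S := by
      intro hmem
      simp only [hSdef, mem_iUnion, mem_inter_iff, mem_setOf_eq] at hmem
      obtain ⟨b, _, hb⟩ := hmem
      have h2 : v t₀ b = |x₀ b - xb₀ b| + ε := by
        rw [hvt₀ b]
      rw [hx₁t₀, hx₂t₀, h2] at hb
      linarith
    have ht₀T : t₀ < T := by
      rcases lt_or_eq_of_le hTI.1 with hlt | heq
      · exact hlt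
      · rw [← heq] at hTS
        exact absurd hTS ht₀S
    have hlt : ∀ r ∈ Ico t₀ T, ∀ b : Fin n, |x₁ r b - x₂ r b| < v r b := by
      intro r hr b
      by_contra hc
      push_neg at hc
      have hrI : r ∈ Icc t₀ (t₀ + h) := ⟨hr.1, le_trans hr.2.le hTI.2⟩
      have hrS : r ∈ S := by
        simp only [hSdef, mem_iUnion, mem_inter_iff, mem_setOf_eq]
        exact ⟨b, hrI, by linarith⟩
      exact absurd hr.2 (not_lt.2 (csInf_le hbdd hrS))
    have hleT : ∀ b : Fin n, |x₁ T b - x₂ T b| ≤ v T b := by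
      intro b
      have hne : (nhdsWithin T (Ico t₀ T)).NeBot := by
        rw [← mem_closure_iff_nhdsWithin_neBot, closure_Ico (ne_of_lt ht₀T)]
        exact ⟨ht₀T.le, le_refl T⟩
      have hsub : Ico t₀ T ⊆ Icc t₀ (t₀ + h) := fun r hr => ⟨hr.1, le_trans hr.2.le hTI.2⟩
      have h1 : Filter.Tendsto (fun r => |x₁ r b - x₂ r b|) (nhdsWithin T (Ico t₀ T))
          (nhds |x₁ T b - x₂ T b|) := (hxd b T hTI).mono hsub
      have h2 : Filter.Tendsto (fun r => v r b) (nhdsWithin T (Ico t₀ T)) (nhds (v T b)) :=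
        ((hvci b).continuousAt).continuousWithinAt
      exact le_of_tendsto_of_tendsto h1 h2
        (eventually_nhdsWithin_of_forall fun r hr => (hlt r hr b).le)
    have haT : |x₁ T a - x₂ T a| = v T a := le_antisymm (hleT a) haTS
    have hvTpos : 0 < v T a := hvpos T hTI a
    have habspos : 0 < |x₁ T a - x₂ T a| := by rw [haT]; exact hvTpos
    have haTne : x₁ T a - x₂ T a ≠ 0 := abs_pos.1 habspos
    set σ : ℝ := if 0 < x₁ T a - x₂ T a then 1 else -1 with hσdef
    have hσ : σ = 1 ∨ σ = -1 := by
      by_cases hp : 0 < x₁ T a - x₂ T a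
      · left; simp [hσdef, hp]
      · right; simp [hσdef, hp]
    have hσabs : |σ| = 1 := by rcases hσ with h' | h' <;> simp [h']
    have hcwa : ContinuousWithinAt (fun r => x₁ r a - x₂ r a) (Icc t₀ (t₀ + h)) T :=
      ((((continuous_apply a).comp_continuousOn hx₁cont).sub
        ((continuous_apply a).comp_continuousOn hx₂cont))) T hTI
    obtain ⟨δ₁, hδ₁pos, hδ₁⟩ :=
      Metric.continuousWithinAt_iff.1 hcwa |x₁ T a - x₂ T a| habspos
    have hsign : ∀ r ∈ Icc t₀ (t₀ + h), dist r T < δ₁ →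
        σ * (x₁ r a - x₂ r a) = |x₁ r a - x₂ r a| := by
      intro r hr hrd
      have hd := hδ₁ hr hrd
      rw [Real.dist_eq] at hd
      by_cases hp : 0 < x₁ T a - x₂ T a
      · have hpos : 0 < x₁ r a - x₂ r a := by
          have habs := abs_lt.1 hd
          rw [abs_of_pos hp] at habs
          linarith [habs.1]
        rw [hσdef]
        simp [hp, abs_of_pos hpos]
      · have hn : x₁ T a - x₂ T a < 0 := lt_of_le_of_ne (not_lt.1 hp) haTne
        have hneg : x₁ r a - x₂ r a < 0 := by
          have habs := abs_lt.1 hd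
          rw [abs_of_neg hn] at habs
          linarith [habs.2]
        rw [hσdef]
        simp [hp, abs_of_neg hneg]
    have hgapc : ContinuousWithinAt (fun r => v r a - |x₁ r a - x₂ r a|)
        (Icc t₀ (t₀ + h)) T :=
      (((hvci a).continuousAt).continuousWithinAt).sub ((hxd a) T hTI)
    have hgapT : v T a - |x₁ T a - x₂ T a| = 0 := by rw [haT]; ring
    obtain ⟨δ₂, hδ₂pos, hδ₂⟩ := Metric.continuousWithinAt_iff.1 hgapc
      (ε / (2 * (|J a a| + 1))) (div_pos hε (by positivity))
    set δ := min δ₁ δ₂ with hδdef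
    have hδpos : 0 < δ := lt_min hδ₁pos hδ₂pos
    set s := max t₀ (T - δ / 2) with hsdef
    have hst₀ : t₀ ≤ s := le_max_left _ _
    have hsT : s < T := max_lt ht₀T (by linarith)
    have hsI : s ∈ Icc t₀ (t₀ + h) := ⟨hst₀, le_trans hsT.le hTI.2⟩
    have hTs : T - s ≤ δ / 2 := by
      have := le_max_right t₀ (T - δ / 2)
      linarith
    have hrange : ∀ r ∈ Icc s T, r ∈ Icc t₀ (t₀ + h) ∧ dist r T < δ := by
      intro r hr
      refine ⟨⟨le_trans hst₀ hr.1, le_trans hr.2 hTI.2⟩, ?_⟩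
      rw [Real.dist_eq, abs_of_nonpos (by linarith [hr.2])]
      linarith [hr.1]
    have hler : ∀ r ∈ Icc s T, ∀ b : Fin n, |x₁ r b - x₂ r b| ≤ v r b := by
      intro r hr b
      rcases lt_or_eq_of_le hr.2 with h' | h'
      · exact (hlt r ⟨le_trans hst₀ hr.1, h'⟩ b).le
      · rw [h']
        exact hleT b
    have hsignr : ∀ r ∈ Icc s T, σ * (x₁ r a - x₂ r a) = |x₁ r a - x₂ r a| := fun r hr =>
      hsign r (hrange r hr).1 (lt_of_lt_of_le (hrange r hr).2 (min_le_left _ _))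
    have hdiag : ∀ r ∈ Icc s T,
        J a a * |x₁ r a - x₂ r a| ≤ J a a * v r a + ε / 2 := by
      intro r hr
      have h1 := hδ₂ (hrange r hr).1 (lt_of_lt_of_le (hrange r hr).2 (min_le_right _ _))
      rw [Real.dist_eq, hgapT, sub_zero] at h1
      obtain ⟨q, hq⟩ : ∃ q, q = |x₁ r a - x₂ r a| := ⟨_, rfl⟩
      rw [← hq] at h1 ⊢
      have e1 : J a a * q - J a a * v r a ≤ |J a a| * |v r a - q| := by
        calc J a a * q - J a a * v r a = J a a * (q - v r a) := by ring
          _ ≤ |J a a * (q - v r a)| := le_abs_self _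
          _ = |J a a| * |q - v r a| := abs_mul _ _
          _ = |J a a| * |v r a - q| := by rw [abs_sub_comm]
      have e2 : |J a a| * |v r a - q| ≤ (|J a a| + 1) * |v r a - q| := by
        have h0 := abs_nonneg (v r a - q)
        nlinarith
      have e3 : (|J a a| + 1) * |v r a - q| < (|J a a| + 1) * (ε / (2 * (|J a a| + 1))) :=
        mul_lt_mul_of_pos_left h1 (by positivity)
      have e4 : (|J a a| + 1) * (ε / (2 * (|J a a| + 1))) = ε / 2 := by
        have hne : |J a a| + 1 ≠ 0 := by positivity
        field_simp
      linarith
    have hsum : ∀ r ∈ Icc s T,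
        (∑ j, J a j * |x₁ r j - x₂ r j|) ≤ (J.mulVec (v r)) a + ε / 2 := by
      intro r hr
      have hmv : (J.mulVec (v r)) a = ∑ j, J a j * v r j := rfl
      rw [hmv]
      have step : ∀ j : Fin n, J a j * |x₁ r j - x₂ r j|
          ≤ J a j * v r j + (if j = a then ε / 2 else 0) := by
        intro j
        by_cases hj : j = a
        · subst hj
          simpa using hdiag r hr
        · simp only [hj, if_false, add_zero]
          exact mul_le_mul_of_nonneg_left (hler r hr j) (hJoff0 a j (Ne.symm hj))
      calc (∑ j, J a j * |x₁ r j - x₂ r j|)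
          ≤ ∑ j, (J a j * v r j + if j = a then ε / 2 else 0) :=
            Finset.sum_le_sum fun j _ => step j
        _ = (∑ j, J a j * v r j) + ε / 2 := by
            rw [Finset.sum_add_distrib, Finset.sum_ite_eq' Finset.univ a fun _ => ε / 2]
            simp
    have int₁ : IntervalIntegrable
        (fun r => σ * (f (x₁ r) y_c a - f (x₂ r) (y r) a)) volume s T :=
      ((OdeAux.IntervalIntegrable.comp_proj (hF₁int s hsI T hTI) a).sub
        (OdeAux.IntervalIntegrable.comp_proj (hF₂int s hsI T hTI) a)).const_mul σ
    have hcont_mid : ContinuousOn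
        (fun r => (∑ j, J a j * |x₁ r j - x₂ r j|) + C a) (Icc t₀ (t₀ + h)) := by
      refine ContinuousOn.add ?_ continuousOn_const
      exact continuousOn_finset_sum _ fun j _ => continuousOn_const.mul (hxd j)
    have int₂ : IntervalIntegrable
        (fun r => (∑ j, J a j * |x₁ r j - x₂ r j|) + C a) volume s T :=
      (hcont_mid.mono (uIcc_subset_Icc hsI hTI)).intervalIntegrable
    have int₃ : IntervalIntegrable
        (fun r => (J.mulVec (v r)) a + C a + ε / 2) volume s T :=
      (((hJvc a).add continuous_const).add continuous_const).intervalIntegrable s T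
    have e₀ : |x₁ T a - x₂ T a| - |x₁ s a - x₂ s a|
        = ∫ r in s..T, σ * (f (x₁ r) y_c a - f (x₂ r) (y r) a) := by
      have hTmem : T ∈ Icc s T := ⟨hsT.le, le_refl T⟩
      have hsmem : s ∈ Icc s T := ⟨le_refl s, hsT.le⟩
      rw [← hsignr T hTmem, ← hsignr s hsmem, intervalIntegral.integral_const_mul,
        ← hdiff s hsI T hTI a]
      ring
    have e₁ : (∫ r in s..T, σ * (f (x₁ r) y_c a - f (x₂ r) (y r) a))
        ≤ ∫ r in s..T, ((∑ j, J a j * |x₁ r j - x₂ r j|) + C a) := by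
      refine intervalIntegral.integral_mono_on hsT.le int₁ int₂ fun r hr => ?_
      have hrI := (hrange r hr).1
      have hdec : σ * (f (x₁ r) y_c a - f (x₂ r) (y r) a)
          = σ * (f (x₁ r) y_c a - f (x₁ r) (y r) a)
            + σ * (f (x₁ r) (y r) a - f (x₂ r) (y r) a) := by ring
      rw [hdec]
      have h₁ := hPert r hrI a σ hσabs
      have h₂ := hMVT r hrI a σ hσ (hsignr r hr)
      linarith
    have e₂ : (∫ r in s..T, ((∑ j, J a j * |x₁ r j - x₂ r j|) + C a))
        ≤ ∫ r in s..T, ((J.mulVec (v r)) a + C a + ε / 2) := by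
      refine intervalIntegral.integral_mono_on hsT.le int₂ int₃ fun r hr => ?_
      have := hsum r hr
      linarith
    have e₃ : (∫ r in s..T, ((J.mulVec (v r)) a + C a + ε / 2))
        = v T a - v s a - (T - s) * (ε / 2) := by
      have h1 := hvFTC s T a
      have h2 : (∫ r in s..T, ((J.mulVec (v r)) a + C a + ε / 2))
          = (∫ r in s..T, ((J.mulVec (v r)) a + Dε a)) - ∫ _ in s..T, (ε / 2 : ℝ) := by
        rw [← intervalIntegral.integral_sub (f := fun r => (J.mulVec (v r)) a + Dε a) (g := fun _ => ε / 2)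
          (((hJvc a).add continuous_const).intervalIntegrable s T) intervalIntegrable_const]
        refine intervalIntegral.integral_congr fun r _ => ?_
        simp only [hDε]
        ring
      rw [h2, h1, intervalIntegral.integral_const, smul_eq_mul]
    have hus : |x₁ s a - x₂ s a| < v s a := hlt s ⟨hst₀, hsT⟩ a
    have hfin : |x₁ T a - x₂ T a| - |x₁ s a - x₂ s a|
        ≤ v T a - v s a - (T - s) * (ε / 2) := by
      rw [e₀, ← e₃]
      exact le_trans e₁ e₂
    have hTspos : 0 < (T - s) * (ε / 2) := mul_pos (by linarith) (by linarith)
    linarith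
  -- pass to the limit ε → 0⁺
  set u₀ : Fin n → ℝ := fun j => |x₀ j - xb₀ j| with hu₀
  set onev : Fin n → ℝ := fun _ => (1:ℝ) with honev
  set R : ℝ := ((NormedSpace.exp ((t - t₀) • J)).mulVec u₀) i +
      (∫ s in t₀..t, (NormedSpace.exp ((t - s) • J)).mulVec C) i with hR
  have hsplit : ∀ ε : ℝ,
      ((NormedSpace.exp ((t - t₀) • J)).mulVec (fun j => |x₀ j - xb₀ j| + ε)) i +
        (∫ s in t₀..t, (NormedSpace.exp ((t - s) • J)).mulVec (fun j => C j + ε)) i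
      = R + ε * (((NormedSpace.exp ((t - t₀) • J)).mulVec onev) i +
          (∫ s in t₀..t, (NormedSpace.exp ((t - s) • J)).mulVec onev) i) := by
    intro ε
    have h1 : (fun j => |x₀ j - xb₀ j| + ε) = u₀ + ε • onev := by
      funext j
      simp [hu₀, honev, smul_eq_mul]
    have h2 : (fun j => C j + ε) = C + ε • onev := by
      funext j
      simp [honev, smul_eq_mul]
    have hic : IntervalIntegrable
        (fun s => (NormedSpace.exp ((t - s) • J)).mulVec C) volume t₀ t :=
      (OdeAux.continuous_exp_mulVec J (continuous_const.sub continuous_id) C).intervalIntegrable _ _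
    have hio : IntervalIntegrable
        (fun s => (NormedSpace.exp ((t - s) • J)).mulVec onev) volume t₀ t :=
      (OdeAux.continuous_exp_mulVec J
        (continuous_const.sub continuous_id) onev).intervalIntegrable _ _
    have h3 : (∫ s in t₀..t, (NormedSpace.exp ((t - s) • J)).mulVec (C + ε • onev))
        = (∫ s in t₀..t, (NormedSpace.exp ((t - s) • J)).mulVec C)
          + ε • ∫ s in t₀..t, (NormedSpace.exp ((t - s) • J)).mulVec onev := by
      have h4 : (fun s => (NormedSpace.exp ((t - s) • J)).mulVec (C + ε • onev))
          = fun s => (NormedSpace.exp ((t - s) • J)).mulVec C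
            + ε • (NormedSpace.exp ((t - s) • J)).mulVec onev := by
        funext s
        rw [Matrix.mulVec_add, Matrix.mulVec_smul]
      have hio2 : IntervalIntegrable
          (fun s => ε • (NormedSpace.exp ((t - s) • J)).mulVec onev) volume t₀ t :=
        (show Continuous (fun s => ε • (NormedSpace.exp ((t - s) • J)).mulVec onev) from
          (OdeAux.continuous_exp_mulVec J (c := fun s => t - s)
          (continuous_const.sub continuous_id) onev).const_smul ε).intervalIntegrable _ _
      rw [h4, intervalIntegral.integral_add hic hio2, intervalIntegral.integral_smul]
    rw [h1, h2, h3, Matrix.mulVec_add, Matrix.mulVec_smul, hR]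
    simp only [Pi.add_apply, Pi.smul_apply, smul_eq_mul]
    ring
  obtain ⟨KT, hkey⟩ : ∃ KT : ℝ, ∀ ε > (0:ℝ), |x₁ t i - x₂ t i| ≤ R + ε * KT := by
    refine ⟨((NormedSpace.exp ((t - t₀) • J)).mulVec onev) i +
      (∫ s in t₀..t, (NormedSpace.exp ((t - s) • J)).mulVec onev) i, fun ε hε => ?_⟩
    have hlt := (key ε hε t htI i).le
    rw [hsplit ε] at hlt
    exact hlt
  show |x₁ t i - x₂ t i| ≤ R
  by_contra hfinal
  push_neg at hfinal
  rcases le_or_gt KT 0 with hK | hK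
  · nlinarith [hkey 1 one_pos]
  · have hdpos : 0 < |x₁ t i - x₂ t i| - R := by linarith
    have h2 := hkey ((|x₁ t i - x₂ t i| - R) / (2 * KT)) (div_pos hdpos (by positivity))
    have h3 : (|x₁ t i - x₂ t i| - R) / (2 * KT) * KT = (|x₁ t i - x₂ t i| - R) / 2 := by
      field_simp
    rw [h3] at h2
    linarith
end

section
/- With the same setup as the comparison theorem for ODE perturbations, define instead [δ] = {f(x,y_c) − f(x,y) : x ∈ [W₂], y ∈ [W_y]}, C_i ≥ sup|[δ_i]|, and J_{ii} ≥ sup μ(∂f_i/∂x_i([W₂], y_c)), J_{ij} ≥ sup ‖∂f_i/∂x_j([W₂], y_c)‖ for i≠j (Jacobian blocks evaluated only at the fixed parameter y_c). Then the same conclusion holds: |x₁,ᵢ(t) − x₂,ᵢ(t)| ≤ (e^{J(t−t₀)}·|x₀ − x̄₀|)_i + (∫_{t₀}^t e^{J(t−s)} C ds)_i for all t ∈ [t₀, t₀+h] and all i. -/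
open Set MeasureTheory

section
open NormedSpace Filter Topology

namespace OdeVar
variable {n : ℕ}

lemma expEntry_hasDerivAt (J : Matrix (Fin n) (Fin n) ℝ) (t : ℝ) (i j : Fin n) :
    HasDerivAt (fun u : ℝ => exp (u • J) i j) ((exp (t • J) * J) i j) t := by
  letI : SeminormedRing (Matrix (Fin n) (Fin n) ℝ) := Matrix.linftyOpSemiNormedRing
  letI : NormedRing (Matrix (Fin n) (Fin n) ℝ) := Matrix.linftyOpNormedRing
  letI : NormedAlgebra ℝ (Matrix (Fin n) (Fin n) ℝ) := Matrix.linftyOpNormedAlgebra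
  haveI : CompleteSpace (Matrix (Fin n) (Fin n) ℝ) := by
    change CompleteSpace (Fin n → Fin n → ℝ); infer_instance
  have h := hasDerivAt_exp_smul_const J t
  have hc : Continuous (fun M : Matrix (Fin n) (Fin n) ℝ => M i j) := by
    change Continuous (fun M : Fin n → Fin n → ℝ => M i j)
    exact (continuous_apply j).comp (continuous_apply i)
  let φ : Matrix (Fin n) (Fin n) ℝ →L[ℝ] ℝ :=
    { toFun := fun M => M i j,
      map_add' := fun _ _ => rfl,
      map_smul' := fun _ _ => rfl,
      cont := hc }
  exact φ.hasFDerivAt.comp_hasDerivAt t h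

lemma expEntry_continuous (J : Matrix (Fin n) (Fin n) ℝ) (i j : Fin n) :
    Continuous (fun u : ℝ => exp (u • J) i j) :=
  continuous_iff_continuousAt.2 fun t => (expEntry_hasDerivAt J t i j).continuousAt

lemma exp_smul_add (J : Matrix (Fin n) (Fin n) ℝ) (s t : ℝ) :
    exp ((s + t) • J) = exp (s • J) * exp (t • J) := by
  rw [add_smul]
  exact Matrix.exp_add_of_commute _ _ (((Commute.refl J).smul_left s).smul_right t)

lemma exp_commute (J : Matrix (Fin n) (Fin n) ℝ) (t : ℝ) :
    Commute J (exp (t • J)) := by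
  letI : SeminormedRing (Matrix (Fin n) (Fin n) ℝ) := Matrix.linftyOpSemiNormedRing
  letI : NormedRing (Matrix (Fin n) (Fin n) ℝ) := Matrix.linftyOpNormedRing
  letI : NormedAlgebra ℝ (Matrix (Fin n) (Fin n) ℝ) := Matrix.linftyOpNormedAlgebra
  haveI : CompleteSpace (Matrix (Fin n) (Fin n) ℝ) := by
    change CompleteSpace (Fin n → Fin n → ℝ); infer_instance
  exact Commute.exp_right ((Commute.refl J).smul_right t)

lemma mulVec_apply (M : Matrix (Fin n) (Fin n) ℝ) (w : Fin n → ℝ) (i : Fin n) :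
    M.mulVec w i = ∑ j, M i j * w j := by
  simp [Matrix.mulVec, dotProduct]

/-- The explicit candidate solution of `v' = J v + c`, `v t₀ = a`. -/
noncomputable def Vfun (t₀ : ℝ) (J : Matrix (Fin n) (Fin n) ℝ) (a c : Fin n → ℝ)
    (t : ℝ) (i : Fin n) : ℝ :=
  ((exp ((t - t₀) • J)).mulVec a) i + ∫ s in t₀..t, ((exp ((t - s) • J)).mulVec c) i

section Vprops
variable (t₀ : ℝ) (J : Matrix (Fin n) (Fin n) ℝ) (a c : Fin n → ℝ)

private lemma q_cont (k : Fin n) :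
    Continuous fun s => ((exp ((t₀ - s) • J)).mulVec c) k := by
  have : ∀ s, ((exp ((t₀ - s) • J)).mulVec c) k = ∑ l, exp ((t₀ - s) • J) k l * c l :=
    fun s => mulVec_apply _ _ _
  simp only [this]
  exact continuous_finset_sum _ fun l _ =>
    ((expEntry_continuous J k l).comp (continuous_const.sub continuous_id)).mul continuous_const

private lemma exp_split (t s : ℝ) :
    exp ((t - s) • J) = exp ((t - t₀) • J) * exp ((t₀ - s) • J) := by
  rw [← exp_smul_add]
  norm_num

lemma Vfun_eq (t : ℝ) (i : Fin n) :
    Vfun t₀ J a c t i = ∑ k, exp ((t - t₀) • J) i k *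
      (a k + ∫ s in t₀..t, ((exp ((t₀ - s) • J)).mulVec c) k) := by
  have h1 : ∀ s : ℝ, ((exp ((t - s) • J)).mulVec c) i
      = ∑ k, exp ((t - t₀) • J) i k * ((exp ((t₀ - s) • J)).mulVec c) k := by
    intro s
    rw [exp_split t₀ J t s, ← Matrix.mulVec_mulVec, mulVec_apply]
  have h2 : (∫ s in t₀..t, ((exp ((t - s) • J)).mulVec c) i)
      = ∑ k, exp ((t - t₀) • J) i k *
          ∫ s in t₀..t, ((exp ((t₀ - s) • J)).mulVec c) k := by
    simp only [h1]
    rw [intervalIntegral.integral_finset_sum]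
    · exact Finset.sum_congr rfl fun k _ => intervalIntegral.integral_const_mul _ _
    · intro k _
      exact (continuous_const.mul (q_cont t₀ J c k)).intervalIntegrable _ _
  rw [Vfun, h2, mulVec_apply]
  rw [← Finset.sum_add_distrib]
  exact Finset.sum_congr rfl fun k _ => by ring

lemma Vfun_hasDerivAt (t : ℝ) (i : Fin n) :
    HasDerivAt (fun u => Vfun t₀ J a c u i)
      ((J.mulVec fun j => Vfun t₀ J a c t j) i + c i) t := by
  set Q : ℝ → Fin n → ℝ := fun u k => ∫ s in t₀..u, ((exp ((t₀ - s) • J)).mulVec c) k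
    with hQdef
  have hQderiv : ∀ k, HasDerivAt (fun u => Q u k) (((exp ((t₀ - t) • J)).mulVec c) k) t :=
    fun k => ((q_cont t₀ J c k).integral_hasStrictDerivAt t₀ t).hasDerivAt
  have hEk : ∀ k, HasDerivAt (fun u : ℝ => exp ((u - t₀) • J) i k)
      ((exp ((t - t₀) • J) * J) i k) t := by
    intro k
    have := (expEntry_hasDerivAt J (t - t₀) i k).comp t ((hasDerivAt_id t).sub_const t₀)
    rw [mul_one] at this
    exact this
  have h1 : HasDerivAt (fun u => ∑ k, exp ((u - t₀) • J) i k * (a k + Q u k))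
      (∑ k, ((exp ((t - t₀) • J) * J) i k * (a k + Q t k) +
        exp ((t - t₀) • J) i k * ((exp ((t₀ - t) • J)).mulVec c) k)) t := by
    apply HasDerivAt.fun_sum
    intro k _
    exact (hEk k).mul ((hQderiv k).const_add (a k))
  have hsum : (∑ k, ((exp ((t - t₀) • J) * J) i k * (a k + Q t k) +
        exp ((t - t₀) • J) i k * ((exp ((t₀ - t) • J)).mulVec c) k))
      = (J.mulVec fun j => Vfun t₀ J a c t j) i + c i := by
    rw [Finset.sum_add_distrib]
    congr 1
    · -- first sum equals (J.mulVec (Vfun t)) i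
      rw [(exp_commute J (t - t₀)).eq.symm]
      simp only [hQdef]
      calc ∑ k, (J * exp ((t - t₀) • J)) i k *
              (a k + ∫ s in t₀..t, ((exp ((t₀ - s) • J)).mulVec c) k)
          = ∑ k, ∑ j, J i j * (exp ((t - t₀) • J) j k *
              (a k + ∫ s in t₀..t, ((exp ((t₀ - s) • J)).mulVec c) k)) := by
            refine Finset.sum_congr rfl fun k _ => ?_
            rw [Matrix.mul_apply, Finset.sum_mul]
            exact Finset.sum_congr rfl fun j _ => by ring
        _ = ∑ j, ∑ k, J i j * (exp ((t - t₀) • J) j k *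
              (a k + ∫ s in t₀..t, ((exp ((t₀ - s) • J)).mulVec c) k)) := Finset.sum_comm
        _ = ∑ j, J i j * (∑ k, exp ((t - t₀) • J) j k *
              (a k + ∫ s in t₀..t, ((exp ((t₀ - s) • J)).mulVec c) k)) :=
            Finset.sum_congr rfl fun j _ => (Finset.mul_sum _ _ _).symm
        _ = (J.mulVec fun j => Vfun t₀ J a c t j) i := by
            rw [mulVec_apply]
            exact Finset.sum_congr rfl fun j _ => by rw [Vfun_eq t₀ J a c t j]
    · -- second sum equals c i
      have : (∑ k, exp ((t - t₀) • J) i k * ((exp ((t₀ - t) • J)).mulVec c) k)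
          = ((exp ((t - t₀) • J) * exp ((t₀ - t) • J)).mulVec c) i := by
        rw [← Matrix.mulVec_mulVec, mulVec_apply]
      rw [this, ← exp_smul_add]
      norm_num
  rw [hsum] at h1
  have : (fun u => Vfun t₀ J a c u i) = fun u => ∑ k, exp ((u - t₀) • J) i k * (a k + Q u k) := by
    funext u
    exact Vfun_eq t₀ J a c u i
  rw [this]
  exact h1

lemma Vfun_continuous (i : Fin n) : Continuous fun t => Vfun t₀ J a c t i :=
  continuous_iff_continuousAt.2 fun t => (Vfun_hasDerivAt t₀ J a c t i).continuousAt

lemma Vfun_t₀ (i : Fin n) : Vfun t₀ J a c t₀ i = a i := by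
  rw [Vfun, intervalIntegral.integral_same, sub_self, zero_smul, exp_zero, Matrix.one_mulVec,
    add_zero]

lemma Vfun_integral_eq (t : ℝ) (i : Fin n) :
    Vfun t₀ J a c t i = a i + ∫ s in t₀..t, ((J.mulVec fun j => Vfun t₀ J a c s j) i + c i) := by
  have hcont : Continuous fun s => (J.mulVec fun j => Vfun t₀ J a c s j) i + c i := by
    have h1 : ∀ s, (J.mulVec fun j => Vfun t₀ J a c s j) i = ∑ j, J i j * Vfun t₀ J a c s j :=
      fun s => mulVec_apply _ _ _
    simp only [h1]
    exact (continuous_finset_sum _ fun j _ =>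
      continuous_const.mul (Vfun_continuous t₀ J a c j)).add continuous_const
  have hftc := intervalIntegral.integral_eq_sub_of_hasDerivAt
    (f := fun u => Vfun t₀ J a c u i)
    (f' := fun s => (J.mulVec fun j => Vfun t₀ J a c s j) i + c i)
    (fun s _ => Vfun_hasDerivAt t₀ J a c s i) (hcont.intervalIntegrable t₀ t)
  rw [hftc]
  show Vfun t₀ J a c t i = a i + (Vfun t₀ J a c t i - Vfun t₀ J a c t₀ i)
  rw [Vfun_t₀]
  ring

lemma Vfun_add_smul (ε t : ℝ) (i : Fin n) :
    Vfun t₀ J (a + ε • (1 : Fin n → ℝ)) (c + ε • (1 : Fin n → ℝ)) t i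
      = Vfun t₀ J a c t i + ε * Vfun t₀ J (1 : Fin n → ℝ) (1 : Fin n → ℝ) t i := by
  have hq : (fun s => ((exp ((t₀ - s) • J)).mulVec (c + ε • (1 : Fin n → ℝ)))) =
      fun s k => ((exp ((t₀ - s) • J)).mulVec c) k
        + ε * ((exp ((t₀ - s) • J)).mulVec (1 : Fin n → ℝ)) k := by
    funext s k
    rw [Matrix.mulVec_add, Matrix.mulVec_smul]
    simp [smul_eq_mul]
  have hQ : ∀ k, (∫ s in t₀..t, ((exp ((t₀ - s) • J)).mulVec (c + ε • (1 : Fin n → ℝ))) k)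
      = (∫ s in t₀..t, ((exp ((t₀ - s) • J)).mulVec c) k)
        + ε * ∫ s in t₀..t, ((exp ((t₀ - s) • J)).mulVec (1 : Fin n → ℝ)) k := by
    intro k
    rw [intervalIntegral.integral_congr (fun s _ => congrFun (congrFun hq s) k)]
    rw [intervalIntegral.integral_add ((q_cont t₀ J c k).intervalIntegrable _ _)
      (((q_cont t₀ J (1 : Fin n → ℝ) k).intervalIntegrable _ _).const_mul ε),
      intervalIntegral.integral_const_mul]
  simp only [Vfun_eq, hQ, Pi.add_apply, Pi.smul_apply, Pi.one_apply, smul_eq_mul, mul_one]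
  rw [Finset.mul_sum, ← Finset.sum_add_distrib]
  exact Finset.sum_congr rfl fun k _ => by ring

lemma iint_apply {F : ℝ → Fin n → ℝ} {b b' : ℝ}
    (hF : IntervalIntegrable F volume b b') (i : Fin n) :
    (∫ s in b..b', F s) i = ∫ s in b..b', F s i := by
  have := (ContinuousLinearMap.proj (R := ℝ) (φ := fun _ : Fin n => ℝ) i).intervalIntegral_comp_comm hF
  simpa using this.symm

lemma Vfun_goal_eq (t : ℝ) (i : Fin n) :
    ((exp ((t - t₀) • J)).mulVec a) i + (∫ s in t₀..t, (exp ((t - s) • J)).mulVec c) i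
      = Vfun t₀ J a c t i := by
  rw [Vfun]
  congr 1
  have hcontPi : Continuous fun s => (exp ((t - s) • J)).mulVec c :=
    continuous_pi fun k => q_cont t J c k
  exact iint_apply (hcontPi.intervalIntegrable _ _) i

end Vprops

lemma nonneg_at_right {φ : ℝ → ℝ} {t₀ T τ : ℝ} (hφ : ContinuousOn φ (Icc t₀ T))
    (hτ : τ ∈ Icc t₀ T) (ht₀ : t₀ < τ) (hpos : ∀ s ∈ Ico t₀ τ, 0 ≤ φ s) : 0 ≤ φ τ := by
  have hsub : Ico t₀ τ ⊆ Icc t₀ T := fun s hs => ⟨hs.1, hs.2.le.trans hτ.2⟩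
  have hcw : ContinuousWithinAt φ (Ico t₀ τ) τ := (hφ τ hτ).mono hsub
  have hne : (𝓝[Ico t₀ τ] τ).NeBot := by
    rw [← mem_closure_iff_nhdsWithin_neBot, closure_Ico ht₀.ne]
    exact ⟨ht₀.le, le_rfl⟩
  exact ge_of_tendsto hcw (eventually_nhdsWithin_of_forall hpos)

/-- Core strict comparison lemma. -/
lemma core {t₀ T ε : ℝ} (hT : t₀ < T) (hε : 0 < ε)
    {J : Matrix (Fin n) (Fin n) ℝ} (hJoff : ∀ i j, i ≠ j → 0 ≤ J i j)
    {C : Fin n → ℝ} (hC0 : ∀ i, 0 ≤ C i)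
    {e v g : ℝ → Fin n → ℝ}
    (he : ∀ i, ContinuousOn (fun t => e t i) (Icc t₀ T))
    (hv : ∀ i, ContinuousOn (fun t => v t i) (Icc t₀ T))
    (hgi : ∀ i, IntervalIntegrable (fun s => g s i) volume t₀ T)
    (hee : ∀ t ∈ Icc t₀ T, ∀ i, e t i = e t₀ i + ∫ s in t₀..t, g s i)
    (hvv : ∀ t ∈ Icc t₀ T, ∀ i,
      v t i = v t₀ i + ∫ s in t₀..t, ((J.mulVec fun j => v s j) i + C i + ε))
    (h0 : ∀ i, |e t₀ i| < v t₀ i)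
    (hkey : ∀ s ∈ Icc t₀ T, ∀ i, ∀ σ : ℝ, σ = 1 ∨ σ = -1 → 0 ≤ σ * e s i →
        σ * g s i ≤ (∑ j, J i j * |e s j|) + C i) :
    ∀ t ∈ Icc t₀ T, ∀ i, |e t i| < v t i := by
  -- integrand for v
  have hmv : ∀ i r, (J.mulVec fun j => v r j) i = ∑ j, J i j * v r j := by
    intro i r; simp [Matrix.mulVec, dotProduct]
  have hFc : ∀ i, ContinuousOn (fun r => (J.mulVec fun j => v r j) i + C i + ε) (Icc t₀ T) := by
    intro i
    have : ContinuousOn (fun r => (∑ j, J i j * v r j) + C i + ε) (Icc t₀ T) :=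
      ((continuousOn_finset_sum _ fun j _ => continuousOn_const.mul (hv j)).add
        continuousOn_const).add continuousOn_const
    simpa only [hmv] using this
  have hFint : ∀ i, ∀ s ∈ Icc t₀ T, ∀ τ ∈ Icc t₀ T,
      IntervalIntegrable (fun r => (J.mulVec fun j => v r j) i + C i + ε) volume s τ := by
    intro i s hs τ hτ
    apply ContinuousOn.intervalIntegrable
    exact (hFc i).mono (uIcc_subset_Icc hs hτ)
  have hvdiff : ∀ i, ∀ s ∈ Icc t₀ T, ∀ τ ∈ Icc t₀ T,
      v τ i - v s i = ∫ r in s..τ, ((J.mulVec fun j => v r j) i + C i + ε) := by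
    intro i s hs τ hτ
    have h1 := hvv τ hτ i
    have h2 := hvv s hs i
    have h3 := intervalIntegral.integral_interval_sub_left
      (hFint i t₀ (left_mem_Icc.2 hT.le) τ hτ) (hFint i t₀ (left_mem_Icc.2 hT.le) s hs)
    rw [h1, h2]; rw [← h3]; ring
  have hgint : ∀ i, ∀ s ∈ Icc t₀ T, ∀ τ ∈ Icc t₀ T,
      IntervalIntegrable (fun r => g r i) volume s τ := by
    intro i s hs τ hτ
    apply (hgi i).mono_set
    rw [uIcc_of_le hT.le]
    exact uIcc_subset_Icc hs hτ
  have hediff : ∀ i, ∀ s ∈ Icc t₀ T, ∀ τ ∈ Icc t₀ T,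
      e τ i - e s i = ∫ r in s..τ, g r i := by
    intro i s hs τ hτ
    have h3 := intervalIntegral.integral_interval_sub_left
      (hgint i t₀ (left_mem_Icc.2 hT.le) τ hτ) (hgint i t₀ (left_mem_Icc.2 hT.le) s hs)
    rw [hee τ hτ i, hee s hs i, ← h3]; ring
  -- Positivity of v
  have hvpos : ∀ t ∈ Icc t₀ T, ∀ i, 0 < v t i := by
    by_contra hcon
    push_neg at hcon
    obtain ⟨t1, ht1, i1, hle1⟩ := hcon
    set S := {t | t ∈ Icc t₀ T ∧ ∃ i, v t i ≤ 0} with hS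
    have hSclosed : IsClosed S := by
      have : S = ⋃ i, (Icc t₀ T ∩ (fun t => v t i) ⁻¹' Iic 0) := by
        ext t
        simp only [hS, mem_setOf_eq, mem_iUnion, mem_inter_iff, mem_preimage, mem_Iic,
          exists_and_left]
      rw [this]
      exact isClosed_iUnion_of_finite fun i =>
        (hv i).preimage_isClosed_of_isClosed isClosed_Icc isClosed_Iic
    have hSne : S.Nonempty := ⟨t1, ht1, i1, hle1⟩
    have hSbdd : BddBelow S := ⟨t₀, fun t ht => ht.1.1⟩
    set τ := sInf S with hτdef
    have hτS : τ ∈ S := hSclosed.csInf_mem hSne hSbdd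
    obtain ⟨hτIcc, i, hvi⟩ := hτS
    have ht₀τ : t₀ < τ := by
      rcases lt_or_eq_of_le hτIcc.1 with hlt | heqt
      · exact hlt
      · exfalso
        have := h0 i
        have h2 : 0 ≤ |e t₀ i| := abs_nonneg _
        rw [← heqt] at hvi
        linarith
    have hbefore : ∀ s ∈ Ico t₀ τ, ∀ j, 0 < v s j := by
      intro s hs j
      by_contra hle'
      push_neg at hle'
      exact absurd (csInf_le hSbdd ⟨⟨hs.1, hs.2.le.trans hτIcc.2⟩, j, hle'⟩) (not_le.2 hs.2)
    have hτnonneg : ∀ j, 0 ≤ v τ j := fun j =>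
      nonneg_at_right (hv j) hτIcc ht₀τ (fun s hs => (hbefore s hs j).le)
    have hviz : v τ i = 0 := le_antisymm hvi (hτnonneg i)
    set K := |J i i| + 1 with hK
    have hKpos : 0 < K := by positivity
    have hcw := hv i τ hτIcc
    rw [Metric.continuousWithinAt_iff] at hcw
    obtain ⟨δ, hδpos, hδ⟩ := hcw (ε / (2 * K)) (by positivity)
    set s := max t₀ (τ - δ / 2) with hsdef
    have hst₀ : t₀ ≤ s := le_max_left _ _
    have hsτ : s < τ := max_lt ht₀τ (by linarith)
    have hsIcc : s ∈ Icc t₀ T := ⟨hst₀, hsτ.le.trans hτIcc.2⟩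
    have hrange : ∀ r ∈ Icc s τ, r ∈ Icc t₀ T := fun r hr =>
      ⟨hst₀.trans hr.1, hr.2.trans hτIcc.2⟩
    have hdist : ∀ r ∈ Icc s τ, dist r τ < δ := by
      intro r hr
      have h1 : τ - δ / 2 ≤ s := le_max_right _ _
      rw [Real.dist_eq, abs_of_nonpos (by linarith [hr.2])]
      linarith [hr.1]
    have hsmall : ∀ r ∈ Icc s τ, v r i ≤ ε / (2 * K) := by
      intro r hr
      have := hδ (hrange r hr) (hdist r hr)
      rw [Real.dist_eq, hviz, sub_zero] at this
      exact (le_abs_self _).trans this.le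
    have hnn : ∀ r ∈ Icc s τ, ∀ j, 0 ≤ v r j := by
      intro r hr j
      rcases eq_or_lt_of_le hr.2 with hcase | hcase
      · rw [hcase]; exact hτnonneg j
      · exact (hbefore r ⟨hst₀.trans hr.1, hcase⟩ j).le
    have hFi_lb : ∀ r ∈ Icc s τ, ε / 2 ≤ (J.mulVec fun j => v r j) i + C i + ε := by
      intro r hr
      rw [hmv]
      have hsplit : (∑ j, J i j * v r j) =
          J i i * v r i + ∑ j ∈ Finset.univ.erase i, J i j * v r j :=
        (Finset.add_sum_erase Finset.univ (fun j => J i j * v r j) (Finset.mem_univ i)).symm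
      rw [hsplit]
      have h1 : 0 ≤ ∑ j ∈ Finset.univ.erase i, J i j * v r j :=
        Finset.sum_nonneg fun j hj =>
          mul_nonneg (hJoff i j (Finset.ne_of_mem_erase hj).symm) (hnn r hr j)
      have hx := hnn r hr i
      have hxe := hsmall r hr
      have h4 : |J i i| * v r i ≤ K * (ε / (2 * K)) :=
        mul_le_mul (by rw [hK]; linarith) hxe hx hKpos.le
      have h5 : K * (ε / (2 * K)) = ε / 2 := by
        have : K ≠ 0 := hKpos.ne'
        field_simp
      rw [h5] at h4
      have h6 : (-|J i i|) * v r i ≤ J i i * v r i :=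
        mul_le_mul_of_nonneg_right (neg_abs_le _) hx
      have h2 : -(ε / 2) ≤ J i i * v r i := by nlinarith
      have h3 := hC0 i
      linarith
    have hconst : IntervalIntegrable (fun _ : ℝ => ε / 2) volume s τ :=
      intervalIntegrable_const
    have hmono := intervalIntegral.integral_mono_on hsτ.le hconst
      (hFint i s hsIcc τ hτIcc) hFi_lb
    rw [intervalIntegral.integral_const] at hmono
    have hdiffv := hvdiff i s hsIcc τ hτIcc
    have hvs := hbefore s ⟨hst₀, hsτ⟩ i
    have : (τ - s) * (ε / 2) ≤ v τ i - v s i := by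
      rw [hdiffv]; simpa [smul_eq_mul] using hmono
    nlinarith [hsτ]
  -- Main comparison
  by_contra hcon
  push_neg at hcon
  obtain ⟨t1, ht1, i1, hle1⟩ := hcon
  set S := {t | t ∈ Icc t₀ T ∧ ∃ i, v t i ≤ |e t i|} with hS
  have hSclosed : IsClosed S := by
    have : S = ⋃ i, (Icc t₀ T ∩ (fun t => v t i - |e t i|) ⁻¹' Iic 0) := by
      ext t
      simp only [hS, mem_setOf_eq, mem_iUnion, mem_inter_iff, mem_preimage, mem_Iic,
        sub_nonpos, exists_and_left]
    rw [this]
    refine isClosed_iUnion_of_finite fun i => ?_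
    exact ((hv i).sub (he i).abs).preimage_isClosed_of_isClosed isClosed_Icc isClosed_Iic
  have hSne : S.Nonempty := ⟨t1, ht1, i1, hle1⟩
  have hSbdd : BddBelow S := ⟨t₀, fun t ht => ht.1.1⟩
  set τ := sInf S with hτdef
  have hτS : τ ∈ S := hSclosed.csInf_mem hSne hSbdd
  obtain ⟨hτIcc, i, hvi⟩ := hτS
  have ht₀τ : t₀ < τ := by
    rcases lt_or_eq_of_le hτIcc.1 with hlt | heqt
    · exact hlt
    · exfalso; have := h0 i; rw [← heqt] at hvi; linarith
  have hbefore : ∀ s ∈ Ico t₀ τ, ∀ j, |e s j| < v s j := by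
    intro s hs j
    by_contra hle'
    push_neg at hle'
    exact absurd (csInf_le hSbdd ⟨⟨hs.1, hs.2.le.trans hτIcc.2⟩, j, hle'⟩) (not_le.2 hs.2)
  have hτle : ∀ j, |e τ j| ≤ v τ j := by
    intro j
    have := nonneg_at_right (φ := fun t => v t j - |e t j|)
      ((hv j).sub (he j).abs) hτIcc ht₀τ (fun s hs => by
        show 0 ≤ v s j - |e s j|
        linarith [hbefore s hs j])
    have h2 : 0 ≤ v τ j - |e τ j| := this
    linarith [h2]
  have heqτ : v τ i = |e τ i| := le_antisymm hvi (hτle i)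
  have heτpos : 0 < |e τ i| := by rw [← heqτ]; exact hvpos τ hτIcc i
  set σ : ℝ := if 0 ≤ e τ i then 1 else -1 with hσdef
  have hσ : σ = 1 ∨ σ = -1 := by
    rw [hσdef]; split_ifs <;> simp
  have hστ : σ * e τ i = |e τ i| := by
    rw [hσdef]; split_ifs with hcase
    · rw [one_mul, abs_of_nonneg hcase]
    · push_neg at hcase; rw [abs_of_neg hcase]; ring
  have habs : ∀ r, 0 ≤ σ * e r i → σ * e r i = |e r i| := by
    intro r hr
    rcases hσ with h1 | h1 <;> rw [h1] at hr ⊢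
    · rw [one_mul] at hr ⊢; exact (abs_of_nonneg hr).symm
    · have : e r i ≤ 0 := by linarith
      rw [abs_of_nonpos this]; ring
  set K := |J i i| + 1 with hK
  have hKpos : 0 < K := by positivity
  -- continuity picks
  have hψcw : ContinuousWithinAt (fun r => σ * e r i) (Icc t₀ T) τ :=
    (continuousOn_const.mul (he i)) τ hτIcc
  rw [Metric.continuousWithinAt_iff] at hψcw
  obtain ⟨δ₁, hδ₁pos, hδ₁⟩ := hψcw (|e τ i|) heτpos
  have hφcw : ContinuousWithinAt (fun r => v r i - σ * e r i) (Icc t₀ T) τ :=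
    ((hv i).sub (continuousOn_const.mul (he i))) τ hτIcc
  rw [Metric.continuousWithinAt_iff] at hφcw
  obtain ⟨δ₂, hδ₂pos, hδ₂⟩ := hφcw (ε / (2 * K)) (by positivity)
  set δ := min δ₁ δ₂ with hδdef
  have hδpos : 0 < δ := lt_min hδ₁pos hδ₂pos
  set s := max t₀ (τ - δ / 2) with hsdef
  have hst₀ : t₀ ≤ s := le_max_left _ _
  have hsτ : s < τ := max_lt ht₀τ (by linarith)
  have hsIcc : s ∈ Icc t₀ T := ⟨hst₀, hsτ.le.trans hτIcc.2⟩
  have hrange : ∀ r ∈ Icc s τ, r ∈ Icc t₀ T := fun r hr =>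
    ⟨hst₀.trans hr.1, hr.2.trans hτIcc.2⟩
  have hdist : ∀ r ∈ Icc s τ, dist r τ < δ := by
    intro r hr
    have h1 : τ - δ / 2 ≤ s := le_max_right _ _
    rw [Real.dist_eq, abs_of_nonpos (by linarith [hr.2])]
    linarith [hr.1]
  have hψpos : ∀ r ∈ Icc s τ, 0 < σ * e r i := by
    intro r hr
    have := hδ₁ (hrange r hr) ((hdist r hr).trans_le (min_le_left _ _))
    rw [Real.dist_eq, hστ] at this
    have := abs_sub_lt_iff.1 this
    linarith [this.1, this.2]
  have hsmall : ∀ r ∈ Icc s τ, v r i - |e r i| ≤ ε / (2 * K) := by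
    intro r hr
    have h1 := hδ₂ (hrange r hr) ((hdist r hr).trans_le (min_le_right _ _))
    have h2 : v τ i - σ * e τ i = 0 := by rw [hστ, heqτ]; ring
    rw [Real.dist_eq, h2, sub_zero] at h1
    have h3 := habs r (hψpos r hr).le
    calc v r i - |e r i| = v r i - σ * e r i := by rw [h3]
    _ ≤ |v r i - σ * e r i| := le_abs_self _
    _ ≤ ε / (2 * K) := h1.le
  have hle' : ∀ r ∈ Icc s τ, ∀ j, |e r j| ≤ v r j := by
    intro r hr j
    rcases eq_or_lt_of_le hr.2 with hcase | hcase
    · rw [hcase]; exact hτle j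
    · exact (hbefore r ⟨hst₀.trans hr.1, hcase⟩ j).le
  -- pointwise bound G ≤ F - ε/2
  have hGF : ∀ r ∈ Icc s τ,
      (∑ j, J i j * |e r j|) + C i ≤ ((J.mulVec fun j => v r j) i + C i + ε) - ε / 2 := by
    intro r hr
    rw [hmv]
    have hsplit1 : (∑ j, J i j * |e r j|) =
        J i i * |e r i| + ∑ j ∈ Finset.univ.erase i, J i j * |e r j| :=
      (Finset.add_sum_erase Finset.univ (fun j => J i j * |e r j|) (Finset.mem_univ i)).symm
    have hsplit2 : (∑ j, J i j * v r j) =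
        J i i * v r i + ∑ j ∈ Finset.univ.erase i, J i j * v r j :=
      (Finset.add_sum_erase Finset.univ (fun j => J i j * v r j) (Finset.mem_univ i)).symm
    rw [hsplit1, hsplit2]
    have h1 : ∑ j ∈ Finset.univ.erase i, J i j * |e r j| ≤
        ∑ j ∈ Finset.univ.erase i, J i j * v r j :=
      Finset.sum_le_sum fun j hj =>
        mul_le_mul_of_nonneg_left (hle' r hr j) (hJoff i j (Finset.ne_of_mem_erase hj).symm)
    have h2 : J i i * |e r i| ≤ J i i * v r i + ε / 2 := by
      have hd : 0 ≤ v r i - |e r i| := by linarith [hle' r hr i]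
      have h6 : J i i * (|e r i| - v r i) ≤ |J i i| * (v r i - |e r i|) := by
        have hle6 := le_abs_self (J i i * (|e r i| - v r i))
        rw [abs_mul, abs_of_nonpos (by linarith : |e r i| - v r i ≤ 0)] at hle6
        nlinarith
      have h7 : |J i i| * (v r i - |e r i|) ≤ K * (ε / (2 * K)) :=
        mul_le_mul (by rw [hK]; linarith) (hsmall r hr) hd hKpos.le
      have h5 : K * (ε / (2 * K)) = ε / 2 := by
        have : K ≠ 0 := hKpos.ne'
        field_simp
      rw [h5] at h7
      nlinarith
    linarith
  -- integral chain
  have hGc : ContinuousOn (fun r => (∑ j, J i j * |e r j|) + C i) (Icc t₀ T) :=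
    (continuousOn_finset_sum _ fun j _ => continuousOn_const.mul (he j).abs).add
      continuousOn_const
  have hGint : IntervalIntegrable (fun r => (∑ j, J i j * |e r j|) + C i) volume s τ :=
    (hGc.mono (uIcc_subset_Icc hsIcc hτIcc)).intervalIntegrable
  have hσgint : IntervalIntegrable (fun r => σ * g r i) volume s τ :=
    (hgint i s hsIcc τ hτIcc).const_mul σ
  have hkey' : ∫ r in s..τ, σ * g r i ≤ ∫ r in s..τ, ((∑ j, J i j * |e r j|) + C i) :=
    intervalIntegral.integral_mono_on hsτ.le hσgint hGint
      (fun r hr => hkey r (hrange r hr) i σ hσ (hψpos r hr).le)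
  have hchain2 : ∫ r in s..τ, ((∑ j, J i j * |e r j|) + C i) ≤
      (∫ r in s..τ, ((J.mulVec fun j => v r j) i + C i + ε)) - (τ - s) * (ε / 2) := by
    have hFint' := hFint i s hsIcc τ hτIcc
    have hsub : IntervalIntegrable
        (fun r => ((J.mulVec fun j => v r j) i + C i + ε) - ε / 2) volume s τ :=
      hFint'.sub intervalIntegrable_const
    have := intervalIntegral.integral_mono_on hsτ.le hGint hsub hGF
    rw [intervalIntegral.integral_sub hFint' intervalIntegrable_const,
      intervalIntegral.integral_const] at this
    simpa [smul_eq_mul] using this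
  have hσg : ∫ r in s..τ, σ * g r i = σ * (e τ i - e s i) := by
    rw [intervalIntegral.integral_const_mul, ← hediff i s hsIcc τ hτIcc]
  have hes : σ * e s i = |e s i| := habs s (hψpos s ⟨le_rfl, hsτ.le⟩).le
  have hvF := hvdiff i s hsIcc τ hτIcc
  have hstrict : |e s i| < v s i := hbefore s ⟨hst₀, hsτ⟩ i
  -- assemble
  have hA : v τ i - v s i < σ * (e τ i - e s i) := by
    have : σ * (e τ i - e s i) = |e τ i| - |e s i| := by rw [mul_sub, hστ, hes]
    rw [this, ← heqτ]
    linarith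
  rw [hvF] at hA
  rw [hσg] at hkey'
  nlinarith [hsτ, hε]

end OdeVar
end

open Set MeasureTheory OdeVar NormedSpace


/-- Variant of the componentwise comparison theorem for a perturbed ODE: `C` bounds the
perturbation `f(x, y_c) - f(x, y)` over the larger set `[W₂] × [W_y]`, while `J` bounds the
Jacobian blocks of `f` only over `[W₂] × {y_c}` (diagonal entries bound the logarithmic norm,
i.e. the partial derivative itself in the one-dimensional case; off-diagonal entries bound the
norms). Then the difference of the solution `x₁` of
`x₁' = f(x₁, y_c)` and the weak solution `x₂` of `x₂' = f(x₂, y(t))` satisfies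
`|x₁ᵢ(t) - x₂ᵢ(t)| ≤ (e^{J(t-t₀)}|x₀ - xb₀|)ᵢ + (∫_{t₀}^t e^{J(t-s)} C ds)ᵢ`. -/
theorem ode_perturbation_componentwise_bound_variant
    {n m : ℕ} (t₀ h : ℝ) (hh : 0 < h)
    (f : (Fin n → ℝ) → (Fin m → ℝ) → Fin n → ℝ)
    (hf : ContDiff ℝ 1 (fun p : (Fin n → ℝ) × (Fin m → ℝ) => f p.1 p.2))
    (y : ℝ → Fin m → ℝ) (Wy : Set (Fin m → ℝ)) (y_c : Fin m → ℝ)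
    (hymeas : AEStronglyMeasurable y (volume.restrict (Icc t₀ (t₀ + h))))
    (hybd : ∃ M, ∀ t ∈ Icc t₀ (t₀ + h), ‖y t‖ ≤ M)
    (hWy : Convex ℝ Wy) (hyWy : ∀ t ∈ Icc t₀ (t₀ + h), y t ∈ Wy) (hyc : y_c ∈ Wy)
    (x₀ xb₀ : Fin n → ℝ) (x₁ x₂ : ℝ → Fin n → ℝ)
    (hx₁cont : ContinuousOn x₁ (Icc t₀ (t₀ + h)))
    (hx₂cont : ContinuousOn x₂ (Icc t₀ (t₀ + h)))
    (hx₁ : ∀ t ∈ Icc t₀ (t₀ + h), x₁ t = x₀ + ∫ s in t₀..t, f (x₁ s) y_c)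
    (hx₂ : ∀ t ∈ Icc t₀ (t₀ + h), x₂ t = xb₀ + ∫ s in t₀..t, f (x₂ s) (y s))
    (W₁ W₂ : Set (Fin n → ℝ))
    (hW₁ : Convex ℝ W₁) (hW₁c : IsCompact W₁)
    (hW₂ : Convex ℝ W₂) (hW₂c : IsCompact W₂) (hW₁₂ : W₁ ⊆ W₂)
    (hx₁W : ∀ t ∈ Icc t₀ (t₀ + h), x₁ t ∈ W₁)
    (hx₂W : ∀ t ∈ Icc t₀ (t₀ + h), x₂ t ∈ W₂)
    (C : Fin n → ℝ)
    (hC : ∀ i, ∀ x ∈ W₂, ∀ w ∈ Wy, |f x y_c i - f x w i| ≤ C i)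
    (J : Matrix (Fin n) (Fin n) ℝ)
    (hJdiag : ∀ i, ∀ x ∈ W₂,
      fderiv ℝ (fun v => f v y_c i) x (Pi.single i 1) ≤ J i i)
    (hJoff : ∀ i j, i ≠ j → ∀ x ∈ W₂,
      |fderiv ℝ (fun v => f v y_c i) x (Pi.single j 1)| ≤ J i j) :
    ∀ t ∈ Icc t₀ (t₀ + h), ∀ i,
      |x₁ t i - x₂ t i| ≤
        ((NormedSpace.exp ((t - t₀) • J)).mulVec (fun j => |x₀ j - xb₀ j|)) i +
        (∫ s in t₀..t, (NormedSpace.exp ((t - s) • J)).mulVec C) i := by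

  intro t ht i
  have hT : t₀ < t₀ + h := by linarith
  have ht₀Icc : t₀ ∈ Icc t₀ (t₀ + h) := left_mem_Icc.2 hT.le
  set T := t₀ + h with hTdef
  -- basic continuity of f
  have hfc : Continuous (fun p : (Fin n → ℝ) × (Fin m → ℝ) => f p.1 p.2) := hf.continuous
  -- initial values
  have hx1t₀ : x₁ t₀ = x₀ := by
    have := hx₁ t₀ ht₀Icc
    simpa [intervalIntegral.integral_same] using this
  have hx2t₀ : x₂ t₀ = xb₀ := by
    have := hx₂ t₀ ht₀Icc
    simpa [intervalIntegral.integral_same] using this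
  -- the error and the perturbation
  set e : ℝ → Fin n → ℝ := fun s => x₁ s - x₂ s with hedef
  set g : ℝ → Fin n → ℝ := fun s => f (x₁ s) y_c - f (x₂ s) (y s) with hgdef
  set u₀ : Fin n → ℝ := fun j => |x₀ j - xb₀ j| with hu₀
  -- A and B
  set A : ℝ → Fin n → ℝ := fun s => f (x₁ s) y_c with hA
  set B : ℝ → Fin n → ℝ := fun s => f (x₂ s) (y s) with hB
  have hAc : ContinuousOn A (Icc t₀ T) := by
    have : ContinuousOn (fun s => (x₁ s, y_c)) (Icc t₀ T) :=
      hx₁cont.prodMk continuousOn_const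
    exact hfc.comp_continuousOn this
  have hBm : AEStronglyMeasurable B (volume.restrict (Icc t₀ T)) := by
    have h1 : AEStronglyMeasurable (fun s => (x₂ s, y s)) (volume.restrict (Icc t₀ T)) :=
      (hx₂cont.aestronglyMeasurable measurableSet_Icc).prodMk hymeas
    exact hfc.comp_aestronglyMeasurable h1
  obtain ⟨M, hM⟩ := hybd
  set M' := max M 0 with hM'
  obtain ⟨Bb, hBb⟩ := (hW₂c.prod (isCompact_closedBall (0 : Fin m → ℝ) M')).exists_bound_of_continuousOn
    hfc.continuousOn
  have hBbd : ∀ᵐ s ∂(volume.restrict (Icc t₀ T)), ‖B s‖ ≤ Bb := by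
    filter_upwards [ae_restrict_mem measurableSet_Icc] with s hs
    exact hBb (x₂ s, y s) ⟨hx₂W s hs, mem_closedBall_zero_iff.2 ((hM s hs).trans (le_max_left _ _))⟩
  have hBint : IntegrableOn B (Icc t₀ T) volume :=
    Integrable.mono' (integrable_const Bb) hBm hBbd
  have hIccsub : ∀ r ∈ Icc t₀ T, ∀ r' ∈ Icc t₀ T, Set.uIoc r r' ⊆ Icc t₀ T := by
    intro r hr r' hr' x hx
    rcases hx with ⟨hx1, hx2⟩
    constructor
    · exact le_of_lt (lt_of_le_of_lt (le_min hr.1 hr'.1) hx1)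
    · exact hx2.trans (max_le hr.2 hr'.2)
  have hAint : ∀ r ∈ Icc t₀ T, IntervalIntegrable A volume t₀ r := fun r hr =>
    (hAc.mono (uIcc_subset_Icc ht₀Icc hr)).intervalIntegrable
  have hBii : ∀ r ∈ Icc t₀ T, IntervalIntegrable B volume t₀ r := fun r hr =>
    intervalIntegrable_iff.2 (hBint.mono_set (hIccsub t₀ ht₀Icc r hr))
  -- componentwise integrability of g
  have hAci : ∀ i', ContinuousOn (fun s => A s i') (Icc t₀ T) := fun i' =>
    (continuous_apply i').comp_continuousOn hAc
  have hBmi : ∀ i', AEStronglyMeasurable (fun s => B s i') (volume.restrict (Icc t₀ T)) :=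
    fun i' => (continuous_apply i').comp_aestronglyMeasurable hBm
  have hBinti : ∀ i', IntegrableOn (fun s => B s i') (Icc t₀ T) volume := by
    intro i'
    refine Integrable.mono' (integrable_const Bb) (hBmi i') ?_
    filter_upwards [hBbd] with s hs
    calc ‖B s i'‖ ≤ ‖B s‖ := norm_le_pi_norm _ _
    _ ≤ Bb := hs
  have hgi : ∀ i', IntervalIntegrable (fun s => g s i') volume t₀ T := by
    intro i'
    have h1 : IntervalIntegrable (fun s => A s i') volume t₀ T :=
      ((hAci i').mono (by rw [uIcc_of_le hT.le])).intervalIntegrable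
    have h2 : IntervalIntegrable (fun s => B s i') volume t₀ T :=
      intervalIntegrable_iff.2 ((hBinti i').mono_set (hIccsub t₀ ht₀Icc T (right_mem_Icc.2 hT.le)))
    have : (fun s => g s i') = fun s => A s i' - B s i' := rfl
    rw [this]
    exact h1.sub h2
  have hgii : ∀ i', ∀ r ∈ Icc t₀ T, IntervalIntegrable (fun s => g s i') volume t₀ r := by
    intro i' r hr
    apply (hgi i').mono_set
    rw [uIcc_of_le hT.le]
    exact uIcc_subset_Icc ht₀Icc hr
  -- the integral equation for e, componentwise
  have hee : ∀ r ∈ Icc t₀ T, ∀ i', e r i' = e t₀ i' + ∫ s in t₀..r, g s i' := by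
    intro r hr i'
    have h1 := congrFun (hx₁ r hr) i'
    have h2 := congrFun (hx₂ r hr) i'
    have h3 : (∫ s in t₀..r, A s) i' = ∫ s in t₀..r, A s i' := iint_apply (hAint r hr) i'
    have h4 : (∫ s in t₀..r, B s) i' = ∫ s in t₀..r, B s i' := iint_apply (hBii r hr) i'
    have h5 : IntervalIntegrable (fun s => A s i') volume t₀ r :=
      ((hAci i').mono (uIcc_subset_Icc ht₀Icc hr)).intervalIntegrable
    have h6 : IntervalIntegrable (fun s => B s i') volume t₀ r :=
      intervalIntegrable_iff.2 ((hBinti i').mono_set (hIccsub t₀ ht₀Icc r hr))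
    have h7 : (∫ s in t₀..r, A s i') - (∫ s in t₀..r, B s i')
        = ∫ s in t₀..r, (A s i' - B s i') := (intervalIntegral.integral_sub h5 h6).symm
    have he0 : e t₀ i' = x₀ i' - xb₀ i' := by
      show x₁ t₀ i' - x₂ t₀ i' = x₀ i' - xb₀ i'
      rw [hx1t₀, hx2t₀]
    show x₁ r i' - x₂ r i' = e t₀ i' + ∫ s in t₀..r, (A s i' - B s i')
    rw [← h7, he0]
    simp only [Pi.add_apply] at h1 h2
    rw [h1, h2, h3, h4]
    ring
  -- continuity of components of e
  have hecont : ∀ i', ContinuousOn (fun r => e r i') (Icc t₀ T) := fun i' =>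
    (continuous_apply i').comp_continuousOn (hx₁cont.sub hx₂cont)
  -- nonnegativity facts
  have hW2x : x₂ t₀ ∈ W₂ := hx₂W t₀ ht₀Icc
  have hJoff' : ∀ i' j, i' ≠ j → 0 ≤ J i' j := fun i' j hij =>
    (abs_nonneg _).trans (hJoff i' j hij (x₂ t₀) hW2x)
  have hC0 : ∀ i', 0 ≤ C i' := by
    intro i'
    have := hC i' (x₂ t₀) hW2x y_c hyc
    simpa using this
  -- sign helpers
  have hsigma_abs : ∀ (σ x : ℝ), σ = 1 ∨ σ = -1 → 0 ≤ σ * x → σ * x = |x| := by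
    intro σ x hσ hx
    rcases hσ with h1 | h1 <;> rw [h1] at hx ⊢
    · rw [one_mul] at hx ⊢; exact (abs_of_nonneg hx).symm
    · have : x ≤ 0 := by linarith
      rw [abs_of_nonpos this]; ring
  have hsigma_one : ∀ σ : ℝ, σ = 1 ∨ σ = -1 → |σ| = 1 := by
    intro σ hσ; rcases hσ with h | h <;> simp [h]
  -- key one-sided bound
  have hkey : ∀ s ∈ Icc t₀ T, ∀ i', ∀ σ : ℝ, σ = 1 ∨ σ = -1 → 0 ≤ σ * e s i' →
      σ * g s i' ≤ (∑ j, J i' j * |e s j|) + C i' := by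
    intro s hs i' σ hσ hσe
    have hx1W2 : x₁ s ∈ W₂ := hW₁₂ (hx₁W s hs)
    have hx2W2 : x₂ s ∈ W₂ := hx₂W s hs
    have hFdiff : Differentiable ℝ (fun w => f w y_c i') := by
      have h1 : Differentiable ℝ (fun p : (Fin n → ℝ) × (Fin m → ℝ) => f p.1 p.2) :=
        hf.differentiable one_ne_zero
      have h2 : Differentiable ℝ (fun w : Fin n → ℝ => f w y_c) :=
        h1.comp (differentiable_id.prodMk (differentiable_const _))
      intro w
      exact ((differentiable_pi.1 h2) i') w
    set z : ℝ → Fin n → ℝ := fun θ => x₂ s + θ • e s with hzdef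
    have hzderiv : ∀ θ : ℝ, HasDerivAt z (e s) θ := by
      intro θ
      have h1 : HasDerivAt (fun θ : ℝ => θ • e s) ((1 : ℝ) • e s) θ :=
        (hasDerivAt_id θ).smul_const (e s)
      rw [one_smul] at h1
      exact h1.const_add (x₂ s)
    have hφ : ∀ θ : ℝ, HasDerivAt (fun θ => f (z θ) y_c i')
        (fderiv ℝ (fun w => f w y_c i') (z θ) (e s)) θ := fun θ =>
      (hFdiff (z θ)).hasFDerivAt.comp_hasDerivAt θ (hzderiv θ)
    have hφcont : ContinuousOn (fun θ => f (z θ) y_c i') (Icc 0 1) :=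
      (continuous_iff_continuousAt.2 fun θ => (hφ θ).continuousAt).continuousOn
    obtain ⟨ξ, hξ, hslope⟩ := exists_hasDerivAt_eq_slope (fun θ => f (z θ) y_c i')
      (fun θ => fderiv ℝ (fun w => f w y_c i') (z θ) (e s)) one_pos hφcont (fun θ _ => hφ θ)
    have hz1 : z 1 = x₁ s := by
      funext j
      show x₂ s j + (1 : ℝ) * (x₁ s j - x₂ s j) = x₁ s j
      ring
    have hz0 : z 0 = x₂ s := by
      funext j
      show x₂ s j + (0 : ℝ) * (x₁ s j - x₂ s j) = x₂ s j
      ring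
    simp only [hz1, hz0, sub_zero, div_one] at hslope
    have hzξW : z ξ ∈ W₂ := by
      have h2 : z ξ = (1 - ξ) • x₂ s + ξ • x₁ s := by
        funext j
        show x₂ s j + ξ * (x₁ s j - x₂ s j) = (1 - ξ) * x₂ s j + ξ * x₁ s j
        ring
      rw [h2]
      exact hW₂ hx2W2 hx1W2 (by linarith [hξ.2]) hξ.1.le (by ring)
    set L := fderiv ℝ (fun w => f w y_c i') (z ξ) with hL
    have hLd : L (e s) = ∑ j, e s j * L (Pi.single j 1) := by
      have hdsum : e s = ∑ j, e s j • (Pi.single j (1 : ℝ) : Fin n → ℝ) := by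
        funext k
        rw [Finset.sum_apply]
        simp [Pi.single_apply, Finset.sum_ite_eq']
      conv_lhs => rw [hdsum]
      rw [map_sum]
      exact Finset.sum_congr rfl fun j _ => by rw [L.map_smul]; simp [smul_eq_mul]
    have hbound : σ * (∑ j, e s j * L (Pi.single j 1)) ≤ ∑ j, J i' j * |e s j| := by
      rw [Finset.mul_sum]
      apply Finset.sum_le_sum
      intro j _
      by_cases hji : j = i'
      · subst hji
        have hDle : L (Pi.single j 1) ≤ J j j := hJdiag j (z ξ) hzξW
        have h1 : σ * e s j = |e s j| := hsigma_abs σ (e s j) hσ hσe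
        have h2 : σ * (e s j * L (Pi.single j 1)) = |e s j| * L (Pi.single j 1) := by
          rw [← h1]; ring
        rw [h2]
        calc |e s j| * L (Pi.single j 1) ≤ |e s j| * J j j :=
          mul_le_mul_of_nonneg_left hDle (abs_nonneg _)
        _ = J j j * |e s j| := mul_comm _ _
      · have hDle : |L (Pi.single j 1)| ≤ J i' j := hJoff i' j (fun hc => hji hc.symm) (z ξ) hzξW
        calc σ * (e s j * L (Pi.single j 1)) ≤ |σ * (e s j * L (Pi.single j 1))| :=
          le_abs_self _
        _ = |e s j| * |L (Pi.single j 1)| := by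
          rw [abs_mul, abs_mul, hsigma_one σ hσ, one_mul]
        _ ≤ |e s j| * J i' j := mul_le_mul_of_nonneg_left hDle (abs_nonneg _)
        _ = J i' j * |e s j| := mul_comm _ _
    have hpert : σ * (f (x₂ s) y_c i' - f (x₂ s) (y s) i') ≤ C i' := by
      have h2 := hC i' (x₂ s) hx2W2 (y s) (hyWy s hs)
      calc σ * (f (x₂ s) y_c i' - f (x₂ s) (y s) i')
          ≤ |σ * (f (x₂ s) y_c i' - f (x₂ s) (y s) i')| := le_abs_self _
      _ = |f (x₂ s) y_c i' - f (x₂ s) (y s) i'| := by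
          rw [abs_mul, hsigma_one σ hσ, one_mul]
      _ ≤ C i' := h2
    have hgsi : g s i' = (f (x₁ s) y_c i' - f (x₂ s) y_c i')
        + (f (x₂ s) y_c i' - f (x₂ s) (y s) i') := by
      show f (x₁ s) y_c i' - f (x₂ s) (y s) i' = _
      ring
    rw [hgsi, mul_add]
    have hMVT : f (x₁ s) y_c i' - f (x₂ s) y_c i' = ∑ j, e s j * L (Pi.single j 1) := by
      rw [← hLd, ← hslope]
    rw [hMVT]
    linarith [hbound, hpert]
  -- apply the core lemma for every ε > 0
  have hmain : ∀ ε : ℝ, 0 < ε → |e t i| <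
      Vfun t₀ J u₀ C t i + ε * Vfun t₀ J (1 : Fin n → ℝ) (1 : Fin n → ℝ) t i := by
    intro ε hε
    set v : ℝ → Fin n → ℝ :=
      fun r j => Vfun t₀ J (u₀ + ε • (1 : Fin n → ℝ)) (C + ε • (1 : Fin n → ℝ)) r j with hvdef
    have hvv : ∀ r ∈ Icc t₀ T, ∀ i',
        v r i' = v t₀ i' + ∫ s in t₀..r, ((J.mulVec fun j => v s j) i' + C i' + ε) := by
      intro r _ i'
      have h1 := Vfun_integral_eq t₀ J (u₀ + ε • (1 : Fin n → ℝ)) (C + ε • (1 : Fin n → ℝ)) r i'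
      have h2 := Vfun_t₀ t₀ J (u₀ + ε • (1 : Fin n → ℝ)) (C + ε • (1 : Fin n → ℝ)) i'
      show Vfun t₀ J (u₀ + ε • (1 : Fin n → ℝ)) (C + ε • (1 : Fin n → ℝ)) r i'
        = Vfun t₀ J (u₀ + ε • (1 : Fin n → ℝ)) (C + ε • (1 : Fin n → ℝ)) t₀ i'
          + ∫ s in t₀..r, ((J.mulVec fun j =>
              Vfun t₀ J (u₀ + ε • (1 : Fin n → ℝ)) (C + ε • (1 : Fin n → ℝ)) s j) i' + C i' + ε)
      rw [h1, h2]
      congr 1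
      apply intervalIntegral.integral_congr
      intro s _
      show (J.mulVec fun j => Vfun t₀ J _ _ s j) i' + (C + ε • (1 : Fin n → ℝ)) i' = _
      simp [Pi.add_apply, Pi.smul_apply, Pi.one_apply, smul_eq_mul, mul_one, add_assoc]
    have h0 : ∀ i', |e t₀ i'| < v t₀ i' := by
      intro i'
      show |e t₀ i'| <
        Vfun t₀ J (u₀ + ε • (1 : Fin n → ℝ)) (C + ε • (1 : Fin n → ℝ)) t₀ i'
      rw [Vfun_t₀]
      have : e t₀ i' = x₀ i' - xb₀ i' := by
        show x₁ t₀ i' - x₂ t₀ i' = _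
        rw [hx1t₀, hx2t₀]
      rw [this]
      simp only [Pi.add_apply, Pi.smul_apply, Pi.one_apply, smul_eq_mul, mul_one, hu₀]
      linarith
    have hres := core hT hε hJoff' hC0 hecont
      (fun i' => (Vfun_continuous t₀ J _ _ i').continuousOn) hgi hee hvv h0 hkey
    have := hres t ht i
    have h9 : v t i = Vfun t₀ J u₀ C t i
        + ε * Vfun t₀ J (1 : Fin n → ℝ) (1 : Fin n → ℝ) t i :=
      Vfun_add_smul t₀ J u₀ C ε t i
    have h10 : |e t i| < v t i := this
    rw [h9] at h10
    exact h10
  -- pass to the limit ε → 0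
  have hfinal : |e t i| ≤ Vfun t₀ J u₀ C t i := by
    by_contra hcon
    push_neg at hcon
    set W1 := Vfun t₀ J (1 : Fin n → ℝ) (1 : Fin n → ℝ) t i with hW1
    set ε := (|e t i| - Vfun t₀ J u₀ C t i) / (|W1| + 1) with hεdef
    have hεpos : 0 < ε := by
      apply div_pos (by linarith) (by positivity)
    have h1 := hmain ε hεpos
    have h2 : ε * W1 ≤ ε * (|W1| + 1) :=
      mul_le_mul_of_nonneg_left (by linarith [le_abs_self W1]) hεpos.le
    have h3 : ε * (|W1| + 1) = |e t i| - Vfun t₀ J u₀ C t i := by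
      rw [hεdef]
      field_simp
    linarith
  -- rewrite the goal
  have hgoal := Vfun_goal_eq t₀ J u₀ C t i
  show |e t i| ≤ _
  rw [← hgoal] at hfinal
  exact hfinal
end
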